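/- arXiv:2402.16545 — 8 statements merged into one kernel-verified Lean document; each statement's English description precedes it below -/
import Mathlib

section
/- There exist (i) a set S of functions from ℝ to ℝ of cardinality 2^𝔠 that is algebraically independent over ℝ, such that every function in the (non-unital) ℝ-algebra generated by S is bounded on every compact interval [α,β] and its restriction to every interval [α,β] is Riemann integrable, and (ii) a set C of continuous functions from [0,1] to ℝ of cardinality 𝔠 that is algebraically independent over ℝ, such that for every nonzero element r of the algebra generated by S and every nonzero element c of the algebra generated by C, the composite function r ∘ c : [0,1] → ℝ is not Riemann integrable on [0,1]. -/
open MeasureTheory Set Cardinal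

/-- A function `f : ℝ → ℝ` is Riemann integrable on `[a,b]` iff it is bounded there and
(by Lebesgue's criterion) its set of discontinuity points (relative to `[a,b]`)
has Lebesgue measure zero. -/
def RiemannIntegrableOn (f : ℝ → ℝ) (a b : ℝ) : Prop :=
  (∃ M : ℝ, ∀ x ∈ Set.Icc a b, |f x| ≤ M) ∧
    volume {x | x ∈ Set.Icc a b ∧ ¬ ContinuousWithinAt f (Set.Icc a b) x} = 0

/-- Riemann integrability on `[0,1]` for a function defined on the interval `[0,1]`:
boundedness together with the Lebesgue criterion (the set of discontinuity points,
viewed as a subset of `ℝ`, is Lebesgue null). -/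
def RiemannIntegrableI (g : Set.Icc (0:ℝ) 1 → ℝ) : Prop :=
  (∃ M : ℝ, ∀ x, |g x| ≤ M) ∧
    volume (Subtype.val '' {x : Set.Icc (0:ℝ) 1 | ¬ ContinuousAt g x}) = 0

open MvPolynomial Filter Real

noncomputable section

lemma mvpoly_analytic {n : ℕ} (P : MvPolynomial (Fin n) ℝ) :
    AnalyticOnNhd ℝ (fun x : Fin n → ℝ => eval x P) univ := by
  induction P using MvPolynomial.induction_on with
  | C a => simpa using analyticOnNhd_const
  | add p q hp hq => simp only [map_add]; exact hp.add hq
  | mul_X p i hp =>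
      have hi : AnalyticOnNhd ℝ (fun x : Fin n → ℝ => x i) univ := by
        have := (ContinuousLinearMap.proj i : (Fin n → ℝ) →L[ℝ] ℝ).analyticOnNhd (univ : Set (Fin n → ℝ))
        exact this
      simpa using hp.mul hi

lemma box_lemma {n : ℕ} (P : MvPolynomial (Fin n) ℝ) (hP : P ≠ 0) :
    ∃ x : Fin n → ℝ, (∀ i, x i ∈ Ioo (0:ℝ) 1) ∧ eval x P ≠ 0 := by
  by_contra h
  push_neg at h
  apply hP
  apply MvPolynomial.funext (q := 0)
  intro x
  simp only [map_zero]
  have hzero : EqOn (fun x : Fin n → ℝ => eval x P) 0 univ := by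
    apply (mvpoly_analytic P).eqOn_zero_of_preconnected_of_eventuallyEq_zero
      isPreconnected_univ (z₀ := (fun _ => (1:ℝ)/2)) (mem_univ _)
    have hball : ∀ᶠ y : Fin n → ℝ in nhds (fun _ => (1:ℝ)/2), ∀ i, y i ∈ Ioo (0:ℝ) 1 := by
      have hb : Metric.ball ((fun _ => (1:ℝ)/2) : Fin n → ℝ) (1/2) ∈ nhds ((fun _ => (1:ℝ)/2) : Fin n → ℝ) :=
        Metric.ball_mem_nhds _ (by norm_num : (0:ℝ) < 1/2)
      filter_upwards [hb] with y hy i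
      have hd := (dist_pi_lt_iff (by norm_num : (0:ℝ) < 1/2)).mp (Metric.mem_ball.mp hy) i
      have : |y i - 1/2| < 1/2 := by simpa [Real.dist_eq] using hd
      constructor <;> [linarith [abs_lt.mp this]; linarith [abs_lt.mp this]]
    filter_upwards [hball] with y hy
    exact h y hy
  simpa using hzero (mem_univ x)

-- x^k * exp(γ x) is little-o of x^l * exp(δ x) when (γ,k) < (δ,l) lexicographically
lemma ratio_tendsto_zero (k l : ℕ) (γ δ : ℝ) (h : γ < δ ∨ (γ = δ ∧ k < l)) :
    Tendsto (fun y : ℝ => y ^ k * Real.exp (γ * y) / (y ^ l * Real.exp (δ * y)))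
      atTop (nhds 0) := by
  rcases h with h | ⟨rfl, hkl⟩
  · -- γ < δ
    set ε := δ - γ with hε
    have hεpos : 0 < ε := by simp [hε]; linarith
    have base : Tendsto (fun y : ℝ => y ^ (k + l) * Real.exp (-(ε * y))) atTop (nhds 0) := by
      have h1 : Tendsto (fun y : ℝ => ε * y) atTop atTop :=
        Tendsto.const_mul_atTop hεpos tendsto_id
      have h2 := (tendsto_pow_mul_exp_neg_atTop_nhds_zero (k + l)).comp h1
      have h3 : Tendsto (fun y : ℝ => (ε * y) ^ (k + l) * Real.exp (-(ε * y)) / ε ^ (k + l))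
          atTop (nhds (0 / ε ^ (k+l))) := h2.div_const _
      rw [zero_div] at h3
      apply h3.congr'
      filter_upwards [eventually_gt_atTop 0] with y hy
      rw [mul_pow, mul_comm (ε ^ (k+l)) (y ^ (k+l)), mul_assoc,
        mul_div_assoc, mul_div_cancel_left₀ _ (by positivity : ε ^ (k+l) ≠ 0)]
    -- our function is eventually bounded in abs by the base function
    apply squeeze_zero_norm' _ base
    filter_upwards [eventually_ge_atTop 1] with y hy
    have hy0 : (0:ℝ) < y := lt_of_lt_of_le one_pos hy
    have hps : (0:ℝ) < y ^ l := pow_pos hy0 l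
    have key : y ^ k * Real.exp (γ * y) / (y ^ l * Real.exp (δ * y))
        = y ^ k / y ^ l * Real.exp (-(ε * y)) := by
      rw [show -(ε * y) = γ * y - δ * y by rw [hε]; ring, Real.exp_sub, div_mul_div_comm]
    rw [key]
    have h4 : |y ^ k / y ^ l * Real.exp (-(ε * y))| = y^k / y^l * Real.exp (-(ε*y)) := by
      rw [abs_of_nonneg]; positivity
    rw [Real.norm_eq_abs, h4]
    have h5 : y ^ k / y ^ l ≤ y ^ (k + l) := by
      rw [div_le_iff₀ hps, ← pow_add]
      exact pow_le_pow_right₀ hy (by omega)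
    have : (0:ℝ) < Real.exp (-(ε * y)) := Real.exp_pos _
    nlinarith [Real.exp_pos (-(ε * y)), pow_pos hy0 (k+l)]
  · -- γ = δ, k < l
    have : Tendsto (fun y : ℝ => (y ^ (l - k))⁻¹) atTop (nhds 0) :=
      (tendsto_pow_atTop (by omega : l - k ≠ 0)).inv_tendsto_atTop
    apply this.congr'
    filter_upwards [eventually_gt_atTop 0] with y hy
    have : y ^ l = y ^ k * y ^ (l - k) := by rw [← pow_add]; congr 1; omega
    rw [this]
    have h1 : Real.exp (γ * y) ≠ 0 := (Real.exp_pos _).ne'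
    have h2 : y ^ k ≠ 0 := (pow_pos hy _).ne'
    have h3 : y ^ (l-k) ≠ 0 := (pow_pos hy _).ne'
    field_simp

-- main independence of functions y^d e^{βy} (L1)
lemma expPoly_indep {ι : Type*} [DecidableEq ι] (s : Finset ι) (d : ι → ℕ) (β : ι → ℝ) (c : ι → ℝ)
    (hinj : ∀ i ∈ s, ∀ j ∈ s, d i = d j → β i = β j → i = j)
    (h : ∀ y : ℝ, ∑ i ∈ s, c i * y ^ d i * Real.exp (β i * y) = 0) :
    ∀ i ∈ s, c i = 0 := by
  induction s using Finset.strongInduction with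
  | _ s ih =>
    rcases s.eq_empty_or_nonempty with rfl | hne
    · simp
    -- pick the dominant index
    set βm := s.sup' hne β with hβm
    have htne : (s.filter (fun i => β i = βm)).Nonempty := by
      obtain ⟨i, hi, hie⟩ := Finset.exists_mem_eq_sup' hne β
      exact ⟨i, Finset.mem_filter.mpr ⟨hi, hie.symm⟩⟩
    obtain ⟨i0, hi0mem, hi0⟩ := Finset.exists_mem_eq_sup' htne d
    have hi0s : i0 ∈ s := (Finset.mem_filter.mp hi0mem).1
    have hi0β : β i0 = βm := (Finset.mem_filter.mp hi0mem).2
    -- each other term over the dominant one tends to zero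
    have hterm : ∀ i ∈ s, i ≠ i0 →
        Tendsto (fun y : ℝ => c i * y ^ d i * Real.exp (β i * y) /
          (y ^ d i0 * Real.exp (β i0 * y))) atTop (nhds 0) := by
      intro i hi hne'
      have hcases : β i < β i0 ∨ (β i = β i0 ∧ d i < d i0) := by
        rcases lt_or_eq_of_le (Finset.le_sup' β hi : β i ≤ βm) with hlt | heq
        · left; rwa [hi0β]
        · right
          have hifilt : i ∈ s.filter (fun j => β j = βm) := Finset.mem_filter.mpr ⟨hi, heq⟩
          have hdle : d i ≤ d i0 := hi0 ▸ Finset.le_sup' d hifilt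
          rcases lt_or_eq_of_le hdle with h' | h'
          · exact ⟨heq.trans hi0β.symm, h'⟩
          · exact absurd (hinj i hi i0 hi0s h' (heq.trans hi0β.symm)) hne'
      have := ratio_tendsto_zero (d i) (d i0) (β i) (β i0) hcases
      have h2 := this.const_mul (c i)
      rw [mul_zero] at h2
      apply h2.congr
      intro y; rw [mul_div_assoc]; ring
    -- the ratio of the whole sum tends to c i0
    have hsum : Tendsto (fun y : ℝ => (∑ i ∈ s, c i * y ^ d i * Real.exp (β i * y)) /
        (y ^ d i0 * Real.exp (β i0 * y))) atTop (nhds (c i0)) := by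
      have : ∀ y : ℝ, (∑ i ∈ s, c i * y ^ d i * Real.exp (β i * y)) /
          (y ^ d i0 * Real.exp (β i0 * y))
          = ∑ i ∈ s, c i * y ^ d i * Real.exp (β i * y) / (y ^ d i0 * Real.exp (β i0 * y)) :=
        fun y => Finset.sum_div _ _ _
      simp only [this]
      have hsplit : Tendsto (fun y : ℝ => ∑ i ∈ s.erase i0,
          c i * y ^ d i * Real.exp (β i * y) / (y ^ d i0 * Real.exp (β i0 * y)))
          atTop (nhds 0) := by
        have := tendsto_finset_sum (s.erase i0) (fun i hi =>
          hterm i (Finset.mem_of_mem_erase hi) (Finset.ne_of_mem_erase hi))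
        simpa using this
      have hlast : Tendsto (fun y : ℝ => c i0 * y ^ d i0 * Real.exp (β i0 * y) /
          (y ^ d i0 * Real.exp (β i0 * y))) atTop (nhds (c i0)) := by
        apply tendsto_const_nhds.congr'
        filter_upwards [eventually_gt_atTop 0] with y hy
        have h1 : y ^ d i0 ≠ 0 := (pow_pos hy _).ne'
        have h2 : Real.exp (β i0 * y) ≠ 0 := (Real.exp_pos _).ne'
        field_simp
      have := hsplit.add hlast
      rw [zero_add] at this
      apply this.congr
      intro y
      rw [← Finset.sum_erase_add s _ hi0s]
    have hzero : Tendsto (fun y : ℝ => (∑ i ∈ s, c i * y ^ d i * Real.exp (β i * y)) /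
        (y ^ d i0 * Real.exp (β i0 * y))) atTop (nhds 0) := by
      simp only [h, zero_div]; exact tendsto_const_nhds
    have hc0 : c i0 = 0 := tendsto_nhds_unique hsum hzero
    -- induction for the rest
    intro i hi
    rcases eq_or_ne i i0 with rfl | hne'
    · exact hc0
    · apply ih (s.erase i0) (Finset.erase_ssubset hi0s) (fun a ha b hb => hinj a
        (Finset.mem_of_mem_erase ha) b (Finset.mem_of_mem_erase hb)) _ i
        (Finset.mem_erase.mpr ⟨hne', hi⟩)
      intro y
      have := h y
      rw [← Finset.sum_erase_add s _ hi0s, hc0] at this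
      simpa using this

-- interval version, with shifted powers (y - e)^d
lemma expPoly_indep_interval {ι : Type*} [DecidableEq ι] (s : Finset ι) (d : ι → ℕ) (β : ι → ℝ)
    (c : ι → ℝ) (e : ℝ) {u v : ℝ} (huv : u < v)
    (hinj : ∀ i ∈ s, ∀ j ∈ s, d i = d j → β i = β j → i = j)
    (h : ∀ y ∈ Ioo u v, ∑ i ∈ s, c i * (y - e) ^ d i * Real.exp (β i * y) = 0) :
    ∀ i ∈ s, c i = 0 := by
  set G : ℝ → ℝ := fun y => ∑ i ∈ s, c i * (y - e) ^ d i * Real.exp (β i * y) with hG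
  have hanal : AnalyticOnNhd ℝ G univ := by
    apply Finset.analyticOnNhd_fun_sum
    intro i _
    have h1 : AnalyticOnNhd ℝ (fun y : ℝ => c i * (y - e) ^ d i) univ :=
      (analyticOnNhd_const.mul ((analyticOnNhd_id.sub analyticOnNhd_const).pow _))
    have h2 : AnalyticOnNhd ℝ (fun y : ℝ => Real.exp (β i * y)) univ :=
      (analyticOnNhd_const.mul analyticOnNhd_id).rexp
    exact h1.mul h2
  have hzero : EqOn G 0 univ := by
    apply hanal.eqOn_zero_of_preconnected_of_eventuallyEq_zero isPreconnected_univ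
      (z₀ := (u + v)/2) (mem_univ _)
    have hmem : Ioo u v ∈ nhds ((u+v)/2) :=
      (isOpen_Ioo).mem_nhds ⟨by linarith, by linarith⟩
    filter_upwards [hmem] with y hy
    exact h y hy
  have hall : ∀ z : ℝ, ∑ i ∈ s, (c i * Real.exp (β i * e)) * z ^ d i * Real.exp (β i * z) = 0 := by
    intro z
    have := hzero (mem_univ (z + e))
    simp only [hG, Pi.zero_apply] at this
    rw [← this]
    apply Finset.sum_congr rfl
    intro i _
    rw [add_sub_cancel_right]
    rw [show β i * (z + e) = β i * e + β i * z by ring, Real.exp_add]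
    ring
  intro i hi
  have := expPoly_indep s d β (fun i => c i * Real.exp (β i * e)) hinj hall i hi
  have hexp : Real.exp (β i * e) ≠ 0 := (Real.exp_pos _).ne'
  exact (mul_eq_zero.mp this).resolve_right hexp

def qseq : ℕ → ℝ := fun n => (((Denumerable.eqv ℚ).symm n : ℚ) : ℝ)

lemma qseq_surj (r : ℚ) : ∃ n, qseq n = (r : ℝ) :=
  ⟨Denumerable.eqv ℚ r, by unfold qseq; rw [Equiv.symm_apply_apply]⟩

def delta : ℕ → ℝ := fun n => (1/4:ℝ) ^ (n + 2)

lemma delta_pos (n : ℕ) : 0 < delta n := by unfold delta; positivity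

def UU : Set ℝ := ⋃ n, Ioo (qseq n - delta n) (qseq n + delta n)

def KK : Set ℝ := Icc 0 1 \ UU

def K' : Set ℝ := insert (-1) (insert 2 KK)

lemma KK_closed : IsClosed KK :=
  isClosed_Icc.sdiff (isOpen_iUnion fun _ => isOpen_Ioo)

lemma K'_closed : IsClosed K' := by
  unfold K'
  rw [Set.insert_eq, Set.insert_eq]
  exact isClosed_singleton.union (isClosed_singleton.union KK_closed)

lemma K'_nonempty : K'.Nonempty := ⟨-1, Or.inl rfl⟩

lemma rat_not_in_KK {r : ℚ} : (r : ℝ) ∉ KK := by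
  intro hr
  obtain ⟨n, hn⟩ := qseq_surj r
  exact hr.2 (mem_iUnion.mpr ⟨n, by
    constructor
    · rw [hn]; linarith [delta_pos n]
    · rw [hn]; linarith [delta_pos n]⟩)

lemma half_not_in_K' : (1/2 : ℝ) ∉ K' := by
  intro h
  rcases h with h | h | h
  · norm_num at h
  · norm_num at h
  · exact rat_not_in_KK (r := 1/2) (by push_cast; simpa using h)

def wK : ℝ → ℝ := fun t => Metric.infDist t K'

lemma wK_cont : Continuous wK := Metric.continuous_infDist_pt _

lemma wK_zero {x : ℝ} (hx : x ∈ K') : wK x = 0 := Metric.infDist_zero_of_mem hx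

lemma wK_half_pos : 0 < wK (1/2) :=
  (K'_closed.notMem_iff_infDist_pos K'_nonempty).mp half_not_in_K'

lemma wK_nonneg (x : ℝ) : 0 ≤ wK x := Metric.infDist_nonneg

lemma UU_volume : volume UU ≤ ENNReal.ofReal (1/6 : ℝ) := by
  refine le_trans (measure_iUnion_le _) ?_
  have hterm : ∀ n : ℕ, volume (Ioo (qseq n - delta n) (qseq n + delta n))
      = ENNReal.ofReal (2 * delta n) := by
    intro n
    rw [Real.volume_Ioo]
    congr 1
    ring
  simp only [hterm]
  rw [← ENNReal.ofReal_tsum_of_nonneg (fun n => mul_nonneg (by norm_num) (delta_pos n).le)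
    (by
      apply Summable.mul_left
      unfold delta
      apply Summable.comp_injective ?_ (add_left_injective 2)
      exact summable_geometric_of_lt_one (by norm_num) (by norm_num))]
  apply ENNReal.ofReal_le_ofReal
  have : ∑' n : ℕ, 2 * delta n = 2 * ((1/4:ℝ)^2 * (1 - 1/4)⁻¹) := by
    rw [tsum_mul_left]
    congr 1
    unfold delta
    rw [show (fun n : ℕ => (1/4:ℝ)^(n+2)) = fun n : ℕ => (1/4:ℝ)^2 * (1/4)^n by
      funext n; rw [pow_add, mul_comm]]
    rw [tsum_mul_left, tsum_geometric_of_lt_one (by norm_num) (by norm_num)]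
  rw [this]; norm_num

lemma KK_pos : volume (KK ∩ Ioo 0 1) ≠ 0 := by
  intro h0
  have hsub : Icc (0:ℝ) 1 ⊆ (KK ∩ Ioo 0 1) ∪ ({0,1} : Set ℝ) ∪ UU := by
    intro x hx
    by_cases hU : x ∈ UU
    · exact Or.inr hU
    · rcases eq_or_ne x 0 with rfl | h0'
      · exact Or.inl (Or.inr (Or.inl rfl))
      rcases eq_or_ne x 1 with rfl | h1'
      · exact Or.inl (Or.inr (Or.inr rfl))
      exact Or.inl (Or.inl ⟨⟨hx, hU⟩, ⟨lt_of_le_of_ne hx.1 (Ne.symm h0'), lt_of_le_of_ne hx.2 h1'⟩⟩)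
  have h1 : (1:ENNReal) ≤ volume ((KK ∩ Ioo 0 1) ∪ ({0,1} : Set ℝ) ∪ UU) := by
    rw [show (1:ENNReal) = volume (Icc (0:ℝ) 1) by rw [Real.volume_Icc]; norm_num]
    exact measure_mono hsub
  have h2 : volume ((KK ∩ Ioo 0 1) ∪ ({0,1} : Set ℝ) ∪ UU) < 1 := by
    apply lt_of_le_of_lt (le_trans (measure_union_le _ _) (add_le_add (measure_union_le _ _) le_rfl))
    rw [h0]
    have hfin : volume ({0,1} : Set ℝ) = 0 := by
      have h01 : volume ({0,1} : Set ℝ) ≤ volume ({0} : Set ℝ) + volume ({1} : Set ℝ) := by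
        rw [show ({0,1} : Set ℝ) = {0} ∪ {1} from rfl]
        exact measure_union_le _ _
      simp only [Real.volume_singleton, add_zero] at h01
      exact le_antisymm h01 zero_le
    rw [hfin, zero_add, zero_add]
    exact lt_of_le_of_lt UU_volume (by
      rw [show (1:ENNReal) = ENNReal.ofReal 1 by simp]
      exact ENNReal.ofReal_lt_ofReal_iff_of_nonneg (by norm_num) |>.mpr (by norm_num))
  exact absurd h1 (not_le.mpr h2)

-- linear piece lemma
lemma linear_piece {x ε : ℝ} (hx : x ∈ Ioo (0:ℝ) 1) (hε : 0 < ε) :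
    ∃ u v e σ, u < v ∧ Ioo u v ⊆ Ioo (x - ε) (x + ε) ∧ (σ = (1:ℝ) ∨ σ = -1) ∧
      ∀ y ∈ Ioo u v, wK y = σ * (y - e) ∧ 0 < wK y := by
  -- shrink to stay inside (0,1)
  set ε' := min ε (min x (1 - x)) with hε'
  have hε'pos : 0 < ε' := by
    apply lt_min hε
    apply lt_min hx.1
    linarith [hx.2]
  have hsub0 : Ioo (x - ε') (x + ε') ⊆ Ioo (0:ℝ) 1 := by
    intro y hy
    constructor
    · have : ε' ≤ x := le_trans (min_le_right _ _) (min_le_left _ _)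
      linarith [hy.1]
    · have : ε' ≤ 1 - x := le_trans (min_le_right _ _) (min_le_right _ _)
      linarith [hy.2]
  have hsubε : Ioo (x - ε') (x + ε') ⊆ Ioo (x - ε) (x + ε) := by
    intro y hy
    have : ε' ≤ ε := min_le_left _ _
    exact ⟨by linarith [hy.1], by linarith [hy.2]⟩
  -- find a rational in the left half
  obtain ⟨q, hq1, hq2⟩ := exists_rat_btwn (show x - ε' < x by linarith)
  obtain ⟨n, hn⟩ := qseq_surj q
  -- the interval I
  set α := max (qseq n - delta n) (x - ε') with hα
  set β := min (qseq n + delta n) (x + ε') with hβ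
  have hδ := delta_pos n
  have hαβ : α < β := by
    have h1 : qseq n - delta n < qseq n + delta n := by linarith
    have h2 : qseq n - delta n < x + ε' := by rw [hn]; linarith
    have h3 : x - ε' < qseq n + delta n := by rw [hn]; linarith
    have h4 : x - ε' < x + ε' := by linarith
    exact max_lt (lt_min h1 h2) (lt_min h3 h4)
  have hI1 : Ioo α β ⊆ Ioo (qseq n - delta n) (qseq n + delta n) := fun y hy =>
    ⟨lt_of_le_of_lt (le_max_left _ _) hy.1, lt_of_lt_of_le hy.2 (min_le_left _ _)⟩
  have hI2 : Ioo α β ⊆ Ioo (x - ε') (x + ε') := fun y hy =>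
    ⟨lt_of_le_of_lt (le_max_right _ _) hy.1, lt_of_lt_of_le hy.2 (min_le_right _ _)⟩
  have hIK : ∀ y ∈ Ioo α β, y ∉ K' := by
    intro y hy hyK
    rcases hyK with h | h | h
    · have := hsub0 (hI2 hy); rw [h] at this; exact absurd this.1 (by norm_num)
    · have := hsub0 (hI2 hy); rw [h] at this; exact absurd this.2 (by norm_num)
    · exact h.2 (mem_iUnion.mpr ⟨n, hI1 hy⟩)
  -- sup and inf
  set a := sSup (K' ∩ Iic α) with ha
  set b := sInf (K' ∩ Ici β) with hb
  have hε'x : ε' ≤ x := le_trans (min_le_right _ _) (min_le_left _ _)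
  have haneK : (K' ∩ Iic α).Nonempty := ⟨-1, Or.inl rfl, by
    simp only [mem_Iic]
    exact le_trans (by linarith) (le_max_right (qseq n - delta n) (x - ε'))⟩
  have hbneK : (K' ∩ Ici β).Nonempty := ⟨2, Or.inr (Or.inl rfl), by
    simp only [mem_Ici]
    have hε'1 : ε' ≤ 1 - x := le_trans (min_le_right _ _) (min_le_right _ _)
    exact le_trans (min_le_right _ _) (by linarith)⟩
  have habdd : BddAbove (K' ∩ Iic α) := ⟨α, fun z hz => hz.2⟩
  have hbbdd : BddBelow (K' ∩ Ici β) := ⟨β, fun z hz => hz.2⟩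
  have haK : a ∈ K' ∩ Iic α := by
    rw [ha]
    exact (K'_closed.inter isClosed_Iic).csSup_mem haneK habdd
  have hbK : b ∈ K' ∩ Ici β := by
    rw [hb]
    exact (K'_closed.inter isClosed_Ici).csInf_mem hbneK hbbdd
  have haα : a ≤ α := haK.2
  have hbβ : β ≤ b := hbK.2
  -- the gap property
  have hgap : ∀ z ∈ K', z ≤ a ∨ b ≤ z := by
    intro z hz
    rcases le_or_gt z α with h | h
    · exact Or.inl (le_csSup habdd ⟨hz, h⟩)
    rcases le_or_gt β z with h' | h'
    · exact Or.inr (csInf_le hbbdd ⟨hz, h'⟩)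
    · exact absurd hz (hIK z ⟨h, h'⟩)
  -- the distance formula on each half
  have hforms : ∀ y ∈ Ioo α β, (y ≤ (a+b)/2 → wK y = y - a) ∧ ((a+b)/2 ≤ y → wK y = b - y) := by
    intro y hy
    have hya : a < y := lt_of_le_of_lt haα hy.1
    have hyb : y < b := lt_of_lt_of_le hy.2 hbβ
    constructor
    · intro hmid
      apply le_antisymm
      · calc wK y ≤ dist y a := Metric.infDist_le_dist_of_mem haK.1
          _ = y - a := by rw [Real.dist_eq, abs_of_pos (by linarith)]
      · by_contra hlt
        push_neg at hlt
        obtain ⟨z, hzK, hzd⟩ := (Metric.infDist_lt_iff K'_nonempty).mp hlt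
        rcases hgap z hzK with h | h
        · rw [Real.dist_eq] at hzd
          have : y - z ≤ |y - z| := le_abs_self _
          linarith
        · rw [Real.dist_eq, abs_sub_comm] at hzd
          have : z - y ≤ |z - y| := le_abs_self _
          linarith
    · intro hmid
      apply le_antisymm
      · calc wK y ≤ dist y b := Metric.infDist_le_dist_of_mem hbK.1
          _ = b - y := by rw [Real.dist_eq, abs_of_neg (by linarith), neg_sub]
      · by_contra hlt
        push_neg at hlt
        obtain ⟨z, hzK, hzd⟩ := (Metric.infDist_lt_iff K'_nonempty).mp hlt
        rcases hgap z hzK with h | h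
        · rw [Real.dist_eq] at hzd
          have : y - z ≤ |y - z| := le_abs_self _
          linarith
        · rw [Real.dist_eq, abs_sub_comm] at hzd
          have : z - y ≤ |z - y| := le_abs_self _
          linarith
  -- choose the correct half
  rcases lt_or_ge α ((a+b)/2) with hcase | hcase
  · -- left half: J = (α, min β mid), w = y - a
    refine ⟨α, min β ((a+b)/2), a, 1, ?_, ?_, Or.inl rfl, ?_⟩
    · exact lt_min hαβ hcase
    · exact fun y hy => hsubε (hI2 ⟨hy.1, lt_of_lt_of_le hy.2 (min_le_left _ _)⟩)
    · intro y hy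
      have hyI : y ∈ Ioo α β := ⟨hy.1, lt_of_lt_of_le hy.2 (min_le_left _ _)⟩
      have := (hforms y hyI).1 (le_of_lt (lt_of_lt_of_le hy.2 (min_le_right _ _)))
      rw [this]
      constructor
      · ring
      · have : a < y := lt_of_le_of_lt haα hy.1
        linarith
  · -- right half: J = (α, β), w = b - y
    refine ⟨α, β, b, -1, hαβ, fun y hy => hsubε (hI2 hy), Or.inr rfl, ?_⟩
    intro y hy
    have := (hforms y hy).2 (le_trans hcase (le_of_lt hy.1))
    rw [this]
    constructor
    · ring
    · have : y < b := lt_of_lt_of_le hy.2 hbβ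
      linarith


lemma KK_K' {x : ℝ} (h : x ∈ KK) : x ∈ K' := Or.inr (Or.inr h)

def gt' (a : ℕ → Bool) (i : ℕ) : ℝ := (if a i then (2:ℝ) else 0) * (1/3)^(i+1)

lemma gt'_nonneg (a i) : 0 ≤ gt' a i := by
  unfold gt'; split <;> positivity

lemma gt'_le (a i) : gt' a i ≤ 2 * (1/3:ℝ)^(i+1) := by
  unfold gt'
  split
  · exact le_refl _
  · rw [zero_mul]; positivity

lemma geo_summable : Summable (fun i : ℕ => 2 * (1/3:ℝ)^(i+1)) := by
  apply Summable.mul_left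
  exact (summable_geometric_of_lt_one (by norm_num) (by norm_num)).comp_injective (add_left_injective 1)

lemma gt'_summable (a) : Summable (gt' a) := by
  apply Summable.of_nonneg_of_le (gt'_nonneg a) (gt'_le a) geo_summable

def gam (a : ℕ → Bool) : ℝ := ∑' i, gt' a i

lemma geo_tail (N : ℕ) : ∑' i : ℕ, 2 * (1/3:ℝ)^((i + N)+1) = (1/3:ℝ)^N := by
  have : ∀ i : ℕ, 2 * (1/3:ℝ)^((i + N)+1) = (2 * (1/3)^(N+1)) * (1/3)^i := by
    intro i
    rw [show (i + N) + 1 = (N+1) + i by ring, pow_add]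
    ring
  rw [funext this, tsum_mul_left, tsum_geometric_of_lt_one (by norm_num) (by norm_num)]
  rw [pow_add]
  norm_num
  ring

lemma gam_tail_le (a : ℕ → Bool) (N : ℕ) : ∑' i : ℕ, gt' a (i + N) ≤ (1/3:ℝ)^N := by
  rw [← geo_tail N]
  apply Summable.tsum_le_tsum (fun i => gt'_le a _) ((gt'_summable a).comp_injective (add_left_injective N))
  exact geo_summable.comp_injective (add_left_injective N)

lemma gam_tail_nonneg (a : ℕ → Bool) (N : ℕ) : 0 ≤ ∑' i : ℕ, gt' a (i + N) :=
  tsum_nonneg (fun i => gt'_nonneg a _)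

lemma gam_split (a : ℕ → Bool) (N : ℕ) :
    gam a = (∑ i ∈ Finset.range N, gt' a i) + ∑' i : ℕ, gt' a (i + N) :=
  (Summable.sum_add_tsum_nat_add N (gt'_summable a)).symm

lemma gam_nonneg (a) : 0 ≤ gam a := tsum_nonneg (gt'_nonneg a)

lemma gam_le_one (a) : gam a ≤ 1 := by
  have := gam_tail_le a 0
  simpa [gam] using this

-- if two sequences agree below N, their gams differ by at most (1/3)^N
lemma gam_diff {a b : ℕ → Bool} {N : ℕ} (h : ∀ i < N, a i = b i) :
    |gam a - gam b| ≤ (1/3:ℝ)^N := by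
  rw [gam_split a N, gam_split b N]
  have hsame : (∑ i ∈ Finset.range N, gt' a i) = ∑ i ∈ Finset.range N, gt' b i := by
    apply Finset.sum_congr rfl
    intro i hi
    unfold gt'
    rw [h i (Finset.mem_range.mp hi)]
  rw [hsame]
  have h1 := gam_tail_le a N
  have h2 := gam_tail_le b N
  have h3 := gam_tail_nonneg a N
  have h4 := gam_tail_nonneg b N
  rw [abs_le]
  constructor <;> [linarith; linarith]

lemma gam_tail_split (a : ℕ → Bool) (N : ℕ) :
    ∑' i : ℕ, gt' a (i + N) = gt' a N + ∑' i : ℕ, gt' a (i + (N+1)) := by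
  have hsum : Summable (fun i => gt' a (i + N)) :=
    ((gt'_summable a).comp_injective (add_left_injective N) : _)
  rw [Summable.tsum_eq_zero_add hsum]
  simp only [zero_add]
  congr 1
  apply tsum_congr
  intro i
  congr 1
  omega

lemma gam_inj : Function.Injective gam := by
  intro a b hab
  by_contra hne
  have hex : ∃ i, a i ≠ b i := by
    by_contra h
    push_neg at h
    exact hne (funext h)
  classical
  set N := Nat.find hex with hN
  have hNd : a N ≠ b N := Nat.find_spec hex
  have hlt : ∀ i < N, a i = b i := fun i hi => by
    by_contra h
    exact absurd (Nat.find_le h) (not_le.mpr (hN ▸ hi))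
  -- wlog a N = true
  have key : ∀ c d : ℕ → Bool, gam c = gam d → (∀ i < N, c i = d i) → c N = true → d N = false → False := by
    intro c d hcd hcd' hcN hdN
    have hs : gam c - gam d = (∑' i : ℕ, gt' c (i + N)) - ∑' i : ℕ, gt' d (i + N) := by
      rw [gam_split c N, gam_split d N]
      have : (∑ i ∈ Finset.range N, gt' c i) = ∑ i ∈ Finset.range N, gt' d i := by
        apply Finset.sum_congr rfl
        intro i hi
        unfold gt'
        rw [hcd' i (Finset.mem_range.mp hi)]
      rw [this]
      ring
    rw [hcd, sub_self] at hs
    have hc : gt' c N = 2 * (1/3:ℝ)^(N+1) := by unfold gt'; rw [hcN]; simp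
    have hd : gt' d N = 0 := by unfold gt'; rw [hdN]; simp
    have h1 := gam_tail_split c N
    have h2 := gam_tail_split d N
    have h3 := gam_tail_nonneg c (N+1)
    have h4 := gam_tail_le d (N+1)
    have h5 := gam_tail_nonneg d (N+1)
    have : (0:ℝ) < (1/3:ℝ)^(N+1) := by positivity
    rw [h1, h2, hc, hd] at hs
    linarith
  cases haN : a N <;> cases hbN : b N
  · exact hNd (haN.trans hbN.symm)
  · exact key b a hab.symm (fun i hi => (hlt i hi).symm) hbN haN
  · exact key a b hab hlt haN hbN
  · exact hNd (haN.trans hbN.symm)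

lemma gam_cont : Continuous gam := by
  apply continuous_tsum ?_ geo_summable
  · intro i x
    rw [Real.norm_eq_abs, abs_of_nonneg (gt'_nonneg x i)]
    exact gt'_le x i
  · intro i
    unfold gt'
    have hc : Continuous fun a : ℕ → Bool => (if a i then (2:ℝ) else 0) := by
      have h1 : Continuous fun a : ℕ → Bool => a i := continuous_apply i
      have h2 : Continuous (fun b : Bool => if b then (2:ℝ) else 0) :=
        continuous_of_discreteTopology
      exact h2.comp h1
    exact hc.mul continuous_const

def theta (m : ℕ) (a : ℕ → Bool) : ℝ := (1/3:ℝ)^(m+1) * (1 + gam a)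

lemma theta_lb (m a) : (1/3:ℝ)^(m+1) ≤ theta m a := by
  unfold theta
  nlinarith [gam_nonneg a, pow_pos (by norm_num : (0:ℝ) < 1/3) (m+1)]

lemma theta_ub (m a) : theta m a ≤ 2 * (1/3:ℝ)^(m+1) := by
  unfold theta
  nlinarith [gam_le_one a, pow_pos (by norm_num : (0:ℝ) < 1/3) (m+1)]

lemma theta_pos (m a) : 0 < theta m a :=
  lt_of_lt_of_le (by positivity) (theta_lb m a)

lemma theta_lt_pow (m a) : theta m a < (1/3:ℝ)^m := by
  have := theta_ub m a
  have h2 : 2 * (1/3:ℝ)^(m+1) < (1/3)^m := by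
    rw [pow_succ]
    nlinarith [pow_pos (by norm_num : (0:ℝ) < 1/3) m]
  linarith

lemma theta_cont (m : ℕ) : Continuous (theta m) := by
  unfold theta
  exact continuous_const.mul (continuous_const.add gam_cont)

lemma theta_inj {m m' : ℕ} {a a' : ℕ → Bool} (h : theta m a = theta m' a') :
    m = m' ∧ a = a' := by
  have hmm : m = m' := by
    by_contra hne
    have hpow : ∀ {k k' : ℕ}, k < k' → ∀ b b', theta k' b' < theta k b := by
      intro k k' hkk b b'
      calc theta k' b' < (1/3:ℝ)^k' := theta_lt_pow k' b'
        _ ≤ (1/3:ℝ)^(k+1) := pow_le_pow_of_le_one (by norm_num) (by norm_num) (by omega)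
        _ ≤ theta k b := theta_lb k b
    rcases Nat.lt_or_ge m m' with hlt | hge
    · exact absurd h (ne_of_gt (hpow hlt a a'))
    · have : m' < m := by omega
      exact absurd h (ne_of_lt (hpow this a' a))
  subst hmm
  refine ⟨rfl, gam_inj ?_⟩
  have hp : (0:ℝ) < (1/3:ℝ)^(m+1) := by positivity
  unfold theta at h
  have := mul_left_cancel₀ (ne_of_gt hp) h
  linarith

def D0 : Set ℝ := {x | ∃ m a, |x| = theta m a}
def DD : Set ℝ := insert 0 D0

lemma theta_image_compact (m : ℕ) : IsCompact (theta m '' univ) :=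
  (isCompact_univ (X := ℕ → Bool)).image (theta_cont m)

lemma DD_closed : IsClosed DD := by
  rw [← isOpen_compl_iff]
  rw [Metric.isOpen_iff]
  intro x hx
  have hx0 : x ≠ 0 := fun h => hx (h ▸ mem_insert 0 D0)
  have hr : 0 < |x| := abs_pos.mpr hx0
  obtain ⟨M, hM⟩ := exists_pow_lt_of_lt_one (show (0:ℝ) < |x|/2 by linarith) (by norm_num : (1/3:ℝ) < 1)
  -- T = union of the finitely many large blocks
  set T : Set ℝ := ⋃ m : Fin M, theta m '' univ with hT
  have hTcomp : IsCompact T := isCompact_iUnion (fun m => theta_image_compact m)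
  have hxT : |x| ∉ T := by
    intro hmem
    rw [hT, mem_iUnion] at hmem
    obtain ⟨m, a, _, ha⟩ := hmem
    exact hx (mem_insert_iff.mpr (Or.inr ⟨m, a, ha.symm⟩))
  have hTopen : IsOpen Tᶜ := hTcomp.isClosed.isOpen_compl
  obtain ⟨ε₂, hε₂, hball⟩ := Metric.isOpen_iff.mp hTopen |x| hxT
  refine ⟨min ε₂ (|x|/2), lt_min hε₂ (by linarith), ?_⟩
  intro y hy
  rw [Metric.mem_ball, Real.dist_eq] at hy
  intro hyD
  have hyabs : abs (|y| - |x|) ≤ |y - x| := abs_abs_sub_abs_le_abs_sub y x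
  have hy2 : abs (|y| - |x|) < min ε₂ (|x|/2) := lt_of_le_of_lt hyabs hy
  have hylb : |x|/2 < |y| := by
    have := abs_lt.mp (lt_of_lt_of_le hy2 (min_le_right _ _))
    linarith [this.1]
  rcases hyD with rfl | ⟨m, a, hya⟩
  · simp at hylb
    linarith
  · rcases Nat.lt_or_ge m M with hm | hm
    · -- |y| ∈ T, but |y| ∈ ball(|x|, ε₂) ⊆ Tᶜ
      have : |y| ∈ T := by
        rw [hT, mem_iUnion]
        exact ⟨⟨m, hm⟩, a, mem_univ a, hya.symm⟩
      exact hball (by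
        rw [Metric.mem_ball, Real.dist_eq]
        exact lt_of_lt_of_le hy2 (min_le_left _ _)) this
    · have h1 : theta m a < (1/3:ℝ)^m := theta_lt_pow m a
      have h2 : (1/3:ℝ)^m ≤ (1/3:ℝ)^M := pow_le_pow_of_le_one (by norm_num) (by norm_num) hm
      rw [hya] at hylb
      linarith

-- measure zero
lemma extend_restrict (a : ℕ → Bool) (n : ℕ) :
    ∀ i < n, a i = (fun i : ℕ => if h : i < n then a i else false) i := by
  intro i hi
  simp [hi]

lemma affine_gam_null (s v : ℝ) (hs : |s| ≤ 1) :
    volume ((fun a => s * gam a + v) '' univ) = 0 := by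
  have hbound : ∀ n : ℕ, volume ((fun a => s * gam a + v) '' univ) ≤
      ENNReal.ofReal ((2:ℝ)^n * (2 * (1/3)^n)) := by
    intro n
    -- cover by intervals indexed by Fin n → Bool
    set ext : (Fin n → Bool) → (ℕ → Bool) := fun p i => if h : i < n then p ⟨i, h⟩ else false with hext
    set Cp : (Fin n → Bool) → ℝ := fun p => s * gam (ext p) + v with hCp
    have hcover : (fun a => s * gam a + v) '' univ ⊆
        ⋃ p ∈ (Finset.univ : Finset (Fin n → Bool)), Icc (Cp p - (1/3)^n) (Cp p + (1/3)^n) := by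
      rintro z ⟨a, -, rfl⟩
      rw [mem_iUnion]
      refine ⟨fun i => a i, mem_iUnion.mpr ⟨Finset.mem_univ _, ?_⟩⟩
      have hagree : ∀ i < n, a i = ext (fun i => a i) i := by
        intro i hi
        simp [hext, hi]
      have hd := gam_diff hagree
      have : |s * gam a + v - Cp (fun i => a i)| ≤ (1/3:ℝ)^n := by
        rw [hCp]
        have heq : s * gam a + v - (s * gam (ext fun i => a i) + v)
            = s * (gam a - gam (ext fun i => a i)) := by ring
        rw [heq, abs_mul]
        calc |s| * |gam a - gam (ext fun i => a i)| ≤ 1 * (1/3:ℝ)^n := by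
              apply mul_le_mul hs hd (abs_nonneg _) (by norm_num)
          _ = (1/3:ℝ)^n := one_mul _
      rw [abs_le] at this
      constructor <;> linarith [this.1, this.2]
    calc volume ((fun a => s * gam a + v) '' univ)
        ≤ ∑ p ∈ (Finset.univ : Finset (Fin n → Bool)),
            volume (Icc (Cp p - (1/3)^n) (Cp p + (1/3)^n)) :=
          le_trans (measure_mono hcover) (measure_biUnion_finset_le _ _)
      _ = ∑ p ∈ (Finset.univ : Finset (Fin n → Bool)), ENNReal.ofReal (2 * (1/3)^n) := by
          apply Finset.sum_congr rfl
          intro p _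
          rw [Real.volume_Icc]
          congr 1
          ring
      _ = (Finset.univ : Finset (Fin n → Bool)).card • ENNReal.ofReal (2 * (1/3)^n) :=
          Finset.sum_const _
      _ = ENNReal.ofReal ((2:ℝ)^n * (2 * (1/3)^n)) := by
          rw [Finset.card_univ, Fintype.card_fun, Fintype.card_bool, Fintype.card_fin]
          rw [nsmul_eq_mul, ← ENNReal.ofReal_natCast, ← ENNReal.ofReal_mul (by positivity)]
          congr 2
          push_cast
          ring
  have htends : Tendsto (fun n : ℕ => ENNReal.ofReal ((2:ℝ)^n * (2 * (1/3)^n))) atTop (nhds 0) := by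
    rw [show (0:ENNReal) = ENNReal.ofReal 0 by simp]
    apply ENNReal.tendsto_ofReal
    have heq : ∀ n : ℕ, (2:ℝ)^n * (2 * (1/3)^n) = 2 * (2/3)^n := by
      intro n
      rw [div_pow, div_pow]
      field_simp
      ring
    simp only [heq]
    have hgeo : Tendsto (fun n : ℕ => (2/3:ℝ)^n) atTop (nhds 0) :=
      tendsto_pow_atTop_nhds_zero_of_lt_one (by norm_num) (by norm_num)
    have := hgeo.const_mul (2:ℝ)
    simpa using this
  exact le_antisymm (ge_of_tendsto' htends hbound |>.trans (le_refl 0)) zero_le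


lemma theta_def (m a) : theta m a = (1/3:ℝ)^(m+1) * (1 + gam a) := rfl

lemma DD_null : volume DD = 0 := by
  have hsub : DD ⊆ {0} ∪ ⋃ m : ℕ, (((fun a => (1/3:ℝ)^(m+1) * gam a + (1/3)^(m+1)) '' univ) ∪
      ((fun a => -((1/3:ℝ)^(m+1)) * gam a + (-((1/3)^(m+1)))) '' univ)) := by
    rintro x (rfl | ⟨m, a, hx⟩)
    · exact Or.inl rfl
    · right
      rw [mem_iUnion]
      refine ⟨m, ?_⟩
      rcases abs_cases x with ⟨h1, _⟩ | ⟨h1, _⟩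
      · left
        exact ⟨a, mem_univ a, by rw [← h1, hx, theta_def]; ring⟩
      · right
        exact ⟨a, mem_univ a, by
          have : x = -(theta m a) := by rw [← hx]; linarith
          rw [this, theta_def]; ring⟩
  refine le_antisymm (le_trans (measure_mono hsub) ?_) zero_le
  refine le_trans (measure_union_le _ _) ?_
  rw [Real.volume_singleton, zero_add]
  refine le_trans (measure_iUnion_le _) ?_
  have hz : ∀ m : ℕ, volume ((((fun a => (1/3:ℝ)^(m+1) * gam a + (1/3)^(m+1)) '' univ) ∪
      ((fun a => -((1/3:ℝ)^(m+1)) * gam a + (-((1/3)^(m+1)))) '' univ))) = 0 := by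
    intro m
    have hle : |(1/3:ℝ)^(m+1)| ≤ 1 := by
      rw [abs_of_pos (by positivity)]
      apply pow_le_one₀ <;> norm_num
    have h1 := affine_gam_null ((1/3:ℝ)^(m+1)) ((1/3:ℝ)^(m+1)) hle
    have h2 := affine_gam_null (-((1/3:ℝ)^(m+1))) (-((1/3:ℝ)^(m+1))) (by rwa [abs_neg])
    refine le_antisymm (le_trans (measure_union_le _ _) ?_) zero_le
    rw [h1, h2, add_zero]
  simp only [hz, tsum_zero]
  exact le_refl 0


-- the parameter space
def XT : Type := Σ E : Finset ℝ, (↥(E.powerset) → Set.Icc (0:ℝ) 1)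

instance : Nonempty XT := ⟨⟨∅, fun _ => ⟨0, by norm_num⟩⟩⟩

open Classical in
def FJ (J : Set ℝ) (p : XT) : ℝ :=
  (p.2 ⟨p.1.filter (fun t => t ∈ J), Finset.mem_powerset.mpr (Finset.filter_subset _ _)⟩ : ℝ)

lemma FJ_mem (J p) : FJ J p ∈ Set.Icc (0:ℝ) 1 := (Subtype.mem _)

lemma XT_card : #XT ≤ continuum := by
  unfold XT
  rw [Cardinal.mk_sigma]
  calc (Cardinal.sum fun E : Finset ℝ => #(↥(E.powerset) → Set.Icc (0:ℝ) 1))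
      ≤ Cardinal.sum (fun _ : Finset ℝ => continuum) := by
        apply Cardinal.sum_le_sum
        intro E
        rw [Cardinal.mk_arrow]
        have h1 : #(Set.Icc (0:ℝ) 1) = continuum := Cardinal.mk_Icc_real (by norm_num)
        rw [Cardinal.lift_id, Cardinal.lift_id, h1]
        calc continuum ^ (#(↥(E.powerset))) ≤ continuum ^ ℵ₀ := by
              apply Cardinal.power_le_power_left
              · exact continuum_ne_zero
              · exact le_of_lt (Cardinal.lt_aleph0_of_finite _)
          _ = continuum := Cardinal.continuum_power_aleph0
    _ = #(Finset ℝ) * continuum := by rw [Cardinal.sum_const']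
    _ = continuum := by
        rw [Cardinal.mk_finset_of_infinite, Cardinal.mk_real]
        exact mul_eq_self (le_of_lt (aleph0_lt_continuum)) |>.symm ▸ rfl

lemma XT_surj : ∃ s : (ℕ → Bool) → XT, Function.Surjective s := by
  have h1 : #XT ≤ #(ℕ → Bool) := by
    rw [show #(ℕ → Bool) = continuum by
      rw [Cardinal.mk_arrow, Cardinal.mk_bool, Cardinal.lift_id, Cardinal.lift_id,
        Cardinal.mk_nat, Cardinal.two_power_aleph0]]
    exact XT_card
  obtain ⟨emb⟩ := Cardinal.le_def _ _ |>.mp h1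
  refine ⟨Function.invFun emb, fun p => ⟨emb p, Function.leftInverse_invFun emb.injective p⟩⟩

def sXT : (ℕ → Bool) → XT := XT_surj.choose
lemma sXT_surj : Function.Surjective sXT := XT_surj.choose_spec

-- the functions in S
open Classical in
def fJ (J : Set ℝ) : ℝ → ℝ := fun x =>
  if h : x ∈ D0 then FJ J (sXT h.choose_spec.choose) else 0

lemma fJ_eval (J : Set ℝ) (m : ℕ) (a : ℕ → Bool) (ε : ℝ) (hε : ε = 1 ∨ ε = -1) :
    fJ J (ε * theta m a) = FJ J (sXT a) := by
  have habs : |ε * theta m a| = theta m a := by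
    rcases hε with rfl | rfl
    · rw [one_mul, abs_of_pos (theta_pos m a)]
    · rw [abs_mul, abs_neg, abs_one, one_mul, abs_of_pos (theta_pos m a)]
  have hmem : (ε * theta m a) ∈ D0 := ⟨m, a, habs⟩
  unfold fJ
  rw [dif_pos hmem]
  congr 1
  have hspec : |ε * theta m a| = theta hmem.choose hmem.choose_spec.choose :=
    hmem.choose_spec.choose_spec
  exact congrArg sXT (theta_inj (habs.symm.trans hspec)).2.symm

lemma fJ_zero {J : Set ℝ} {x : ℝ} (h : x ∉ D0) : fJ J x = 0 := dif_neg h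

lemma fJ_mem (J x) : fJ J x ∈ Set.Icc (0:ℝ) 1 := by
  unfold fJ
  split
  · exact FJ_mem _ _
  · constructor <;> norm_num

-- Engelking–Karłowicz style realization
lemma EK (n : ℕ) (J : Fin n → Set ℝ) (hJ : Function.Injective J) (v : Fin n → ℝ)
    (hv : ∀ l, v l ∈ Set.Icc (0:ℝ) 1) :
    ∃ p : XT, ∀ l, FJ (J l) p = v l := by
  classical
  -- separating points
  have hsep : ∀ l l' : Fin n, l ≠ l' → ∃ t, ¬(t ∈ J l ↔ t ∈ J l') := by
    intro l l' hne
    by_contra h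
    push_neg at h
    exact hne (hJ (Set.ext fun t => by
      constructor
      · intro ht; exact (h t).mp ht
      · intro ht; exact (h t).mpr ht))
  choose wit hwit using fun (pr : {q : Fin n × Fin n // q.1 ≠ q.2}) => hsep pr.1.1 pr.1.2 pr.2
  set E : Finset ℝ := Finset.image wit Finset.univ with hE
  have hfilterinj : ∀ l l' : Fin n, E.filter (fun t => t ∈ J l) = E.filter (fun t => t ∈ J l') → l = l' := by
    intro l l' hf
    by_contra hne
    set t := wit ⟨(l, l'), hne⟩ with ht
    have htE : t ∈ E := Finset.mem_image.mpr ⟨⟨(l,l'), hne⟩, Finset.mem_univ _, rfl⟩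
    have := hwit ⟨(l, l'), hne⟩
    have hiff : t ∈ J l ↔ t ∈ J l' := by
      constructor
      · intro htl
        have h1 : t ∈ E.filter (fun t => t ∈ J l) := Finset.mem_filter.mpr ⟨htE, htl⟩
        rw [hf] at h1
        exact (Finset.mem_filter.mp h1).2
      · intro htl
        have h1 : t ∈ E.filter (fun t => t ∈ J l') := Finset.mem_filter.mpr ⟨htE, htl⟩
        rw [← hf] at h1
        exact (Finset.mem_filter.mp h1).2
    exact this hiff
  set σ : ↥(E.powerset) → Set.Icc (0:ℝ) 1 := fun A =>
    if h : ∃ l, (A : Finset ℝ) = E.filter (fun t => t ∈ J l) then ⟨v h.choose, hv _⟩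
    else ⟨0, by norm_num⟩ with hσ
  refine ⟨⟨E, σ⟩, ?_⟩
  intro l
  have hex : ∃ l', (E.filter (fun t => t ∈ J l) : Finset ℝ) = E.filter (fun t => t ∈ J l') := ⟨l, rfl⟩
  have hval : σ ⟨E.filter (fun t => t ∈ J l), Finset.mem_powerset.mpr (Finset.filter_subset _ _)⟩
      = ⟨v l, hv l⟩ := by
    rw [hσ]
    dsimp only
    rw [dif_pos hex]
    exact Subtype.ext (congrArg v (hfilterinj _ _ hex.choose_spec.symm))
  unfold FJ
  exact congrArg Subtype.val hval


-- zero outside D0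
lemma r_zero_off {n : ℕ} (J : Fin n → Set ℝ) (P : MvPolynomial (Fin n) ℝ)
    (hcc : constantCoeff P = 0) {x : ℝ} (hx : x ∉ D0) :
    eval (fun i => fJ (J i) x) P = 0 := by
  have : (fun i => fJ (J i) x) = (fun _ => (0:ℝ)) := funext fun i => fJ_zero hx
  rw [this, eval_zero', hcc]

-- boundedness
lemma r_bounded {n : ℕ} (P : MvPolynomial (Fin n) ℝ) :
    ∃ M : ℝ, ∀ v : Fin n → ℝ, (∀ i, v i ∈ Set.Icc (0:ℝ) 1) → |eval v P| ≤ M := by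
  have hcont : Continuous fun v : Fin n → ℝ => |eval v P| :=
    (MvPolynomial.continuous_eval P).abs
  have hcomp : IsCompact (Set.Icc (fun _ : Fin n => (0:ℝ)) (fun _ => 1)) := isCompact_Icc
  rcases Set.eq_empty_or_nonempty (Set.Icc (fun _ : Fin n => (0:ℝ)) (fun _ => 1)) with he | hne
  · refine ⟨0, fun v hv => absurd ?_ (Set.eq_empty_iff_forall_notMem.mp he v)⟩
    exact ⟨fun i => (hv i).1, fun i => (hv i).2⟩
  obtain ⟨z, hz, hmax⟩ := hcomp.exists_isMaxOn hne hcont.continuousOn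
  refine ⟨|eval z P|, fun v hv => hmax ?_⟩
  exact ⟨fun i => (hv i).1, fun i => (hv i).2⟩

-- the realization lemma: values of the tuple can be prescribed on both signs and all scales
lemma realize {n : ℕ} (J : Fin n → Set ℝ) (hJ : Function.Injective J) (v : Fin n → ℝ)
    (hv : ∀ l, v l ∈ Set.Icc (0:ℝ) 1) :
    ∃ a : ℕ → Bool, ∀ (m : ℕ) (ε : ℝ), (ε = 1 ∨ ε = -1) →
      ∀ l, fJ (J l) (ε * theta m a) = v l := by
  obtain ⟨p, hp⟩ := EK n J hJ v hv
  obtain ⟨a, rfl⟩ := sXT_surj p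
  exact ⟨a, fun m ε hε l => by rw [fJ_eval _ _ _ _ hε]; exact hp l⟩

-- property (B): near zero, from both sides, |r| is large
lemma propB {n : ℕ} (J : Fin n → Set ℝ) (hJ : Function.Injective J)
    (P : MvPolynomial (Fin n) ℝ) (hP : P ≠ 0) :
    ∃ δ : ℝ, 0 < δ ∧ ∀ ε : ℝ, 0 < ε →
      (∃ t ∈ Ioo (0:ℝ) ε, |eval (fun i => fJ (J i) t) P| = δ) ∧
      (∃ t ∈ Ioo (-ε) (0:ℝ), |eval (fun i => fJ (J i) t) P| = δ) := by
  obtain ⟨v, hv, hvne⟩ := box_lemma P hP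
  obtain ⟨a, ha⟩ := realize J hJ v (fun l => ⟨(hv l).1.le, (hv l).2.le⟩)
  refine ⟨|eval v P|, abs_pos.mpr hvne, ?_⟩
  intro ε hε
  -- pick m with 2 * (1/3)^(m+1) < ε
  obtain ⟨m, hm⟩ := exists_pow_lt_of_lt_one (show (0:ℝ) < ε/2 by linarith)
    (by norm_num : (1/3:ℝ) < 1)
  have hub : theta m a < ε := by
    have h1 := theta_ub m a
    have h2 : (1/3:ℝ)^(m+1) ≤ (1/3:ℝ)^m :=
      pow_le_pow_of_le_one (by norm_num) (by norm_num) (by omega)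
    linarith
  constructor
  · refine ⟨theta m a, ⟨theta_pos m a, hub⟩, ?_⟩
    have := ha m 1 (Or.inl rfl)
    rw [one_mul] at this
    rw [show (fun i => fJ (J i) (theta m a)) = v from funext this]
  · refine ⟨-(theta m a), ⟨by linarith [theta_pos m a, hub], by linarith [theta_pos m a]⟩, ?_⟩
    have := ha m (-1) (Or.inr rfl)
    rw [neg_one_mul] at this
    rw [show (fun i => fJ (J i) (-(theta m a))) = v from funext this]


lemma S_integrable {n : ℕ} (J : Fin n → Set ℝ) (P : MvPolynomial (Fin n) ℝ)
    (hcc : constantCoeff P = 0) (a b : ℝ) :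
    RiemannIntegrableOn (fun x : ℝ => eval (fun i => fJ (J i) x) P) a b := by
  constructor
  · obtain ⟨M, hM⟩ := r_bounded P
    exact ⟨M, fun x _ => hM _ (fun i => fJ_mem _ _)⟩
  · have hsub : {x | x ∈ Set.Icc a b ∧
        ¬ ContinuousWithinAt (fun x : ℝ => eval (fun i => fJ (J i) x) P) (Set.Icc a b) x} ⊆ DD := by
      intro x hx
      by_contra hxD
      apply hx.2
      -- r is identically 0 on the open set DDᶜ ∋ x
      have hopen : IsOpen DDᶜ := DD_closed.isOpen_compl
      have hev : ∀ᶠ y in nhdsWithin x (Set.Icc a b),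
          (fun x : ℝ => eval (fun i => fJ (J i) x) P) y = 0 := by
        apply Filter.eventually_iff_exists_mem.mpr
        refine ⟨Set.Icc a b ∩ DDᶜ, inter_mem_nhdsWithin _ (hopen.mem_nhds hxD), ?_⟩
        intro y hy
        exact r_zero_off J P hcc (fun h => hy.2 (mem_insert_iff.mpr (Or.inr h)))
      have hx0 : eval (fun i => fJ (J i) x) P = 0 :=
        r_zero_off J P hcc (fun h => hxD (mem_insert_iff.mpr (Or.inr h)))
      have : ContinuousWithinAt (fun _ : ℝ => (0:ℝ)) (Set.Icc a b) x := continuousWithinAt_const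
      apply this.congr_of_eventuallyEq hev
      rw [hx0]
    exact le_antisymm (le_trans (measure_mono hsub) DD_null.le) zero_le

-- injectivity of J ↦ fJ
lemma fJ_inj : Function.Injective fJ := by
  intro J J' hJJ
  by_contra hne
  have hJinj : Function.Injective (![J, J'] : Fin 2 → Set ℝ) := by
    intro l l' h
    fin_cases l <;> fin_cases l' <;> simp_all <;> exact hne (by simpa using h)
  obtain ⟨a, ha⟩ := realize ![J, J'] hJinj ![1, 0]
    (fun l => by fin_cases l <;> norm_num)
  have h0 := ha 0 1 (Or.inl rfl) 0
  have h1 := ha 0 1 (Or.inl rfl) 1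
  simp only [Matrix.cons_val_zero, Matrix.cons_val_one, Matrix.head_cons] at h0 h1
  rw [hJJ] at h0
  rw [h0] at h1
  norm_num at h1


variable {m : ℕ}

def degS (α : Fin m →₀ ℕ) : ℕ := ∑ j, α j
def betaS (a : Fin m → ℝ) (α : Fin m →₀ ℕ) : ℝ := ∑ j, (α j : ℝ) * a j

def ghat (a : Fin m → ℝ) (Q : MvPolynomial (Fin m) ℝ) : ℝ → ℝ := fun y =>
  ∑ α ∈ Q.support, coeff α Q * (wK y) ^ (degS α) * Real.exp ((betaS a α) * y)

lemma ghat_eq (a : Fin m → ℝ) (Q : MvPolynomial (Fin m) ℝ) (x : ℝ) :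
    eval (fun j => wK x * Real.exp (a j * x)) Q = ghat a Q x := by
  rw [eval_eq']
  apply Finset.sum_congr rfl
  intro α hα
  have hthis : ∀ j : Fin m, (wK x * Real.exp (a j * x)) ^ (α j)
      = (wK x) ^ (α j) * Real.exp ((α j : ℝ) * (a j * x)) := by
    intro j
    rw [mul_pow, ← Real.exp_nat_mul]
  have hstep : (∏ j, (wK x * Real.exp (a j * x)) ^ (α j))
      = (wK x) ^ (degS α) * Real.exp ((betaS a α) * x) := by
    rw [Finset.prod_congr rfl (fun j _ => hthis j), Finset.prod_mul_distrib,
      Finset.prod_pow_eq_pow_sum, ← Real.exp_sum]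
    unfold degS betaS
    congr 2
    rw [Finset.sum_mul]
    apply Finset.sum_congr rfl
    intro j _
    ring
  rw [hstep]
  ring

lemma betaS_inj {a : Fin m → ℝ} (hlin : LinearIndependent ℚ a) {α α' : Fin m →₀ ℕ}
    (h : betaS a α = betaS a α') : α = α' := by
  have hcoef := Fintype.linearIndependent_iff.mp hlin (fun j => (α j : ℚ) - (α' j : ℚ)) ?_
  · ext j
    have := hcoef j
    have h2 : (α j : ℚ) = (α' j : ℚ) := by linarith [sub_eq_zero.mp this]
    exact_mod_cast h2
  · unfold betaS at h
    have : ∑ j, (((α j : ℚ) - α' j) • a j) = 0 := by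
      have hc : ∀ j : Fin m, ((α j : ℚ) - α' j) • a j = (α j : ℝ) * a j - (α' j : ℝ) * a j := by
        intro j
        rw [Rat.smul_def]
        push_cast
        ring
      rw [Finset.sum_congr rfl (fun j _ => hc j), Finset.sum_sub_distrib]
      rw [h]
      ring
    exact this

lemma ghat_ne {a : Fin m → ℝ} (hlin : LinearIndependent ℚ a) {Q : MvPolynomial (Fin m) ℝ}
    (hQ : Q ≠ 0) {u v : ℝ} (huv : u < v) (hsub : Ioo u v ⊆ Ioo (0:ℝ) 1) :
    ∃ y ∈ Ioo u v, ghat a Q y ≠ 0 := by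
  by_contra h
  push_neg at h
  -- find a linear piece inside
  have hmid : (u+v)/2 ∈ Ioo (0:ℝ) 1 := hsub ⟨by linarith, by linarith⟩
  obtain ⟨u', v', e, σ, hu'v', hsub', hσ, hw⟩ :=
    linear_piece hmid (show 0 < (v-u)/2 by linarith)
  have hsub'' : Ioo u' v' ⊆ Ioo u v := fun y hy => by
    have := hsub' hy
    constructor
    · have h1 := this.1; linarith
    · have h2 := this.2; linarith
  classical
  have hzero : ∀ y ∈ Ioo u' v',
      ∑ α ∈ Q.support, (coeff α Q * σ ^ degS α) * (y - e) ^ degS α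
        * Real.exp ((betaS a α) * y) = 0 := by
    intro y hy
    have hwy := (hw y hy).1
    have := h y (hsub'' hy)
    unfold ghat at this
    rw [← this]
    apply Finset.sum_congr rfl
    intro α _
    rw [hwy, mul_pow]
    ring
  have hcoeffs := expPoly_indep_interval Q.support degS (betaS a)
    (fun α => coeff α Q * σ ^ degS α) e hu'v'
    (fun α _ α' _ _ hβ => betaS_inj hlin hβ) hzero
  obtain ⟨α, hα⟩ := Finset.nonempty_iff_ne_empty.mpr
    (fun hsupp => hQ (MvPolynomial.support_eq_empty.mp hsupp))
  have hσne : σ ^ degS α ≠ 0 := by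
    rcases hσ with rfl | rfl
    · simp
    · simp [pow_ne_zero]
  have := hcoeffs α hα
  have hcoeff0 : coeff α Q = 0 := by
    rcases mul_eq_zero.mp this with h' | h'
    · exact h'
    · exact absurd h' hσne
  exact (MvPolynomial.mem_support_iff.mp hα) hcoeff0

-- basis of ℝ over ℚ
def bIdx : Set ℝ := Module.Basis.ofVectorSpaceIndex ℚ ℝ

lemma bIdx_li : LinearIndependent ℚ ((↑) : bIdx → ℝ) :=
  Module.Basis.ofVectorSpaceIndex.linearIndependent ℚ ℝ

lemma bIdx_card : #bIdx = continuum := by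
  unfold bIdx
  rw [(Module.Basis.ofVectorSpace ℚ ℝ).mk_eq_rank'', Real.rank_rat_real]


-- === new material ===

def cF (a : ℝ) : Set.Icc (0:ℝ) 1 → ℝ := fun x => wK ↑x * Real.exp (a * ↑x)

lemma ghat_cont {m : ℕ} (a : Fin m → ℝ) (Q : MvPolynomial (Fin m) ℝ) :
    Continuous (ghat a Q) := by
  apply continuous_finset_sum
  intro α _
  exact (continuous_const.mul ((wK_cont).pow _)).mul
    ((continuous_const.mul continuous_id).rexp)

lemma ghat_zero_on_KK {m : ℕ} (a : Fin m → ℝ) (Q : MvPolynomial (Fin m) ℝ)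
    (hcc : constantCoeff Q = 0) {x : ℝ} (hx : x ∈ KK) : ghat a Q x = 0 := by
  unfold ghat
  apply Finset.sum_eq_zero
  intro α hα
  have hα0 : α ≠ 0 := by
    intro h
    rw [h] at hα
    have := MvPolynomial.mem_support_iff.mp hα
    rw [← MvPolynomial.constantCoeff_eq] at this
    exact this hcc
  have hdeg : 0 < degS α := by
    by_contra h
    push_neg at h
    have hz : degS α = 0 := Nat.le_zero.mp h
    apply hα0
    ext j
    have := Finset.sum_eq_zero_iff_of_nonneg (fun j _ => Nat.zero_le _) |>.mp hz j (Finset.mem_univ j)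
    simpa using this
  rw [wK_zero (KK_K' hx), zero_pow (by omega)]
  ring

lemma zero_not_in_D0 : (0:ℝ) ∉ D0 := by
  rintro ⟨m, a, h⟩
  rw [abs_zero] at h
  exact absurd h.symm (ne_of_gt (theta_pos m a))

lemma composite_not_RI {n mm : ℕ} (J : Fin n → Set ℝ) (hJ : Function.Injective J)
    (a : Fin mm → ℝ) (hlin : LinearIndependent ℚ a)
    (P : MvPolynomial (Fin n) ℝ) (hP : P ≠ 0) (hccP : constantCoeff P = 0)
    (Q : MvPolynomial (Fin mm) ℝ) (hQ : Q ≠ 0) (hccQ : constantCoeff Q = 0) :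
    ¬ RiemannIntegrableI (fun x : Set.Icc (0:ℝ) 1 =>
        eval (fun i => fJ (J i) (eval (fun j => cF (a j) x) Q)) P) := by
  set rr : ℝ → ℝ := fun t => eval (fun i => fJ (J i) t) P with hrr
  set comp : Set.Icc (0:ℝ) 1 → ℝ := fun x =>
    eval (fun i => fJ (J i) (eval (fun j => cF (a j) x) Q)) P with hcomp
  have hcompeq : ∀ x : Set.Icc (0:ℝ) 1, comp x = rr (ghat a Q ↑x) := by
    intro x
    have hinner : (eval (fun j => cF (a j) x) Q) = ghat a Q ↑x := by
      rw [← ghat_eq a Q ↑x]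
      rfl
    rw [hcomp, hrr]
    simp only [hinner]
  obtain ⟨δ, hδ, hB⟩ := propB J hJ P hP
  -- discontinuity at every point of KK ∩ Ioo 0 1
  have hdisc : ∀ x₀ : ℝ, ∀ hx₀ : x₀ ∈ KK ∩ Ioo 0 1,
      ¬ ContinuousAt comp ⟨x₀, ⟨hx₀.2.1.le, hx₀.2.2.le⟩⟩ := by
    intro x₀ hx₀ hCA
    set x₀I : Set.Icc (0:ℝ) 1 := ⟨x₀, ⟨hx₀.2.1.le, hx₀.2.2.le⟩⟩ with hx₀I
    have hg0 : ghat a Q x₀ = 0 := ghat_zero_on_KK a Q hccQ hx₀.1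
    have hcx₀ : comp x₀I = 0 := by
      rw [hcompeq x₀I]
      show rr (ghat a Q x₀) = 0
      rw [hg0, hrr]
      exact r_zero_off J P hccP zero_not_in_D0
    obtain ⟨η, hη, hball⟩ := Metric.continuousAt_iff.mp hCA δ hδ
    set η' := min η (min x₀ (1 - x₀)) with hη'
    have hη'pos : 0 < η' := lt_min hη (lt_min hx₀.2.1 (by linarith [hx₀.2.2]))
    have hη'x : η' ≤ x₀ := le_trans (min_le_right _ _) (min_le_left _ _)
    have hη'1 : η' ≤ 1 - x₀ := le_trans (min_le_right _ _) (min_le_right _ _)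
    have hsubN : Ioo (x₀ - η') (x₀ + η') ⊆ Ioo (0:ℝ) 1 := by
      intro y hy
      exact ⟨by linarith [hy.1], by linarith [hy.2]⟩
    obtain ⟨y₁, hy₁N, hy₁ne⟩ := ghat_ne hlin hQ
      (show x₀ - η' < x₀ + η' by linarith) hsubN
    set s := ghat a Q y₁ with hs
    -- find t strictly between 0 and s with |rr t| = δ
    have hkey : ∃ t, t ∈ uIcc (0:ℝ) s ∧ |rr t| = δ := by
      rcases lt_or_gt_of_ne hy₁ne with hneg | hpos
      · obtain ⟨t, htmem, htval⟩ := (hB (-s) (by linarith)).2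
        refine ⟨t, ?_, htval⟩
        rw [neg_neg] at htmem
        apply mem_uIcc.mpr
        right
        exact ⟨htmem.1.le, htmem.2.le⟩
      · obtain ⟨t, htmem, htval⟩ := (hB s hpos).1
        refine ⟨t, ?_, htval⟩
        apply mem_uIcc.mpr
        left
        exact ⟨htmem.1.le, htmem.2.le⟩
    obtain ⟨t, htmem, htval⟩ := hkey
    -- intermediate value theorem
    have hIVT : ∃ y₂ ∈ uIcc x₀ y₁, ghat a Q y₂ = t := by
      have hcont : ContinuousOn (ghat a Q) (uIcc x₀ y₁) := (ghat_cont a Q).continuousOn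
      have := intermediate_value_uIcc hcont
      apply this
      rw [hg0, ← hs] at *
      exact htmem
    obtain ⟨y₂, hy₂mem, hy₂val⟩ := hIVT
    have hy₂N : y₂ ∈ Ioo (x₀ - η') (x₀ + η') := by
      have hOC : OrdConnected (Ioo (x₀ - η') (x₀ + η')) := ordConnected_Ioo
      exact hOC.uIcc_subset (⟨by linarith, by linarith⟩ : x₀ ∈ Ioo (x₀ - η') (x₀ + η')) hy₁N hy₂mem
    have hy₂01 : y₂ ∈ Set.Icc (0:ℝ) 1 := Ioo_subset_Icc_self (hsubN hy₂N)
    set y₂I : Set.Icc (0:ℝ) 1 := ⟨y₂, hy₂01⟩ with hy₂I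
    have hdist : dist y₂I x₀I < η := by
      rw [Subtype.dist_eq]
      show dist y₂ x₀ < η
      rw [Real.dist_eq, abs_lt]
      constructor
      · linarith [hy₂N.1, min_le_left η (min x₀ (1 - x₀))]
      · linarith [hy₂N.2, min_le_left η (min x₀ (1 - x₀))]
    have := hball hdist
    rw [hcx₀, dist_zero_right, Real.norm_eq_abs] at this
    rw [hcompeq y₂I] at this
    show False
    have : |rr (ghat a Q y₂)| < δ := this
    rw [hy₂val, htval] at this
    exact absurd this (lt_irrefl δ)
  -- measure contradiction
  intro hRI
  have hsub : KK ∩ Ioo 0 1 ⊆ Subtype.val '' {x : Set.Icc (0:ℝ) 1 | ¬ ContinuousAt comp x} := by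
    intro x₀ hx₀
    exact ⟨⟨x₀, ⟨hx₀.2.1.le, hx₀.2.2.le⟩⟩, hdisc x₀ hx₀, rfl⟩
  have hmeas : volume (KK ∩ Ioo 0 1) ≤
      volume (Subtype.val '' {x : Set.Icc (0:ℝ) 1 | ¬ ContinuousAt comp x}) :=
    measure_mono hsub
  rw [hRI.2] at hmeas
  exact KK_pos (le_antisymm hmeas zero_le)



lemma cF_inj : Function.Injective cF := by
  intro a a' h
  have hmem : (1/2:ℝ) ∈ Set.Icc (0:ℝ) 1 := by norm_num
  have hx : cF a ⟨1/2, hmem⟩ = cF a' ⟨1/2, hmem⟩ := by rw [h]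
  unfold cF at hx
  simp only at hx
  have hw : wK ((⟨1/2, hmem⟩ : Set.Icc (0:ℝ) 1) : ℝ) = wK (1/2) := rfl
  have hwpos : 0 < wK ((⟨1/2, hmem⟩ : Set.Icc (0:ℝ) 1) : ℝ) := by rw [hw]; exact wK_half_pos
  have hexp : Real.exp (a * (1/2:ℝ)) = Real.exp (a' * (1/2:ℝ)) :=
    mul_left_cancel₀ (ne_of_gt hwpos) hx
  have := Real.exp_eq_exp.mp hexp
  linarith


end

/-- There exist a set `S ⊆ ℝ^ℝ` of cardinality `2^𝔠`, algebraically independent over `ℝ`,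
all of whose generated (non-unital) algebra consists of functions Riemann integrable
(in particular bounded) on every compact interval `[α,β]`, and a set `C` of continuous
functions on `[0,1]` of cardinality `𝔠`, algebraically independent over `ℝ`, such that
for every nonzero element `r` of the algebra generated by `S` and every nonzero element
`c` of the algebra generated by `C`, the composite `r ∘ c` is not Riemann integrable
on `[0,1]`. -/
theorem composite_not_riemann_integrable_algebrability :
    ∃ (S : Set (ℝ → ℝ)) (C : Set (Set.Icc (0:ℝ) 1 → ℝ)),
      (#S) = 2 ^ Cardinal.continuum ∧
      (#C) = Cardinal.continuum ∧
      (∀ c ∈ C, Continuous c) ∧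
      -- S is algebraically independent over ℝ
      (∀ (n : ℕ) (f : Fin n → (ℝ → ℝ)), Function.Injective f → (∀ i, f i ∈ S) →
        ∀ P : MvPolynomial (Fin n) ℝ, P ≠ 0 → MvPolynomial.constantCoeff P = 0 →
          (fun x : ℝ => MvPolynomial.eval (fun i => f i x) P) ≠ 0) ∧
      -- C is algebraically independent over ℝ
      (∀ (n : ℕ) (c : Fin n → (Set.Icc (0:ℝ) 1 → ℝ)), Function.Injective c →
        (∀ i, c i ∈ C) →
        ∀ Q : MvPolynomial (Fin n) ℝ, Q ≠ 0 → MvPolynomial.constantCoeff Q = 0 →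
          (fun x : Set.Icc (0:ℝ) 1 => MvPolynomial.eval (fun i => c i x) Q) ≠ 0) ∧
      -- every element of the algebra generated by S is bounded on every compact interval
      -- and its restriction to every interval [α,β] is Riemann integrable
      (∀ (n : ℕ) (f : Fin n → (ℝ → ℝ)), Function.Injective f → (∀ i, f i ∈ S) →
        ∀ P : MvPolynomial (Fin n) ℝ, MvPolynomial.constantCoeff P = 0 →
          ∀ α β : ℝ,
            RiemannIntegrableOn (fun x : ℝ => MvPolynomial.eval (fun i => f i x) P) α β) ∧
      -- for r in the algebra generated by S and c in the algebra generated by C,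
      -- both nonzero, the composite r ∘ c is not Riemann integrable on [0,1]
      (∀ (n m : ℕ) (f : Fin n → (ℝ → ℝ)) (c : Fin m → (Set.Icc (0:ℝ) 1 → ℝ)),
        Function.Injective f → (∀ i, f i ∈ S) →
        Function.Injective c → (∀ j, c j ∈ C) →
        ∀ P : MvPolynomial (Fin n) ℝ, P ≠ 0 → MvPolynomial.constantCoeff P = 0 →
        ∀ Q : MvPolynomial (Fin m) ℝ, Q ≠ 0 → MvPolynomial.constantCoeff Q = 0 →
          ¬ RiemannIntegrableI (fun x : Set.Icc (0:ℝ) 1 =>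
              MvPolynomial.eval
                (fun i => f i (MvPolynomial.eval (fun j => c j x) Q)) P)) := by
  classical
  refine ⟨Set.range fJ, cF '' bIdx, ?_, ?_, ?_, ?_, ?_, ?_, ?_⟩
  · -- cardinality of S
    rw [Cardinal.mk_range_eq fJ fJ_inj, Cardinal.mk_set, Cardinal.mk_real]
  · -- cardinality of C
    rw [Cardinal.mk_image_eq_of_injOn cF bIdx cF_inj.injOn, bIdx_card]
  · -- continuity of elements of C
    rintro c ⟨a, -, rfl⟩
    unfold cF
    exact (wK_cont.comp continuous_subtype_val).mul
      ((continuous_const.mul continuous_subtype_val).rexp)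
  · -- S is algebraically independent
    intro n f hfinj hfS P hP hcc
    choose J hJ using fun i => (hfS i : f i ∈ Set.range fJ)
    have hJinj : Function.Injective J := fun i j h => hfinj (by rw [← hJ i, ← hJ j, h])
    obtain ⟨δ, hδ, hB⟩ := propB J hJinj P hP
    obtain ⟨t, -, htval⟩ := (hB 1 one_pos).1
    intro h0
    have h1 : MvPolynomial.eval (fun i => f i t) P = 0 := congrFun h0 t
    rw [show (fun i => f i t) = fun i => fJ (J i) t from funext (fun i => by rw [← hJ i])] at h1
    rw [h1, abs_zero] at htval
    exact absurd htval.symm (ne_of_gt hδ)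
  · -- C is algebraically independent
    intro mm c hcinj hcC Q hQ hcc
    choose b hb hcb using fun j => (hcC j : c j ∈ cF '' bIdx)
    have hpickinj : Function.Injective (fun j => (⟨b j, hb j⟩ : bIdx)) := by
      intro i j h
      apply hcinj
      rw [← hcb i, ← hcb j]
      exact congrArg cF (congrArg Subtype.val h)
    have hlin : LinearIndependent ℚ b := bIdx_li.comp _ hpickinj
    obtain ⟨y, hy, hyne⟩ := ghat_ne hlin hQ one_pos (subset_refl _)
    intro h0
    apply hyne
    have h1 : MvPolynomial.eval (fun j => c j ⟨y, Set.Ioo_subset_Icc_self hy⟩) Q = 0 :=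
      congrFun h0 _
    rw [show (fun j => c j (⟨y, Set.Ioo_subset_Icc_self hy⟩ : Set.Icc (0:ℝ) 1))
        = fun j => cF (b j) ⟨y, Set.Ioo_subset_Icc_self hy⟩ from
      funext (fun j => by rw [← hcb j])] at h1
    rw [← h1, ← ghat_eq b Q y]
    rfl
  · -- Riemann integrability on compact intervals
    intro n f hfinj hfS P hcc α β
    choose J hJ using fun i => (hfS i : f i ∈ Set.range fJ)
    have hthis := S_integrable J P hcc α β
    have heq : (fun x : ℝ => MvPolynomial.eval (fun i => f i x) P)
        = fun x : ℝ => MvPolynomial.eval (fun i => fJ (J i) x) P :=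
      funext (fun x => by
        rw [show (fun i => f i x) = fun i => fJ (J i) x from
          funext fun i => (congrFun (hJ i) x).symm])
    rw [heq]
    exact hthis
  · -- the composite is not Riemann integrable
    intro n mm f c hfinj hfS hcinj hcC P hP hccP Q hQ hccQ
    choose J hJ using fun i => (hfS i : f i ∈ Set.range fJ)
    have hJinj : Function.Injective J := fun i j h => hfinj (by rw [← hJ i, ← hJ j, h])
    choose b hb hcb using fun j => (hcC j : c j ∈ cF '' bIdx)
    have hpickinj : Function.Injective (fun j => (⟨b j, hb j⟩ : bIdx)) := by
      intro i j h
      apply hcinj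
      rw [← hcb i, ← hcb j]
      exact congrArg cF (congrArg Subtype.val h)
    have hlin : LinearIndependent ℚ b := bIdx_li.comp _ hpickinj
    have hmain := composite_not_RI J hJinj b hlin P hP hccP Q hQ hccQ
    have heq : (fun x : Set.Icc (0:ℝ) 1 => MvPolynomial.eval
        (fun i => f i (MvPolynomial.eval (fun j => c j x) Q)) P)
        = fun x : Set.Icc (0:ℝ) 1 => MvPolynomial.eval
          (fun i => fJ (J i) (MvPolynomial.eval (fun j => cF (b j) x) Q)) P :=
      funext (fun x => by
        rw [show (fun j => c j x) = fun j => cF (b j) x from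
          funext fun j => (congrFun (hcb j) x).symm]
        rw [show (fun i => f i (MvPolynomial.eval (fun j => cF (b j) x) Q))
            = fun i => fJ (J i) (MvPolynomial.eval (fun j => cF (b j) x) Q) from
          funext fun i => (congrFun (hJ i) _).symm])
    rw [heq]
    exact hmain
end

section
/- There exist a vector space V of dimension 2^𝔠 over ℝ consisting of functions from ℝ to ℝ whose restriction to every compact interval is Riemann integrable, and a vector space W of dimension 𝔠 over ℝ consisting of continuous functions from [0,1] to ℝ, such that for every f ∈ V \ {0} and every g ∈ W \ {0}, the composite f ∘ g : [0,1] → ℝ is not Riemann integrable on [0,1]. -/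
open MeasureTheory Set Cardinal

noncomputable section

namespace CNRI

def bit (b : Bool) : ℝ := if b then 1 else 0

lemma bit_nonneg (b : Bool) : 0 ≤ bit b := by unfold bit; split <;> norm_num
lemma bit_le_one (b : Bool) : bit b ≤ 1 := by unfold bit; split <;> norm_num

lemma qterm_nonneg (b : Bool) (n : ℕ) : 0 ≤ bit b * (4⁻¹:ℝ)^n :=
  mul_nonneg (bit_nonneg b) (by positivity)

lemma qterm_le (b : Bool) (n : ℕ) : bit b * (4⁻¹:ℝ)^n ≤ (4⁻¹:ℝ)^n := by
  calc bit b * (4⁻¹:ℝ)^n ≤ 1 * (4⁻¹)^n :=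
        mul_le_mul_of_nonneg_right (bit_le_one _) (by positivity)
    _ = (4⁻¹:ℝ)^n := one_mul _

lemma geom_summable : Summable (fun n : ℕ => (4⁻¹:ℝ)^(n+1)) :=
  (summable_nat_add_iff 1).2 (summable_geometric_of_lt_one (by norm_num) (by norm_num))

lemma qsummable (a : ℕ → Bool) : Summable (fun n => bit (a n) * (4⁻¹:ℝ)^(n+1)) :=
  Summable.of_nonneg_of_le (fun n => qterm_nonneg _ _) (fun n => qterm_le _ _) geom_summable

lemma geom_tail : ∑' n : ℕ, (4⁻¹:ℝ)^(n+1) = 3⁻¹ := by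
  have h : ∑' n : ℕ, (4⁻¹:ℝ)^n = (1 - 4⁻¹)⁻¹ := tsum_geometric_of_lt_one (by norm_num) (by norm_num)
  have h2 : ∑' n : ℕ, (4⁻¹:ℝ)^(n+1) = 4⁻¹ * ∑' n : ℕ, (4⁻¹:ℝ)^n := by
    rw [← tsum_mul_left]; congr 1; ext n; ring
  rw [h2, h]; norm_num

def qmap (a : ℕ → Bool) : ℝ := ∑' n, bit (a n) * (4⁻¹:ℝ)^(n+1)

lemma qmap_nonneg (a : ℕ → Bool) : 0 ≤ qmap a :=
  tsum_nonneg (fun n => qterm_nonneg _ _)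

lemma qmap_le (a : ℕ → Bool) : qmap a ≤ 3⁻¹ := by
  rw [← geom_tail]
  exact Summable.tsum_le_tsum (fun n => qterm_le _ _) (qsummable a) geom_summable

lemma qmap_tail_le (a : ℕ → Bool) (k : ℕ) :
    ∑' n : ℕ, bit (a (n + k)) * (4⁻¹:ℝ)^(n + k + 1) ≤ 3⁻¹ * (4⁻¹)^k := by
  have hs1 : Summable (fun n : ℕ => bit (a (n + k)) * (4⁻¹:ℝ)^(n + k + 1)) :=
    (summable_nat_add_iff (f := fun n => bit (a n) * (4⁻¹:ℝ)^(n+1)) k).2 (qsummable a)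
  have hs2 : Summable (fun n : ℕ => (4⁻¹:ℝ)^(n + k + 1)) :=
    (summable_nat_add_iff (f := fun n => (4⁻¹:ℝ)^(n+1)) k).2 geom_summable
  have h1 : ∑' n : ℕ, bit (a (n + k)) * (4⁻¹:ℝ)^(n + k + 1)
      ≤ ∑' n : ℕ, (4⁻¹:ℝ)^(n + k + 1) :=
    Summable.tsum_le_tsum (fun n => qterm_le _ _) hs1 hs2
  have h2 : ∑' n : ℕ, (4⁻¹:ℝ)^(n + k + 1) = (∑' n : ℕ, (4⁻¹:ℝ)^(n + 1)) * (4⁻¹)^k := by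
    rw [← tsum_mul_right]; congr 1; ext n; ring
  rw [h2, geom_tail] at h1; exact h1

lemma qmap_split (a : ℕ → Bool) (k : ℕ) :
    qmap a = (∑ i ∈ Finset.range k, bit (a i) * (4⁻¹:ℝ)^(i+1))
      + ∑' n : ℕ, bit (a (n + k)) * (4⁻¹:ℝ)^(n + k + 1) := by
  unfold qmap
  rw [← (qsummable a).sum_add_tsum_nat_add k]

lemma qmap_injective : Function.Injective qmap := by
  intro a b hab
  by_contra hne
  have hne' : ∃ n, a n ≠ b n := by
    by_contra h; push_neg at h; exact hne (funext h)
  classical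
  set k := Nat.find hne' with hkdef
  have hk : a k ≠ b k := Nat.find_spec hne'
  have hlt : ∀ i < k, a i = b i := fun i hi => by
    have := Nat.find_min hne' hi; simpa using this
  have key : ∀ x y : ℕ → Bool, x k = true → y k = false →
      (∀ i < k, x i = y i) → qmap y < qmap x := by
    intro x y hx hy hxy
    have hsum : (∑ i ∈ Finset.range (k+1), bit (x i) * (4⁻¹:ℝ)^(i+1))
        = (∑ i ∈ Finset.range (k+1), bit (y i) * (4⁻¹:ℝ)^(i+1)) + (4⁻¹)^(k+1) := by
      rw [Finset.sum_range_succ, Finset.sum_range_succ]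
      have hco : ∀ i ∈ Finset.range k, bit (x i) * (4⁻¹:ℝ)^(i+1) = bit (y i) * (4⁻¹)^(i+1) := by
        intro i hi; rw [hxy i (Finset.mem_range.1 hi)]
      rw [Finset.sum_congr rfl hco, hx, hy]
      unfold bit; simp
    have h1 : qmap x ≥ (∑ i ∈ Finset.range (k+1), bit (x i) * (4⁻¹:ℝ)^(i+1)) := by
      rw [qmap_split x (k+1)]
      have h0 : 0 ≤ ∑' n : ℕ, bit (x (n + (k+1))) * (4⁻¹:ℝ)^(n + (k+1) + 1) :=
        tsum_nonneg (fun n => qterm_nonneg _ _)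
      linarith
    have h2 : qmap y ≤ (∑ i ∈ Finset.range (k+1), bit (y i) * (4⁻¹:ℝ)^(i+1))
        + 3⁻¹ * (4⁻¹)^(k+1) := by
      rw [qmap_split y (k+1)]
      have := qmap_tail_le y (k+1)
      linarith
    have h3 : (3⁻¹:ℝ) * (4⁻¹)^(k+1) < (4⁻¹)^(k+1) := by
      have h4 : (0:ℝ) < (4⁻¹)^(k+1) := by positivity
      linarith
    linarith
  cases ha : a k with
  | true =>
    have hb : b k = false := by
      cases hbk : b k
      · rfl
      · exact absurd (ha.trans hbk.symm) hk
    exact absurd hab (ne_of_gt (key a b ha hb hlt))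
  | false =>
    have hb : b k = true := by
      cases hbk : b k
      · exact absurd (ha.trans hbk.symm) hk
      · rfl
    exact absurd hab (ne_of_lt (key b a hb ha (fun i hi => (hlt i hi).symm)))

lemma qmap_continuous : Continuous qmap := by
  apply continuous_tsum (F := ℝ)
    (fun n => ((continuous_of_discreteTopology (f := bit)).comp (continuous_apply n)).mul
      continuous_const)
    geom_summable
  intro n a
  show ‖bit (a n) * (4⁻¹:ℝ)^(n+1)‖ ≤ (4⁻¹:ℝ)^(n+1)
  rw [Real.norm_eq_abs, abs_of_nonneg (qterm_nonneg _ _)]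
  exact qterm_le _ _

def Q : Set ℝ := Set.range qmap

lemma Q_compact : IsCompact Q := isCompact_range qmap_continuous

lemma Q_subset : Q ⊆ Icc 0 3⁻¹ := by
  rintro x ⟨a, rfl⟩; exact ⟨qmap_nonneg a, qmap_le a⟩

lemma Q_cover (k : ℕ) :
    Q ⊆ ⋃ s : Fin k → Bool,
      Icc (∑ i : Fin k, bit (s i) * (4⁻¹:ℝ)^(i.1+1))
          ((∑ i : Fin k, bit (s i) * (4⁻¹:ℝ)^(i.1+1)) + 3⁻¹ * 4⁻¹^k) := by
  rintro x ⟨a, rfl⟩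
  apply mem_iUnion.2
  refine ⟨fun i => a i.1, ?_⟩
  have hps : (∑ i : Fin k, bit (a i.1) * (4⁻¹:ℝ)^(i.1+1))
      = ∑ i ∈ Finset.range k, bit (a i) * (4⁻¹:ℝ)^(i+1) := by
    rw [Finset.sum_range fun i => bit (a i) * (4⁻¹:ℝ)^(i+1)]
  have hsplit := qmap_split a k
  have htail0 : 0 ≤ ∑' n : ℕ, bit (a (n + k)) * (4⁻¹:ℝ)^(n + k + 1) :=
    tsum_nonneg (fun n => qterm_nonneg _ _)
  have htail := qmap_tail_le a k
  constructor
  · rw [hps]; linarith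
  · rw [hps]; linarith

lemma Q_volume : volume Q = 0 := by
  have key : ∀ k : ℕ, volume Q ≤ ENNReal.ofReal (3⁻¹ * 2⁻¹^k) := by
    intro k
    have h1 : volume Q ≤ ∑' s : Fin k → Bool,
        volume (Icc (∑ i : Fin k, bit (s i) * (4⁻¹:ℝ)^(i.1+1))
          ((∑ i : Fin k, bit (s i) * (4⁻¹:ℝ)^(i.1+1)) + 3⁻¹ * 4⁻¹^k)) :=
      le_trans (measure_mono (Q_cover k)) (measure_iUnion_le _)
    have h2 : ∀ s : Fin k → Bool,
        volume (Icc (∑ i : Fin k, bit (s i) * (4⁻¹:ℝ)^(i.1+1))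
          ((∑ i : Fin k, bit (s i) * (4⁻¹:ℝ)^(i.1+1)) + 3⁻¹ * 4⁻¹^k))
        = ENNReal.ofReal (3⁻¹ * 4⁻¹^k) := by
      intro s; rw [Real.volume_Icc]; congr 1; ring
    calc volume Q ≤ _ := h1
      _ = ∑ s : Fin k → Bool, ENNReal.ofReal (3⁻¹ * 4⁻¹^k) := by
          rw [tsum_fintype]; exact Finset.sum_congr rfl (fun s _ => h2 s)
      _ = (Fintype.card (Fin k → Bool)) * ENNReal.ofReal (3⁻¹ * 4⁻¹^k) := by
          rw [Finset.sum_const, Finset.card_univ, nsmul_eq_mul]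
      _ = (2^k : ℕ) * ENNReal.ofReal (3⁻¹ * 4⁻¹^k) := by
          rw [Fintype.card_fun, Fintype.card_bool, Fintype.card_fin]
      _ ≤ ENNReal.ofReal (3⁻¹ * 2⁻¹^k) := by
          rw [show ((2^k : ℕ) : ENNReal) = ENNReal.ofReal ((2:ℝ)^k) by
                rw [ENNReal.ofReal_pow (by norm_num)]; norm_num,
             ← ENNReal.ofReal_mul (by positivity)]
          apply ENNReal.ofReal_le_ofReal
          rw [show (2:ℝ)^k * (3⁻¹ * 4⁻¹^k) = 3⁻¹ * (2 * 4⁻¹)^k by rw [mul_pow]; ring]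
          norm_num
  have htend : Filter.Tendsto (fun k : ℕ => ENNReal.ofReal (3⁻¹ * 2⁻¹^k))
      Filter.atTop (nhds 0) := by
    rw [show (0 : ENNReal) = ENNReal.ofReal 0 by simp]
    apply ENNReal.tendsto_ofReal
    have := (tendsto_pow_atTop_nhds_zero_of_lt_one (by norm_num : (0:ℝ) ≤ 2⁻¹)
      (by norm_num)).const_mul (3⁻¹:ℝ)
    simpa using this
  exact le_antisymm (ge_of_tendsto' htend (fun k => key k) |>.trans_eq rfl) zero_le


/-! ### The null closed set Δ -/

lemma volume_affine_image_null (a b : ℝ) (ha : a ≠ 0) {s : Set ℝ} (h : volume s = 0) :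
    volume ((fun x => a * x + b) '' s) = 0 := by
  have himg : (fun x => a * x + b) '' s = (fun y => y - b) ⁻¹' ((fun z => a⁻¹ * z) ⁻¹' s) := by
    ext y
    simp only [mem_image, mem_preimage]
    constructor
    · rintro ⟨x, hx, rfl⟩
      have : a⁻¹ * (a * x + b - b) = x := by field_simp; ring
      rwa [this]
    · intro hy
      exact ⟨a⁻¹ * (y - b), hy, by field_simp; ring⟩
  rw [himg]
  have h2 : volume ((fun z : ℝ => a⁻¹ * z) ⁻¹' s) = 0 := by
    rw [Real.volume_preimage_mul_left (inv_ne_zero ha) s, h, mul_zero]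
  have h3 : (fun y : ℝ => y - b) = (fun y : ℝ => y + (-b)) := by funext y; ring
  rw [h3]
  rw [measure_preimage_add_right volume (-b) _]
  exact h2

def aff (k : ℕ) (q : ℝ) : ℝ := (2⁻¹:ℝ)^(k+1) * q + (2⁻¹:ℝ)^(k+1)

lemma aff_injective (k : ℕ) : Function.Injective (aff k) := by
  intro x y h
  unfold aff at h
  have hpos : (0:ℝ) < (2⁻¹:ℝ)^(k+1) := by positivity
  nlinarith [h]

def E (k : ℕ) : Set ℝ := aff k '' Q

lemma E_subset (k : ℕ) : E k ⊆ Icc ((2⁻¹:ℝ)^(k+1)) ((1+3⁻¹) * (2⁻¹:ℝ)^(k+1)) := by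
  rintro x ⟨q, hq, rfl⟩
  have hq' := Q_subset hq
  have h0 : (0:ℝ) ≤ q := hq'.1
  have h1 : q ≤ 3⁻¹ := hq'.2
  have hpos : (0:ℝ) < (2⁻¹:ℝ)^(k+1) := by positivity
  unfold aff
  constructor <;> nlinarith

lemma E_pos (k : ℕ) : E k ⊆ Ioi 0 := by
  intro x hx
  have := (E_subset k hx).1
  have hpos : (0:ℝ) < (2⁻¹:ℝ)^(k+1) := by positivity
  simp only [mem_Ioi]; linarith

lemma E_upper (k : ℕ) : (1+3⁻¹) * (2⁻¹:ℝ)^(k+1) < (2⁻¹:ℝ)^k := by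
  have hpos : (0:ℝ) < (2⁻¹:ℝ)^k := by positivity
  have : (2⁻¹:ℝ)^(k+1) = 2⁻¹ * 2⁻¹^k := by ring
  rw [this]; nlinarith

lemma E_lt (k : ℕ) {x : ℝ} (hx : x ∈ E k) : x < (2⁻¹:ℝ)^k :=
  lt_of_le_of_lt (E_subset k hx).2 (E_upper k)

lemma E_disjoint {j k : ℕ} (hjk : j ≠ k) : Disjoint (E j) (E k) := by
  wlog h : j < k generalizing j k
  · exact (this hjk.symm (by omega)).symm
  rw [Set.disjoint_iff_inter_eq_empty]
  ext x
  simp only [mem_inter_iff, mem_empty_iff_false, iff_false, not_and]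
  intro hxj hxk
  have h1 : x < (2⁻¹:ℝ)^k := E_lt k hxk
  have h2 : (2⁻¹:ℝ)^(j+1) ≤ x := (E_subset j hxj).1
  have h3 : (2⁻¹:ℝ)^k ≤ (2⁻¹:ℝ)^(j+1) := by
    apply pow_le_pow_of_le_one (by norm_num) (by norm_num); omega
  linarith

lemma E_compact (k : ℕ) : IsCompact (E k) :=
  Q_compact.image (by unfold aff; fun_prop)

lemma E_volume (k : ℕ) : volume (E k) = 0 :=
  volume_affine_image_null _ _ (by positivity) Q_volume

def Δpos : Set ℝ := ⋃ k, E k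

def ΔS : Set ℝ := {x | x = 0 ∨ |x| ∈ Δpos}


lemma negE_volume (k : ℕ) : volume ((fun x : ℝ => -x) '' E k) = 0 := by
  have h : (fun x : ℝ => -x) '' E k = (fun x : ℝ => (-1) * x + 0) '' E k := by
    apply image_congr; intro a _; ring
  rw [h]
  exact volume_affine_image_null (-1) 0 (by norm_num) (E_volume k)

lemma ΔS_subset_big : ΔS ⊆ {(0:ℝ)} ∪ ⋃ k, (E k ∪ (fun x : ℝ => -x) '' E k) := by
  intro x hx
  rcases hx with h0 | habs
  · exact Or.inl (by simp [h0])
  · right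
    rcases mem_iUnion.1 habs with ⟨k, hk⟩
    apply mem_iUnion.2 ⟨k, ?_⟩
    rcases le_or_gt 0 x with hx0 | hx0
    · left; rwa [abs_of_nonneg hx0] at hk
    · right; rw [abs_of_neg hx0] at hk; exact ⟨-x, hk, by ring⟩

lemma ΔS_volume : volume ΔS = 0 := by
  apply measure_mono_null ΔS_subset_big
  apply measure_union_null (by simp)
  apply measure_iUnion_null
  intro k
  exact measure_union_null (E_volume k) (negE_volume k)

lemma ΔS_closed : IsClosed ΔS := by
  rw [← isOpen_compl_iff]
  rw [isOpen_iff_forall_mem_open]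
  intro x hx
  simp only [mem_compl_iff, ΔS, mem_setOf_eq, not_or] at hx
  obtain ⟨hx0, hxD⟩ := hx
  have habs : 0 < |x| := abs_pos.2 hx0
  obtain ⟨k0, hk0⟩ : ∃ k0 : ℕ, (2⁻¹:ℝ)^k0 < |x| :=
    exists_pow_lt_of_lt_one habs (by norm_num)
  set G : Set ℝ := (⋃ j ∈ Finset.range k0, (E j ∪ (fun x : ℝ => -x) '' E j))
    ∪ Icc (-((2⁻¹:ℝ)^k0)) ((2⁻¹:ℝ)^k0) with hG
  have hGclosed : IsClosed G := by
    apply IsClosed.union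
    · apply Set.Finite.isClosed_biUnion (Finset.finite_toSet _)
      intro j _
      exact ((E_compact j).isClosed).union
        (((E_compact j).image (continuous_neg)).isClosed)
    · exact isClosed_Icc
  have hsub : ΔS ⊆ G := by
    intro y hy
    rcases hy with h0 | habs'
    · right
      have : (0:ℝ) ≤ (2⁻¹:ℝ)^k0 := by positivity
      simp only [h0, mem_Icc]; constructor <;> linarith
    · rcases mem_iUnion.1 habs' with ⟨k, hk⟩
      rcases lt_or_ge k k0 with hkk | hkk
      · left
        apply mem_biUnion (Finset.mem_range.2 hkk)
        rcases le_or_gt 0 y with hy0 | hy0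
        · left; rwa [abs_of_nonneg hy0] at hk
        · right; rw [abs_of_neg hy0] at hk; exact ⟨-y, hk, by ring⟩
      · right
        have h1 : |y| < (2⁻¹:ℝ)^k := E_lt k hk
        have h2 : (2⁻¹:ℝ)^k ≤ (2⁻¹:ℝ)^k0 :=
          pow_le_pow_of_le_one (by norm_num) (by norm_num) hkk
        rw [mem_Icc]
        constructor
        · have := neg_abs_le y; linarith
        · have := le_abs_self y; linarith
  refine ⟨Gᶜ, ?_, hGclosed.isOpen_compl, ?_⟩
  · intro z hz
    simp only [mem_compl_iff]
    exact fun hzΔ => hz (hsub hzΔ)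
  · simp only [mem_compl_iff, hG]
    intro hxG
    rcases hxG with hxU | hxI
    · rcases mem_iUnion.1 hxU with ⟨j, hj⟩
      rcases mem_iUnion.1 hj with ⟨_, hj'⟩
      rcases hj' with hE | hnE
      · have hxpos : 0 < x := E_pos j hE
        exact hxD (mem_iUnion.2 ⟨j, by rwa [abs_of_pos hxpos]⟩)
      · rcases hnE with ⟨y, hy, hxy⟩
        have hypos : 0 < y := E_pos j hy
        simp only at hxy
        have : x = -y := by linarith
        have : |x| = y := by rw [this, abs_of_neg (by linarith)]; ring
        exact hxD (mem_iUnion.2 ⟨j, by rwa [this]⟩)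
    · rw [mem_Icc] at hxI
      have : |x| ≤ (2⁻¹:ℝ)^k0 := abs_le.2 hxI
      linarith


/-! ### The index type and independent-family combinatorics -/

noncomputable instance decMemSet (A : Set ℝ) : DecidablePred (· ∈ A) := Classical.decPred _

abbrev Om : Type := Finset ℝ × Finset ℝ

lemma mk_nat_bool : #(ℕ → Bool) = 𝔠 := by
  rw [Cardinal.mk_arrow]
  simp only [Cardinal.mk_bool, Cardinal.mk_nat, Cardinal.lift_id, Cardinal.lift_aleph0]
  exact Cardinal.two_power_aleph0

lemma mk_Om : #Om = 𝔠 := by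
  rw [Cardinal.mk_prod, Cardinal.mk_finset_of_infinite, Cardinal.mk_real, Cardinal.lift_id]
  exact Cardinal.mul_eq_self Cardinal.aleph0_le_continuum

def omEquiv : Om ≃ (ℕ → Bool) :=
  Classical.choice (Cardinal.eq.1 (mk_Om.trans mk_nat_bool.symm))

def BA (A : Set ℝ) : Set Om := {ω | ω.1.filter (· ∈ A) = ω.2}

lemma pattern (s : Finset (Set ℝ)) (A₀ : Set ℝ) (hA₀ : A₀ ∈ s) :
    ∃ ω : Om, ω ∈ BA A₀ ∧ ∀ A ∈ s, A ≠ A₀ → ω ∉ BA A := by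
  classical
  have hpick : ∀ A ∈ s.erase A₀, ∃ r : ℝ, (r ∈ A ∧ r ∉ A₀) ∨ (r ∈ A₀ ∧ r ∉ A) := by
    intro A hA
    have hne : A ≠ A₀ := Finset.ne_of_mem_erase hA
    by_contra h
    push_neg at h
    apply hne
    ext r
    have := h r
    tauto
  choose pk hpk using hpick
  classical
  set F : Finset ℝ := (s.erase A₀).attach.image (fun A => pk A.1 A.2) with hF
  refine ⟨(F, F.filter (· ∈ A₀)), rfl, ?_⟩
  intro A hA hne hmem
  have hAe : A ∈ s.erase A₀ := Finset.mem_erase.2 ⟨hne, hA⟩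
  have hrF : pk A hAe ∈ F := Finset.mem_image.2 ⟨⟨A, hAe⟩, Finset.mem_attach _ _, rfl⟩
  have hmem' : F.filter (· ∈ A) = F.filter (· ∈ A₀) := hmem
  rcases hpk A hAe with ⟨h1, h2⟩ | ⟨h1, h2⟩
  · have : pk A hAe ∈ F.filter (· ∈ A) := Finset.mem_filter.2 ⟨hrF, h1⟩
    rw [hmem'] at this
    exact h2 (Finset.mem_filter.1 this).2
  · have : pk A hAe ∈ F.filter (· ∈ A₀) := Finset.mem_filter.2 ⟨hrF, h1⟩
    rw [← hmem'] at this
    exact h2 (Finset.mem_filter.1 this).2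

def injPt (k : ℕ) (ω : Om) : ℝ := aff k (qmap (omEquiv ω))

lemma injPt_mem (k : ℕ) (ω : Om) : injPt k ω ∈ E k :=
  ⟨qmap (omEquiv ω), ⟨omEquiv ω, rfl⟩, rfl⟩

lemma injPt_pos (k : ℕ) (ω : Om) : 0 < injPt k ω := mem_Ioi.1 (E_pos k (injPt_mem k ω))

lemma injPt_lt (k : ℕ) (ω : Om) : injPt k ω < (2⁻¹:ℝ)^k := E_lt k (injPt_mem k ω)

lemma injPt_inj {k k' : ℕ} {ω ω' : Om} (h : injPt k ω = injPt k' ω') : k = k' ∧ ω = ω' := by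
  have hkk : k = k' := by
    by_contra hne
    exact (E_disjoint hne).ne_of_mem (injPt_mem k ω) (injPt_mem k' ω') h
  subst hkk
  refine ⟨rfl, ?_⟩
  have h1 := aff_injective k h
  have h2 := qmap_injective h1
  exact omEquiv.injective h2

open Classical in
def piece (x : ℝ) : Om :=
  if h : ∃ p : ℕ × Om, injPt p.1 p.2 = |x| then (Classical.choose h).2 else (∅, ∅)

lemma piece_eq {k : ℕ} {ω : Om} {x : ℝ} (hx : |x| = injPt k ω) : piece x = ω := by
  unfold piece
  have h : ∃ p : ℕ × Om, injPt p.1 p.2 = |x| := ⟨(k, ω), hx.symm⟩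
  rw [dif_pos h]
  have hc := Classical.choose_spec h
  exact (injPt_inj (hc.trans hx)).2

def SA (A : Set ℝ) : Set ℝ := {x | |x| ∈ Δpos ∧ piece x ∈ BA A}

def ind (A : Set ℝ) : ℝ → ℝ := fun x => if x ∈ SA A then 1 else 0

lemma ind_abs_le (A : Set ℝ) (x : ℝ) : |ind A x| ≤ 1 := by
  unfold ind; split <;> norm_num

lemma zero_not_Δpos : (0:ℝ) ∉ Δpos := by
  intro h
  rcases mem_iUnion.1 h with ⟨k, hk⟩
  exact lt_irrefl 0 (mem_Ioi.1 (E_pos k hk))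

lemma ind_zero_of_not_ΔS {A : Set ℝ} {x : ℝ} (hx : x ∉ ΔS) : ind A x = 0 := by
  unfold ind
  rw [if_neg]
  intro hxS
  exact hx (Or.inr hxS.1)

lemma ind_at_zero (A : Set ℝ) : ind A 0 = 0 := by
  unfold ind
  rw [if_neg]
  intro hS
  exact zero_not_Δpos (by simpa using hS.1)

lemma value_lemma (s : Finset (Set ℝ)) (co : Set ℝ → ℝ) (A₀ : Set ℝ) (hA₀ : A₀ ∈ s) :
    ∃ ω₀ : Om, ∀ x : ℝ, |x| ∈ Δpos → piece x = ω₀ →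
      (∑ A ∈ s, co A * ind A x) = co A₀ := by
  obtain ⟨ω₀, hω₀, hnot⟩ := pattern s A₀ hA₀
  refine ⟨ω₀, fun x hxΔ hxp => ?_⟩
  rw [Finset.sum_eq_single A₀]
  · have : ind A₀ x = 1 := by
      unfold ind; rw [if_pos ⟨hxΔ, by rw [hxp]; exact hω₀⟩]
    rw [this, mul_one]
  · intro A hA hne
    have : ind A x = 0 := by
      unfold ind; rw [if_neg]
      intro hS
      exact hnot A hA hne (by rw [← hxp]; exact hS.2)
    rw [this, mul_zero]
  · intro h; exact absurd hA₀ h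

lemma witness (ω₀ : Om) {δ : ℝ} (hδ : 0 < δ) :
    ∃ v : ℝ, 0 < v ∧ v < δ ∧ |v| ∈ Δpos ∧ piece v = ω₀ ∧ |-v| ∈ Δpos ∧ piece (-v) = ω₀ := by
  obtain ⟨k, hk⟩ : ∃ k : ℕ, (2⁻¹:ℝ)^k < δ := exists_pow_lt_of_lt_one hδ (by norm_num)
  have hpos := injPt_pos k ω₀
  have habs : |injPt k ω₀| = injPt k ω₀ := abs_of_pos hpos
  have habs' : |-injPt k ω₀| = injPt k ω₀ := by rw [abs_neg]; exact habs
  refine ⟨injPt k ω₀, hpos, lt_trans (injPt_lt k ω₀) hk, ?_, ?_, ?_, ?_⟩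
  · rw [habs]; exact mem_iUnion.2 ⟨k, injPt_mem k ω₀⟩
  · exact piece_eq habs
  · rw [habs']; exact mem_iUnion.2 ⟨k, injPt_mem k ω₀⟩
  · exact piece_eq habs'


/-! ### Dyadic intervals -/

def dyL (n : ℕ) : ℕ := n.unpair.1
def dyK (n : ℕ) : ℕ := n.unpair.2 % 2^(dyL n)
def dyA (n : ℕ) : ℝ := (dyK n : ℝ) / 2^(dyL n)

def DY (n : ℕ) : Set ℝ := Ioo (dyA n) (dyA n + (2⁻¹:ℝ)^(dyL n))

lemma DY_open (n : ℕ) : IsOpen (DY n) := isOpen_Ioo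

lemma DY_nonempty (n : ℕ) : (DY n).Nonempty := by
  apply nonempty_Ioo.2
  have : (0:ℝ) < (2⁻¹:ℝ)^(dyL n) := by positivity
  linarith

lemma DY_subset (n : ℕ) : DY n ⊆ Ioo 0 1 := by
  intro x hx
  obtain ⟨h1, h2⟩ := hx
  have hA : (0:ℝ) ≤ dyA n := by
    unfold dyA; positivity
  have hk : dyK n < 2^(dyL n) := Nat.mod_lt _ (by positivity)
  have hup : dyA n + (2⁻¹:ℝ)^(dyL n) ≤ 1 := by
    unfold dyA
    have h2pos : (0:ℝ) < (2:ℝ)^(dyL n) := by positivity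
    have hkk : ((dyK n : ℝ) + 1) ≤ (2:ℝ)^(dyL n) := by
      have h := Nat.succ_le_of_lt hk
      calc ((dyK n : ℝ) + 1) = ((dyK n + 1 : ℕ) : ℝ) := by push_cast; ring
        _ ≤ (((2^(dyL n) : ℕ) : ℕ) : ℝ) := by exact_mod_cast h
        _ = (2:ℝ)^(dyL n) := by push_cast; ring
    rw [inv_pow]
    have heq : (dyK n : ℝ)/2^(dyL n) + ((2:ℝ)^(dyL n))⁻¹ = ((dyK n : ℝ)+1)/2^(dyL n) := by
      field_simp
    rw [heq, div_le_one h2pos]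
    exact hkk
  exact ⟨lt_of_le_of_lt hA h1, lt_of_lt_of_le h2 hup⟩

lemma DY_dense {α β : ℝ} (hα : 0 ≤ α) (hβ : β ≤ 1) (hαβ : α < β) (M : ℕ) :
    ∃ n ≥ M, DY n ⊆ Ioo α β := by
  obtain ⟨m₀, hm₀⟩ : ∃ m : ℕ, (2⁻¹:ℝ)^m < (β - α)/3 :=
    exists_pow_lt_of_lt_one (by linarith) (by norm_num)
  set m := max m₀ M with hm
  have hmm : (2⁻¹:ℝ)^m ≤ (2⁻¹:ℝ)^m₀ :=
    pow_le_pow_of_le_one (by norm_num) (by norm_num) (le_max_left _ _)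
  have hsmall : (2⁻¹:ℝ)^m < (β - α)/3 := lt_of_le_of_lt hmm hm₀
  have h2pos : (0:ℝ) < 2^m := by positivity
  have hinv : (2⁻¹:ℝ)^m = ((2:ℝ)^m)⁻¹ := by rw [inv_pow]
  set k : ℕ := Nat.floor (α * 2^m) + 1 with hk
  have hfl : (Nat.floor (α * 2^m) : ℝ) ≤ α * 2^m := Nat.floor_le (by positivity)
  have hfl2 : α * 2^m < Nat.floor (α * 2^m) + 1 := Nat.lt_floor_add_one _
  have hαk : α ≤ (k:ℝ)/2^m := by
    rw [hk]
    push_cast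
    rw [le_div_iff₀ h2pos]
    linarith
  have hkβ : ((k:ℝ) + 1)/2^m < β := by
    rw [hk]
    push_cast
    rw [div_lt_iff₀ h2pos]
    have h3 : 3 * (2⁻¹:ℝ)^m < β - α := by linarith
    have h3' : 3 * ((2:ℝ)^m)⁻¹ < β - α := by rwa [hinv] at h3
    have : (3:ℝ) < (β - α) * 2^m := by
      rw [show (3:ℝ) = 3 * ((2:ℝ)^m)⁻¹ * 2^m by field_simp]
      apply mul_lt_mul_of_pos_right h3' h2pos
    nlinarith
  have hklt : k < 2^m := by
    by_contra hge
    push_neg at hge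
    have : ((2:ℝ)^m : ℝ) ≤ (k:ℝ) := by
      calc ((2:ℝ)^m : ℝ) = ((2^m : ℕ) : ℝ) := by push_cast; ring
        _ ≤ (k:ℝ) := by exact_mod_cast hge
    have hb1 : ((k:ℝ)+1)/2^m > 1 := by
      rw [gt_iff_lt, lt_div_iff₀ h2pos]
      linarith
    linarith [hkβ, hβ]
  refine ⟨Nat.pair m k, le_trans (le_max_right m₀ M) (Nat.left_le_pair m k), ?_⟩
  have hL : dyL (Nat.pair m k) = m := by unfold dyL; rw [Nat.unpair_pair]
  have hK : dyK (Nat.pair m k) = k := by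
    unfold dyK
    rw [hL, Nat.unpair_pair]
    exact Nat.mod_eq_of_lt hklt
  intro y hy
  obtain ⟨h1, h2⟩ := hy
  rw [hL] at h2
  unfold dyA at h1 h2
  rw [hK, hL] at h1 h2
  constructor
  · exact lt_of_le_of_lt hαk h1
  · calc y < (k:ℝ)/2^m + (2⁻¹:ℝ)^m := h2
      _ = ((k:ℝ)+1)/2^m := by rw [hinv]; field_simp
      _ < β := hkβ


/-! ### Greedy construction of disjoint intervals -/

def lenU (n : ℕ) : ℝ := 16⁻¹ * (4⁻¹:ℝ)^n

lemma lenU_pos (n : ℕ) : 0 < lenU n := by unfold lenU; positivity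

def PU (n : ℕ) (W : ℕ → Set ℝ) (ab : ℝ × ℝ) : Prop :=
  ab.1 < ab.2 ∧ ab.2 - ab.1 ≤ lenU n ∧ Icc ab.1 ab.2 ⊆ DY n ∧
    ∀ i < n, Icc ab.1 ab.2 ∩ closure (W i) = ∅

open Classical in
def stepU (W : ℕ → Set ℝ) (n : ℕ) : Set ℝ :=
  if h : ∃ ab, PU n W ab then Ioo (Classical.choose h).1 (Classical.choose h).2 else ∅

def UF : ℕ → ℕ → Set ℝ
  | 0 => fun _ => ∅
  | n+1 => Function.update (UF n) n (stepU (UF n) n)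

def U (n : ℕ) : Set ℝ := UF (n+1) n

lemma UF_eq_U : ∀ m n, n < m → UF m n = U n := by
  intro m
  induction m with
  | zero => intro n hn; omega
  | succ m ih =>
    intro n hn
    by_cases hnm : n = m
    · subst hnm; rfl
    · have : UF (m+1) n = UF m n := by
        show Function.update (UF m) m (stepU (UF m) m) n = UF m n
        exact Function.update_of_ne hnm _ _
      rw [this]
      exact ih n (by omega)

lemma stepU_congr {n : ℕ} {W W' : ℕ → Set ℝ} (h : ∀ i < n, W i = W' i) :
    stepU W n = stepU W' n := by
  have hP : PU n W = PU n W' := by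
    funext ab
    unfold PU
    have : (∀ i < n, Icc ab.1 ab.2 ∩ closure (W i) = ∅)
        ↔ (∀ i < n, Icc ab.1 ab.2 ∩ closure (W' i) = ∅) := by
      constructor <;> intro hh i hi
      · rw [← h i hi]; exact hh i hi
      · rw [h i hi]; exact hh i hi
    rw [eq_iff_iff]
    tauto
  unfold stepU
  classical
  have haux : ∀ (P Q : ℝ × ℝ → Prop), P = Q →
      (if h : ∃ ab, P ab then Ioo (Classical.choose h).1 (Classical.choose h).2 else ∅)
        = (if h : ∃ ab, Q ab then Ioo (Classical.choose h).1 (Classical.choose h).2 else ∅) := by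
    intro P Q hPQ
    subst hPQ
    rfl
  exact haux _ _ hP

lemma U_eq_step (n : ℕ) : U n = stepU U n := by
  have h1 : U n = stepU (UF n) n := by
    show Function.update (UF n) n (stepU (UF n) n) n = _
    exact Function.update_self _ _ _
  rw [h1]
  exact stepU_congr (fun i hi => UF_eq_U n i hi)

lemma U_rep (n : ℕ) : U n = ∅ ∨
    ∃ a b, a < b ∧ U n = Ioo a b ∧ b - a ≤ lenU n ∧ Icc a b ⊆ DY n ∧
      ∀ i < n, Icc a b ∩ closure (U i) = ∅ := by
  rw [U_eq_step]
  unfold stepU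
  split
  · next h =>
    right
    obtain ⟨h1, h2, h3, h4⟩ := Classical.choose_spec h
    exact ⟨_, _, h1, rfl, h2, h3, h4⟩
  · next => left; rfl

lemma U_of_PU {n : ℕ} (h : ∃ ab, PU n U ab) : (U n).Nonempty := by
  rw [U_eq_step]
  unfold stepU
  rw [dif_pos h]
  exact nonempty_Ioo.2 (Classical.choose_spec h).1

lemma U_open (n : ℕ) : IsOpen (U n) := by
  rcases U_rep n with h | ⟨a, b, _, h, _⟩
  · rw [h]; exact isOpen_empty
  · rw [h]; exact isOpen_Ioo

lemma U_subset_DY (n : ℕ) : U n ⊆ DY n := by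
  rcases U_rep n with h | ⟨a, b, _, h, _, hsub, _⟩
  · rw [h]; exact empty_subset _
  · rw [h]; exact subset_trans Ioo_subset_Icc_self hsub

lemma U_subset_Ioo01 (n : ℕ) : U n ⊆ Ioo 0 1 :=
  subset_trans (U_subset_DY n) (DY_subset n)

lemma U_nonempty_rep {n : ℕ} (h : (U n).Nonempty) :
    ∃ a b, a < b ∧ U n = Ioo a b ∧ b - a ≤ lenU n ∧ Icc a b ⊆ DY n ∧
      ∀ i < n, Icc a b ∩ closure (U i) = ∅ := by
  rcases U_rep n with he | hr
  · rw [he] at h; exact absurd h (by simp)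
  · exact hr

lemma closure_U_disjoint {m n : ℕ} (hmn : m < n) :
    closure (U n) ∩ closure (U m) = ∅ := by
  rcases U_rep n with h | ⟨a, b, hab, h, _, _, hdisj⟩
  · rw [h]; simp
  · rw [h, closure_Ioo (ne_of_lt hab)]
    have h1 := hdisj m hmn
    -- Icc a b ∩ closure (U m) = ∅ ; note closure (closure (U m)) = closure (U m)
    exact h1

lemma U_fail {n : ℕ} (h : U n = ∅) : DY n ⊆ ⋃ i ∈ Finset.range n, closure (U i) := by
  by_contra hc
  rw [not_subset] at hc
  obtain ⟨x, hxD, hxU⟩ := hc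
  have hop : IsOpen (DY n \ ⋃ i ∈ Finset.range n, closure (U i)) := by
    apply IsOpen.sdiff (DY_open n)
    exact Set.Finite.isClosed_biUnion (Finset.finite_toSet _) (fun i _ => isClosed_closure)
  have hx : x ∈ DY n \ ⋃ i ∈ Finset.range n, closure (U i) := ⟨hxD, hxU⟩
  obtain ⟨r, hr, hball⟩ := Metric.isOpen_iff.1 hop x hx
  set d := min (r/2) (lenU n) with hd
  have hd0 : 0 < d := lt_min (by linarith) (lenU_pos n)
  have hPU : ∃ ab, PU n U ab := by
    refine ⟨(x, x + d), by simp [hd0], by simp; exact min_le_right _ _, ?_, ?_⟩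
    · intro y hy
      have hyb : y ∈ Metric.ball x r := by
        rw [Metric.mem_ball, Real.dist_eq, abs_sub_lt_iff]
        obtain ⟨h1, h2⟩ := hy
        have : d ≤ r/2 := min_le_left _ _
        constructor <;> simp at h1 h2 ⊢ <;> linarith
      exact (hball hyb).1
    · intro i hi
      rw [eq_empty_iff_forall_notMem]
      intro y ⟨hy1, hy2⟩
      have hyb : y ∈ Metric.ball x r := by
        rw [Metric.mem_ball, Real.dist_eq, abs_sub_lt_iff]
        obtain ⟨h1, h2⟩ := hy1
        have : d ≤ r/2 := min_le_left _ _
        constructor <;> simp at h1 h2 ⊢ <;> linarith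
      exact ((hball hyb).2 (mem_biUnion (Finset.mem_range.2 hi) hy2)).elim
  obtain ⟨z, hz⟩ := U_of_PU hPU
  rw [h] at hz
  exact hz

lemma U_volume (n : ℕ) : volume (U n) ≤ ENNReal.ofReal (lenU n) := by
  rcases U_rep n with h | ⟨a, b, hab, h, hlen, _, _⟩
  · rw [h]; simp
  · rw [h, Real.volume_Ioo]
    exact ENNReal.ofReal_le_ofReal hlen

def K : Set ℝ := Icc 0 1 \ ⋃ n, U n

lemma K_subset_Icc : K ⊆ Icc 0 1 := fun x hx => hx.1

lemma K_not_mem_U {x : ℝ} (hx : x ∈ K) (n : ℕ) : x ∉ U n :=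
  fun h => hx.2 (mem_iUnion.2 ⟨n, h⟩)

lemma vol_U_total : volume (⋃ n, U n) ≤ ENNReal.ofReal 12⁻¹ := by
  have hsummable : Summable lenU := by
    unfold lenU
    exact (summable_geometric_of_lt_one (by norm_num) (by norm_num)).mul_left _
  calc volume (⋃ n, U n) ≤ ∑' n, volume (U n) := measure_iUnion_le _
    _ ≤ ∑' n, ENNReal.ofReal (lenU n) := ENNReal.tsum_le_tsum (fun n => U_volume n)
    _ = ENNReal.ofReal (∑' n, lenU n) :=
        (ENNReal.ofReal_tsum_of_nonneg (fun n => (lenU_pos n).le) hsummable).symm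
    _ ≤ ENNReal.ofReal 12⁻¹ := by
        apply ENNReal.ofReal_le_ofReal
        unfold lenU
        rw [tsum_mul_left, tsum_geometric_of_lt_one (by norm_num) (by norm_num)]
        norm_num

lemma K_volume_ne : volume K ≠ 0 := by
  intro h0
  have h1 : (1:ENNReal) = volume (Icc (0:ℝ) 1) := by rw [Real.volume_Icc]; norm_num
  have h2 : Icc (0:ℝ) 1 ⊆ K ∪ ⋃ n, U n := by
    intro x hx
    by_cases hxU : x ∈ ⋃ n, U n
    · exact Or.inr hxU
    · exact Or.inl ⟨hx, hxU⟩
  have h3 : (1:ENNReal) ≤ volume K + volume (⋃ n, U n) := by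
    rw [h1]
    exact le_trans (measure_mono h2) (measure_union_le _ _)
  rw [h0, zero_add] at h3
  have h4 : volume (⋃ n, U n) < 1 :=
    lt_of_le_of_lt vol_U_total (by rw [← ENNReal.ofReal_one]; apply ENNReal.ofReal_lt_ofReal_iff_of_nonneg (by norm_num) |>.2; norm_num)
  exact absurd (lt_of_le_of_lt h3 h4) (lt_irrefl _)

lemma K_nonempty : K.Nonempty := by
  rw [nonempty_iff_ne_empty]
  intro h
  exact K_volume_ne (by rw [h]; simp)


lemma exists_free_interval {x : ℝ} (hx : x ∈ K) (M : ℕ) {ε : ℝ} (hε : 0 < ε) :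
    ∃ α β, α < β ∧ 0 ≤ α ∧ β ≤ 1 ∧ Ioo α β ⊆ Ioo 0 1 ∧ (∀ y ∈ Ioo α β, |y - x| < ε) ∧
      ∀ i < M, Ioo α β ∩ closure (U i) = ∅ := by
  have hx01 : x ∈ Icc (0:ℝ) 1 := K_subset_Icc hx
  set F := ⋃ i ∈ Finset.range M, closure (U i) with hF
  have hFclosed : IsClosed F :=
    Set.Finite.isClosed_biUnion (Finset.finite_toSet _) (fun i _ => isClosed_closure)
  by_cases hxF : x ∈ F
  · -- x is an endpoint of exactly one closure (U i₀)
    obtain ⟨i₀, hi₀M, hxcl⟩ : ∃ i₀, i₀ ∈ Finset.range M ∧ x ∈ closure (U i₀) := by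
      simpa [hF, mem_iUnion] using hxF
    have hU₀ne : (U i₀).Nonempty := by
      rw [nonempty_iff_ne_empty]
      intro h
      rw [h] at hxcl
      simpa using hxcl
    obtain ⟨a, b, hab, hUeq, hlen, hIccDY, _⟩ := U_nonempty_rep hU₀ne
    have hclIcc : closure (U i₀) = Icc a b := by rw [hUeq, closure_Ioo (ne_of_lt hab)]
    have hxIcc : x ∈ Icc a b := by rw [← hclIcc]; exact hxcl
    have hxnotIoo : x ∉ Ioo a b := by
      rw [← hUeq]; exact K_not_mem_U hx i₀
    have ha0 : 0 < a := (DY_subset i₀ (hIccDY (left_mem_Icc.2 (le_of_lt hab)))).1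
    have hb1 : b < 1 := (DY_subset i₀ (hIccDY (right_mem_Icc.2 (le_of_lt hab)))).2
    have hxab : x = a ∨ x = b := by
      rcases hxIcc with ⟨h1, h2⟩
      rcases lt_or_eq_of_le h1 with h1' | h1'
      · rcases lt_or_eq_of_le h2 with h2' | h2'
        · exact absurd ⟨h1', h2'⟩ hxnotIoo
        · exact Or.inr h2'
      · exact Or.inl h1'.symm
    -- other closures avoid x
    have hxother : ∀ i, i ≠ i₀ → x ∉ closure (U i) := by
      intro i hi hmem
      rcases lt_or_gt_of_ne hi with h | h
      · have := closure_U_disjoint h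
        rw [eq_empty_iff_forall_notMem] at this
        exact this x ⟨hxcl, hmem⟩
      · have := closure_U_disjoint h
        rw [eq_empty_iff_forall_notMem] at this
        exact this x ⟨hmem, hxcl⟩
    set F' := ⋃ i ∈ (Finset.range M).erase i₀, closure (U i) with hF'
    have hF'closed : IsClosed F' :=
      Set.Finite.isClosed_biUnion (Finset.finite_toSet _) (fun i _ => isClosed_closure)
    have hxF' : x ∉ F' := by
      intro hmem
      obtain ⟨i, himem, hicl⟩ : ∃ i, i ∈ (Finset.range M).erase i₀ ∧ x ∈ closure (U i) := by
        simpa [hF', mem_iUnion] using hmem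
      exact hxother i (Finset.ne_of_mem_erase himem) hicl
    obtain ⟨δ₁, hδ₁, hball⟩ := Metric.isOpen_iff.1 hF'closed.isOpen_compl x hxF'
    set r := min δ₁ ε with hr
    have hr0 : 0 < r := lt_min hδ₁ hε
    have hdisj' : ∀ (α' β' : ℝ), (∀ y ∈ Ioo α' β', |y - x| < r) →
        (∀ y ∈ Ioo α' β', y ∉ Icc a b) → ∀ i < M, Ioo α' β' ∩ closure (U i) = ∅ := by
      intro α' β' hclose havoid i hiM
      rw [eq_empty_iff_forall_notMem]
      rintro y ⟨hy1, hy2⟩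
      by_cases hii : i = i₀
      · subst hii
        rw [hclIcc] at hy2
        exact havoid y hy1 hy2
      · have hyF' : y ∈ F' :=
          mem_biUnion (Finset.mem_erase.2 ⟨hii, Finset.mem_range.2 hiM⟩) hy2
        have : y ∈ Metric.ball x δ₁ := by
          rw [Metric.mem_ball, Real.dist_eq]
          exact lt_of_lt_of_le (hclose y hy1) (min_le_left _ _)
        exact (hball this) hyF'
    rcases hxab with hxa | hxb
    · -- x = a : take interval to the left of a
      refine ⟨max (a - r/2) 0, a, ?_, le_max_right _ _, le_of_lt (lt_trans hab hb1), ?_, ?_, ?_⟩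
      · apply max_lt (by linarith) ha0
      · intro y hy
        exact ⟨lt_of_le_of_lt (le_max_right _ _) hy.1, lt_trans hy.2 (lt_trans hab hb1)⟩
      · intro y hy
        have h1 : a - r/2 ≤ max (a - r/2) 0 := le_max_left _ _
        have h3 : a - r/2 < y := lt_of_le_of_lt h1 hy.1
        have h4 : y < a := hy.2
        have h5 : r ≤ ε := min_le_right _ _
        rw [hxa, abs_sub_lt_iff]
        constructor
        · linarith
        · linarith
      · apply hdisj'
        · intro y hy
          have h1 : a - r/2 ≤ max (a - r/2) 0 := le_max_left _ _
          have h3 : a - r/2 < y := lt_of_le_of_lt h1 hy.1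
          have h4 : y < a := hy.2
          rw [hxa, abs_sub_lt_iff]
          constructor
          · linarith
          · linarith
        · intro y hy hyIcc
          exact absurd hyIcc.1 (not_le.2 hy.2)
    · -- x = b : take interval to the right of b
      refine ⟨b, min (b + r/2) 1, lt_min (by linarith) hb1, le_of_lt (lt_trans ha0 hab),
        min_le_right _ _, ?_, ?_, ?_⟩
      · intro y hy
        exact ⟨lt_trans (lt_of_lt_of_le ha0 hab.le) hy.1, lt_of_lt_of_le hy.2 (min_le_right _ _)⟩
      · intro y hy
        have h2 : y < b + r/2 := lt_of_lt_of_le hy.2 (min_le_left _ _)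
        have h4 : b < y := hy.1
        have h5 : r ≤ ε := min_le_right _ _
        rw [hxb, abs_sub_lt_iff]
        constructor
        · linarith
        · linarith
      · apply hdisj'
        · intro y hy
          have h2 : y < b + r/2 := lt_of_lt_of_le hy.2 (min_le_left _ _)
          have h4 : b < y := hy.1
          rw [hxb, abs_sub_lt_iff]
          constructor
          · linarith
          · linarith
        · intro y hy hyIcc
          exact absurd hyIcc.2 (not_le.2 hy.1)
  · -- x not in F
    obtain ⟨δ₁, hδ₁, hball⟩ := Metric.isOpen_iff.1 hFclosed.isOpen_compl x hxF
    set r := min δ₁ ε with hr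
    have hr0 : 0 < r := lt_min hδ₁ hε
    refine ⟨max (x - r/2) 0, min (x + r/2) 1, ?_, le_max_right _ _, min_le_right _ _, ?_, ?_, ?_⟩
    · apply lt_min
      · apply max_lt
        · linarith
        · have := hx01.1; linarith
      · apply max_lt
        · have := hx01.2; linarith
        · norm_num
    · intro y hy
      exact ⟨lt_of_le_of_lt (le_max_right _ _) hy.1, lt_of_lt_of_le hy.2 (min_le_right _ _)⟩
    · intro y hy
      have h1 : x - r/2 < y := lt_of_le_of_lt (le_max_left _ _) hy.1
      have h2 : y < x + r/2 := lt_of_lt_of_le hy.2 (min_le_left _ _)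
      rw [abs_sub_lt_iff]
      have : r ≤ ε := min_le_right _ _
      constructor <;> linarith
    · intro i hiM
      rw [eq_empty_iff_forall_notMem]
      rintro y ⟨hy1, hy2⟩
      have h1 : x - r/2 < y := lt_of_le_of_lt (le_max_left _ _) hy1.1
      have h2 : y < x + r/2 := lt_of_lt_of_le hy1.2 (min_le_left _ _)
      have hyb : y ∈ Metric.ball x δ₁ := by
        rw [Metric.mem_ball, Real.dist_eq, abs_sub_lt_iff]
        have : r ≤ δ₁ := min_le_left _ _
        constructor <;> linarith
      exact (hball hyb) (mem_biUnion (Finset.mem_range.2 hiM) hy2)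


lemma lenU_lt {m i : ℕ} (him : m ≤ i) {ε : ℝ} (hε : 0 < ε) (hm : (2⁻¹:ℝ)^m < ε) :
    lenU i < ε := by
  unfold lenU
  have h1 : (4⁻¹:ℝ)^i ≤ (4⁻¹:ℝ)^m :=
    pow_le_pow_of_le_one (by norm_num) (by norm_num) him
  have h2 : (4⁻¹:ℝ)^m ≤ (2⁻¹:ℝ)^m := by
    apply pow_le_pow_left₀ (by norm_num) (by norm_num)
  have h3 : (0:ℝ) < (4⁻¹:ℝ)^i := by positivity
  nlinarith

lemma approach {x : ℝ} (hx : x ∈ K) {ε : ℝ} (hε : 0 < ε) (M : ℕ) :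
    ∃ n ≥ M, ∃ a b, a < b ∧ U n = Ioo a b ∧
      (∀ z ∈ Icc a b, |z - x| < ε) ∧ Icc a b ⊆ Ioo 0 1 := by
  obtain ⟨m₁, hm₁⟩ : ∃ m : ℕ, (2⁻¹:ℝ)^m < ε/2 :=
    exists_pow_lt_of_lt_one (by linarith) (by norm_num)
  set M₁ := max M m₁ with hM₁
  obtain ⟨α, β, hαβ, hα0, hβ1, hsub01, hclose, hfree⟩ :=
    exists_free_interval hx M₁ (show (0:ℝ) < ε/2 by linarith)
  obtain ⟨j, hjM₁, hDYj⟩ := DY_dense hα0 hβ1 hαβ M₁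
  by_cases hUj : (U j).Nonempty
  · obtain ⟨a, b, hab, hUeq, _, hIccDY, _⟩ := U_nonempty_rep hUj
    refine ⟨j, le_trans (le_max_left _ _) hjM₁, a, b, hab, hUeq, ?_, ?_⟩
    · intro z hz
      have hzJ : z ∈ Ioo α β := hDYj (hIccDY hz)
      have := hclose z hzJ
      linarith
    · exact fun z hz => hsub01 (hDYj (hIccDY hz))
  · rw [not_nonempty_iff_eq_empty] at hUj
    obtain ⟨y₀, hy₀⟩ := DY_nonempty j
    have hy₀cl : y₀ ∈ ⋃ i ∈ Finset.range j, closure (U i) := U_fail hUj hy₀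
    obtain ⟨i, hij, hy₀i⟩ : ∃ i, i ∈ Finset.range j ∧ y₀ ∈ closure (U i) := by
      simpa [mem_iUnion] using hy₀cl
    have hiM₁ : M₁ ≤ i := by
      by_contra hlt
      push_neg at hlt
      have := hfree i hlt
      rw [eq_empty_iff_forall_notMem] at this
      exact this y₀ ⟨hDYj hy₀, hy₀i⟩
    have hUine : (U i).Nonempty := by
      rw [nonempty_iff_ne_empty]
      intro h
      rw [h] at hy₀i
      simpa using hy₀i
    obtain ⟨a, b, hab, hUeq, hlen, hIccDY, _⟩ := U_nonempty_rep hUine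
    have hclIcc : closure (U i) = Icc a b := by rw [hUeq, closure_Ioo (ne_of_lt hab)]
    have hy₀Icc : y₀ ∈ Icc a b := by rw [← hclIcc]; exact hy₀i
    have hlensmall : lenU i < ε/2 :=
      lenU_lt (le_trans (le_max_right _ _) hiM₁) (by linarith) hm₁
    refine ⟨i, le_trans (le_max_left _ _) hiM₁, a, b, hab, hUeq, ?_, ?_⟩
    · intro z hz
      have h1 : |z - y₀| ≤ b - a := by
        rw [abs_sub_le_iff]
        constructor
        · linarith [hz.2, hy₀Icc.1]
        · linarith [hz.1, hy₀Icc.2]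
      have h2 : |y₀ - x| < ε/2 := hclose y₀ (hDYj hy₀)
      calc |z - x| ≤ |z - y₀| + |y₀ - x| := abs_sub_le _ _ _
        _ < (b - a) + ε/2 := by
            apply add_lt_add_of_le_of_lt h1 h2
        _ ≤ lenU i + ε/2 := by linarith
        _ < ε := by linarith
    · exact fun z hz => DY_subset i (hIccDY hz)


/-! ### Bump functions and the generators of W -/

def goodRep (n : ℕ) (ab : ℝ × ℝ) : Prop :=
  ab.1 < ab.2 ∧ U n = Ioo ab.1 ab.2 ∧ ab.2 - ab.1 ≤ lenU n ∧ Icc ab.1 ab.2 ⊆ DY n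

lemma goodRep_exists {n : ℕ} (h : (U n).Nonempty) : ∃ ab : ℝ × ℝ, goodRep n ab := by
  obtain ⟨a, b, h1, h2, h3, h4, _⟩ := U_nonempty_rep h
  exact ⟨(a, b), h1, h2, h3, h4⟩

open Classical in
def endpts (n : ℕ) : ℝ × ℝ :=
  if h : (U n).Nonempty then Classical.choose (goodRep_exists h) else (0, 1)

lemma endpts_spec {n : ℕ} (h : (U n).Nonempty) : goodRep n (endpts n) := by
  unfold endpts
  rw [dif_pos h]
  exact Classical.choose_spec (goodRep_exists h)

def aU (n : ℕ) : ℝ := (endpts n).1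
def bU (n : ℕ) : ℝ := (endpts n).2
def pU (n : ℕ) : ℝ := (aU n + bU n)/2
def rU (n : ℕ) : ℝ := (bU n - aU n)/2

lemma rU_pos {n : ℕ} (h : (U n).Nonempty) : 0 < rU n := by
  have := (endpts_spec h).1
  unfold rU bU aU
  linarith

open Classical in
def φ (n : ℕ) (x : ℝ) : ℝ :=
  if (U n).Nonempty then max 0 (1 - |x - pU n| / rU n) else 0

lemma φ_continuous (n : ℕ) : Continuous (φ n) := by
  unfold φ
  split
  · next h =>
    apply continuous_const.max
    have hr := rU_pos h
    fun_prop
  · exact continuous_const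

lemma φ_nonneg (n : ℕ) (x : ℝ) : 0 ≤ φ n x := by
  unfold φ; split
  · exact le_max_left _ _
  · exact le_refl 0

lemma φ_le_one (n : ℕ) (x : ℝ) : φ n x ≤ 1 := by
  unfold φ; split
  · next h =>
    apply max_le (by norm_num)
    have hr := rU_pos h
    have : |x - pU n| / rU n ≥ 0 := by positivity
    linarith
  · norm_num

lemma φ_peak {n : ℕ} (h : (U n).Nonempty) : φ n (pU n) = 1 := by
  unfold φ
  rw [if_pos h]
  simp

lemma φ_mem_Ioo {n : ℕ} {x : ℝ} (h : φ n x ≠ 0) : x ∈ U n := by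
  unfold φ at h
  by_cases hne : (U n).Nonempty
  · rw [if_pos hne] at h
    have hr := rU_pos hne
    have h1 : 1 - |x - pU n| / rU n > 0 := by
      by_contra hc
      push_neg at hc
      exact h (max_eq_left hc)
    have h2 : |x - pU n| < rU n := (div_lt_one hr).1 (by linarith)
    rw [abs_sub_lt_iff] at h2
    have hspec := endpts_spec hne
    rw [hspec.2.1]
    unfold pU rU at h2
    obtain ⟨hh1, hh2⟩ := h2
    constructor
    · show aU n < x; linarith
    · show x < bU n; linarith
  · rw [if_neg hne] at h
    exact absurd rfl h

lemma φ_endpoint {n : ℕ} (h : (U n).Nonempty) : φ n (aU n) = 0 := by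
  unfold φ
  rw [if_pos h]
  have hr := rU_pos h
  have : |aU n - pU n| = rU n := by
    unfold pU rU
    rw [abs_of_nonpos (by unfold rU at hr; linarith)]
    ring
  rw [this, div_self (ne_of_gt hr)]
  simp


abbrev Tt : Set ℝ := Ioo (2⁻¹:ℝ) 1

def gR (t : ℝ) (x : ℝ) : ℝ := ∑' n, t^n * φ n x

lemma gR_summable {t : ℝ} (ht : t ∈ Tt) (x : ℝ) : Summable (fun n => t^n * φ n x) := by
  obtain ⟨ht1, ht2⟩ := ht
  have ht0 : (0:ℝ) < t := by linarith
  apply Summable.of_nonneg_of_le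
    (fun n => mul_nonneg (by positivity) (φ_nonneg n x))
    (fun n => ?_)
    (summable_geometric_of_lt_one (le_of_lt ht0) ht2)
  calc t^n * φ n x ≤ t^n * 1 := by
        apply mul_le_mul_of_nonneg_left (φ_le_one n x) (by positivity)
    _ = t^n := mul_one _

lemma gR_continuous {t : ℝ} (ht : t ∈ Tt) : Continuous (gR t) := by
  obtain ⟨ht1, ht2⟩ := ht
  have ht0 : (0:ℝ) < t := by linarith
  apply continuous_tsum (u := fun n => t^n)
    (fun n => continuous_const.mul (φ_continuous n))
    (summable_geometric_of_lt_one (le_of_lt ht0) ht2)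
  intro n x
  show ‖t^n * φ n x‖ ≤ t^n
  rw [Real.norm_eq_abs, abs_of_nonneg (mul_nonneg (by positivity) (φ_nonneg n x))]
  calc t^n * φ n x ≤ t^n * 1 := by
        apply mul_le_mul_of_nonneg_left (φ_le_one n x) (by positivity)
    _ = t^n := mul_one _

lemma gR_zero {t x : ℝ} (hx : ∀ n, x ∉ U n) : gR t x = 0 := by
  unfold gR
  have : ∀ n, t^n * φ n x = 0 := by
    intro n
    have hφ : φ n x = 0 := by
      by_contra h
      exact hx n (φ_mem_Ioo h)
    rw [hφ, mul_zero]
  rw [tsum_congr (fun n => this n)]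
  exact tsum_zero

lemma φ_zero_of_ne {m n : ℕ} {x : ℝ} (hmn : m ≠ n) (hx : x ∈ closure (U n)) : φ m x = 0 := by
  by_contra h
  have hxm : x ∈ U m := φ_mem_Ioo h
  have hxm' : x ∈ closure (U m) := subset_closure hxm
  rcases lt_or_gt_of_ne hmn with hlt | hgt
  · have := closure_U_disjoint hlt
    rw [eq_empty_iff_forall_notMem] at this
    exact this x ⟨hx, hxm'⟩
  · have := closure_U_disjoint hgt
    rw [eq_empty_iff_forall_notMem] at this
    exact this x ⟨hxm', hx⟩

lemma gR_single {t : ℝ} {n : ℕ} {x : ℝ} (hx : x ∈ closure (U n)) :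
    gR t x = t^n * φ n x := by
  unfold gR
  exact tsum_eq_single n (fun m hm => by rw [φ_zero_of_ne hm hx, mul_zero])

/-! ### Finite combinations of the generators -/

def bcF (s : Finset ↥Tt) (co : ↥Tt → ℝ) (n : ℕ) : ℝ := ∑ t ∈ s, co t * (t.val)^n

lemma bcF_eventually_ne (s : Finset ↥Tt) (co : ↥Tt → ℝ)
    (hs : ∃ t ∈ s, co t ≠ 0) : ∃ N, ∀ n ≥ N, bcF s co n ≠ 0 := by
  classical
  set s' := s.filter (fun t => co t ≠ 0) with hs'
  have hs'ne : s'.Nonempty := by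
    obtain ⟨t, hts, hct⟩ := hs
    exact ⟨t, Finset.mem_filter.2 ⟨hts, hct⟩⟩
  have hbc : ∀ n, bcF s co n = ∑ t ∈ s', co t * (t.val)^n := by
    intro n
    unfold bcF
    rw [hs']
    rw [Finset.sum_filter]
    apply Finset.sum_congr rfl
    intro t _
    by_cases h : co t = 0
    · rw [if_neg (by simpa using h), h, zero_mul]
    · rw [if_pos h]
  set τ : ↥Tt := s'.max' hs'ne with hτ
  have hτs' : τ ∈ s' := Finset.max'_mem _ _
  have hcτ : co τ ≠ 0 := (Finset.mem_filter.1 hτs').2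
  have hτpos : (0:ℝ) < τ.val := lt_trans (by norm_num) τ.2.1
  have hτne : (τ.val : ℝ) ≠ 0 := ne_of_gt hτpos
  -- the normalized sums tend to co τ
  have htend : Filter.Tendsto (fun n => ∑ t ∈ s', co t * (t.val / τ.val)^n)
      Filter.atTop (nhds (co τ)) := by
    have hlim : ∀ t ∈ s', Filter.Tendsto (fun n => co t * (t.val / τ.val)^n)
        Filter.atTop (nhds (if t = τ then co τ else 0)) := by
      intro t hts'
      by_cases h : t = τ
      · subst h
        rw [if_pos rfl, div_self hτne]
        simpa using tendsto_const_nhds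
      · rw [if_neg h]
        have htlt : t.val < τ.val := by
          have hle : t ≤ τ := Finset.le_max' _ _ hts'
          have : t.val ≤ τ.val := hle
          rcases lt_or_eq_of_le this with h' | h'
          · exact h'
          · exact absurd (Subtype.ext h') h
        have ht0 : (0:ℝ) < t.val := lt_trans (by norm_num) t.2.1
        have hr0 : 0 ≤ t.val / τ.val := by positivity
        have hr1 : t.val / τ.val < 1 := (div_lt_one hτpos).2 htlt
        have := (tendsto_pow_atTop_nhds_zero_of_lt_one hr0 hr1).const_mul (co t)
        simpa using this
    have := tendsto_finset_sum s' hlim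
    have heq : ∑ t ∈ s', (if t = τ then co τ else 0) = co τ := by
      rw [Finset.sum_ite_eq' s' τ (fun _ => co τ)]
      rw [if_pos hτs']
    rwa [heq] at this
  have hev := htend.eventually_ne hcτ
  obtain ⟨N, hN⟩ := Filter.eventually_atTop.1 hev
  refine ⟨N, fun n hn => ?_⟩
  rw [hbc n]
  have hfact : ∑ t ∈ s', co t * (t.val)^n
      = (∑ t ∈ s', co t * (t.val / τ.val)^n) * τ.val^n := by
    rw [Finset.sum_mul]
    apply Finset.sum_congr rfl
    intro t _
    rw [div_pow]
    field_simp
  rw [hfact]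
  exact mul_ne_zero (hN n hn) (pow_ne_zero n hτne)


/-! ### The submodules V and W -/

def gI (t : ↥Tt) : ↥(Icc (0:ℝ) 1) → ℝ := fun y => gR t.val y.val

def Vsub : Submodule ℝ (ℝ → ℝ) := Submodule.span ℝ (Set.range ind)

def Wsub : Submodule ℝ (↥(Icc (0:ℝ) 1) → ℝ) := Submodule.span ℝ (Set.range gI)

lemma ind_linearIndependent : LinearIndependent ℝ ind := by
  rw [linearIndependent_iff']
  intro s g hsum i₀ hi₀
  obtain ⟨ω₀, hval⟩ := value_lemma s g i₀ hi₀
  obtain ⟨v, hv0, hvδ, hvΔ, hvp, _, _⟩ := witness ω₀ one_pos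
  have heval := congrFun hsum v
  rw [Finset.sum_apply] at heval
  simp only [Pi.smul_apply, smul_eq_mul] at heval
  rw [hval v hvΔ hvp] at heval
  simpa using heval

lemma rank_V : Module.rank ℝ ↥Vsub = 2 ^ Cardinal.continuum := by
  unfold Vsub
  rw [rank_span ind_linearIndependent]
  rw [Cardinal.mk_range_eq ind ind_linearIndependent.injective]
  rw [Cardinal.mk_set, Cardinal.mk_real]

lemma pU_mem {n : ℕ} (h : (U n).Nonempty) : pU n ∈ U n := by
  have hspec := endpts_spec h
  rw [hspec.2.1]
  constructor
  · show aU n < pU n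
    unfold pU
    have : aU n < bU n := hspec.1
    unfold aU bU at this ⊢
    linarith
  · show pU n < bU n
    unfold pU
    have : aU n < bU n := hspec.1
    unfold aU bU at this ⊢
    linarith

lemma gI_linearIndependent : LinearIndependent ℝ gI := by
  rw [linearIndependent_iff']
  intro s g hsum t₀ ht₀
  by_contra hne
  obtain ⟨N, hN⟩ := bcF_eventually_ne s g ⟨t₀, ht₀, hne⟩
  obtain ⟨x, hx⟩ := K_nonempty
  obtain ⟨n, hnN, a, b, hab, hUeq, _, _⟩ := approach hx one_pos N
  have hUne : (U n).Nonempty := by rw [hUeq]; exact nonempty_Ioo.2 hab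
  have hp01 : pU n ∈ Icc (0:ℝ) 1 :=
    Icc_subset_Icc (le_refl 0) (le_refl 1) (Ioo_subset_Icc_self (U_subset_Ioo01 n (pU_mem hUne)))
  have heval := congrFun hsum ⟨pU n, hp01⟩
  rw [Finset.sum_apply] at heval
  simp only [Pi.smul_apply, smul_eq_mul, Pi.zero_apply] at heval
  have hgr : ∀ t : ↥Tt, gI t ⟨pU n, hp01⟩ = t.val^n * φ n (pU n) := by
    intro t
    unfold gI
    exact gR_single (subset_closure (pU_mem hUne))
  rw [Finset.sum_congr rfl (fun t _ => by rw [hgr t])] at heval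
  rw [φ_peak hUne] at heval
  apply hN n hnN
  unfold bcF
  rw [← heval]
  apply Finset.sum_congr rfl
  intro t _
  ring

lemma rank_W : Module.rank ℝ ↥Wsub = Cardinal.continuum := by
  unfold Wsub
  rw [rank_span gI_linearIndependent]
  rw [Cardinal.mk_range_eq gI gI_linearIndependent.injective]
  exact Cardinal.mk_Ioo_real (by norm_num)

/-! ### Properties of members of V -/

lemma V_mem_prop {f : ℝ → ℝ} (hf : f ∈ Vsub) :
    (∃ M : ℝ, ∀ x, |f x| ≤ M) ∧ ∀ x, x ∉ ΔS → f x = 0 := by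
  unfold Vsub at hf
  induction hf using Submodule.span_induction with
  | mem f hf =>
    obtain ⟨A, rfl⟩ := hf
    refine ⟨⟨1, ind_abs_le A⟩, fun x hx => ind_zero_of_not_ΔS hx⟩
  | zero => exact ⟨⟨0, by simp⟩, fun x _ => rfl⟩
  | add f₁ f₂ _ _ ih₁ ih₂ =>
    obtain ⟨⟨M₁, hM₁⟩, hz₁⟩ := ih₁
    obtain ⟨⟨M₂, hM₂⟩, hz₂⟩ := ih₂
    refine ⟨⟨M₁ + M₂, fun x => ?_⟩, fun x hx => ?_⟩
    · calc |(f₁ + f₂) x| = |f₁ x + f₂ x| := rfl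
        _ ≤ |f₁ x| + |f₂ x| := abs_add_le _ _
        _ ≤ M₁ + M₂ := add_le_add (hM₁ x) (hM₂ x)
    · show f₁ x + f₂ x = 0
      rw [hz₁ x hx, hz₂ x hx, add_zero]
  | smul a f₁ _ ih =>
    obtain ⟨⟨M₁, hM₁⟩, hz₁⟩ := ih
    refine ⟨⟨|a| * M₁, fun x => ?_⟩, fun x hx => ?_⟩
    · calc |(a • f₁) x| = |a| * |f₁ x| := by rw [Pi.smul_apply, smul_eq_mul, abs_mul]
      _ ≤ |a| * M₁ := mul_le_mul_of_nonneg_left (hM₁ x) (abs_nonneg a)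
    · show a * f₁ x = 0
      rw [hz₁ x hx, mul_zero]

lemma V_riemann {f : ℝ → ℝ} (hf : f ∈ Vsub) (α β : ℝ) : RiemannIntegrableOn f α β := by
  obtain ⟨⟨M, hM⟩, hz⟩ := V_mem_prop hf
  constructor
  · exact ⟨M, fun x _ => hM x⟩
  · apply measure_mono_null ?_ ΔS_volume
    intro x hx
    obtain ⟨hx1, hx2⟩ := hx
    by_contra hxΔ
    apply hx2
    have hev : f =ᶠ[nhds x] (fun _ => 0) := by
      apply Filter.eventuallyEq_of_mem (ΔS_closed.isOpen_compl.mem_nhds hxΔ)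
      intro y hy
      exact hz y hy
    have : ContinuousAt f x := by
      rw [continuousAt_congr hev]
      exact continuousAt_const
    exact this.continuousWithinAt

/-! ### Properties of members of W -/

lemma W_continuous {g : ↥(Icc (0:ℝ) 1) → ℝ} (hg : g ∈ Wsub) : Continuous g := by
  unfold Wsub at hg
  induction hg using Submodule.span_induction with
  | mem g hg =>
    obtain ⟨t, rfl⟩ := hg
    exact (gR_continuous t.2).comp continuous_subtype_val
  | zero => exact continuous_const
  | add g₁ g₂ _ _ ih₁ ih₂ => exact ih₁.add ih₂
  | smul a g₁ _ ih => exact (continuous_const.mul ih : Continuous fun y => a * g₁ y)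


/-! ### The main composite non-integrability -/

lemma main_composite {f : ℝ → ℝ} (hf : f ∈ Vsub) (hf0 : f ≠ 0)
    {g : ↥(Icc (0:ℝ) 1) → ℝ} (hg : g ∈ Wsub) (hg0 : g ≠ 0) :
    ¬ RiemannIntegrableI (fun y : ↥(Icc (0:ℝ) 1) => f (g y)) := by
  rintro ⟨-, hvol⟩
  obtain ⟨d, hd⟩ := Finsupp.mem_span_range_iff_exists_finsupp.1 hf
  obtain ⟨c, hc⟩ := Finsupp.mem_span_range_iff_exists_finsupp.1 hg
  have hdne : d ≠ 0 := fun h => hf0 (by rw [← hd, h, Finsupp.sum_zero_index])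
  have hcne : c ≠ 0 := fun h => hg0 (by rw [← hc, h, Finsupp.sum_zero_index])
  have fval : ∀ x : ℝ, f x = ∑ A ∈ d.support, d A * ind A x := by
    intro x
    rw [← hd]
    unfold Finsupp.sum
    rw [Finset.sum_apply]
    apply Finset.sum_congr rfl
    intro A _
    simp [Pi.smul_apply, smul_eq_mul]
  have gval : ∀ y : ↥(Icc (0:ℝ) 1), g y = ∑ t ∈ c.support, c t * gR t.val y.val := by
    intro y
    rw [← hc]
    unfold Finsupp.sum
    rw [Finset.sum_apply]
    apply Finset.sum_congr rfl
    intro t _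
    simp [Pi.smul_apply, smul_eq_mul, gI]
  obtain ⟨A₀, hA₀⟩ := Finsupp.support_nonempty_iff.2 hdne
  set κ := d A₀ with hκdef
  have hκ : κ ≠ 0 := Finsupp.mem_support_iff.1 hA₀
  obtain ⟨ω₀, hval⟩ := value_lemma d.support d A₀ hA₀
  have hcs : ∃ t ∈ c.support, c t ≠ 0 := by
    obtain ⟨t, ht⟩ := Finsupp.support_nonempty_iff.2 hcne
    exact ⟨t, ht, Finsupp.mem_support_iff.1 ht⟩
  obtain ⟨N, hN⟩ := bcF_eventually_ne c.support c hcs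
  set SGR : ℝ → ℝ := fun z => ∑ t ∈ c.support, c t * gR t.val z with hSGR
  have hSGRcont : Continuous SGR :=
    continuous_finset_sum _ (fun t _ => continuous_const.mul (gR_continuous t.2))
  have hSGR_zero : ∀ z : ℝ, (∀ n, z ∉ U n) → SGR z = 0 := by
    intro z hz
    apply Finset.sum_eq_zero
    intro t _
    rw [gR_zero hz, mul_zero]
  have hSGR_cl : ∀ (n : ℕ) (z : ℝ), z ∈ closure (U n) →
      SGR z = bcF c.support c n * φ n z := by
    intro n z hz
    unfold bcF
    rw [Finset.sum_mul]
    apply Finset.sum_congr rfl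
    intro t _
    rw [gR_single hz]
    ring
  have hf_at_zero : f 0 = 0 := by
    rw [fval]
    apply Finset.sum_eq_zero
    intro A _
    rw [ind_at_zero, mul_zero]
  have hKsub : K ⊆ Subtype.val ''
      {y : ↥(Icc (0:ℝ) 1) | ¬ ContinuousAt (fun y : ↥(Icc (0:ℝ) 1) => f (g y)) y} := by
    intro x hx
    have hx01 : x ∈ Icc (0:ℝ) 1 := K_subset_Icc hx
    refine ⟨⟨x, hx01⟩, ?_, rfl⟩
    intro hcont
    have hg0x : g ⟨x, hx01⟩ = 0 := by
      rw [gval]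
      exact hSGR_zero x (fun n => K_not_mem_U hx n)
    have hfg0 : f (g ⟨x, hx01⟩) = 0 := by rw [hg0x]; exact hf_at_zero
    rw [Metric.continuousAt_iff] at hcont
    obtain ⟨δ, hδ0, hδ⟩ := hcont |κ| (abs_pos.2 hκ)
    obtain ⟨n, hnN, a, b, hab, hUeq, hball, hIoo01⟩ := approach hx hδ0 N
    have hUne : (U n).Nonempty := by rw [hUeq]; exact nonempty_Ioo.2 hab
    have hspec := endpts_spec hUne
    have hclosureIcc : closure (U n) = Icc a b := by
      rw [hUeq]; exact closure_Ioo (ne_of_lt hab)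
    have hclosureIcc' : closure (U n) = Icc (aU n) (bU n) := by
      rw [hspec.2.1]; exact closure_Ioo (ne_of_lt hspec.1)
    have haUcl : aU n ∈ closure (U n) := by
      rw [hclosureIcc']
      exact left_mem_Icc.2 (le_of_lt hspec.1)
    have haUmem : aU n ∈ Icc a b := by rw [← hclosureIcc]; exact haUcl
    have hpUmem : pU n ∈ Icc a b := by
      rw [← hclosureIcc]; exact subset_closure (pU_mem hUne)
    set bn := bcF c.support c n with hbndef
    have hbn : bn ≠ 0 := hN n hnN
    have hSaU : SGR (aU n) = 0 := by
      rw [hSGR_cl n (aU n) haUcl, φ_endpoint hUne, mul_zero]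
    have hSpU : SGR (pU n) = bn := by
      rw [hSGR_cl n (pU n) (subset_closure (pU_mem hUne)), φ_peak hUne, mul_one]
    have haUpU : aU n ≤ pU n := by
      have h1 : aU n < bU n := hspec.1
      unfold pU
      unfold aU bU at h1 ⊢
      linarith
    -- find z near x with f (SGR z) = κ
    have hkey : ∃ z ∈ Icc (aU n) (pU n), f (SGR z) = κ := by
      rcases lt_or_gt_of_ne hbn with hbneg | hbpos
      · obtain ⟨v, hv0, hvlt, _, _, hvΔ', hvp'⟩ := witness ω₀ (show (0:ℝ) < -bn by linarith)
        have hvmem : -v ∈ Icc (SGR (pU n)) (SGR (aU n)) := by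
          rw [hSaU, hSpU]
          constructor
          · linarith
          · linarith
        obtain ⟨z, hzmem, hzval⟩ := intermediate_value_Icc' haUpU hSGRcont.continuousOn hvmem
        refine ⟨z, hzmem, ?_⟩
        rw [hzval, fval]
        exact hval (-v) hvΔ' hvp'
      · obtain ⟨v, hv0, hvlt, hvΔ, hvp, _, _⟩ := witness ω₀ hbpos
        have hvmem : v ∈ Icc (SGR (aU n)) (SGR (pU n)) := by
          rw [hSaU, hSpU]
          constructor
          · linarith
          · linarith
        obtain ⟨z, hzmem, hzval⟩ := intermediate_value_Icc haUpU hSGRcont.continuousOn hvmem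
        refine ⟨z, hzmem, ?_⟩
        rw [hzval, fval]
        exact hval v hvΔ hvp
    obtain ⟨z, hzmem, hzval⟩ := hkey
    have hzIcc : z ∈ Icc a b :=
      ⟨le_trans haUmem.1 hzmem.1, le_trans hzmem.2 hpUmem.2⟩
    have hz01 : z ∈ Icc (0:ℝ) 1 := Ioo_subset_Icc_self (hIoo01 hzIcc)
    have hdist : dist (⟨z, hz01⟩ : ↥(Icc (0:ℝ) 1)) ⟨x, hx01⟩ < δ := by
      rw [Subtype.dist_eq, Real.dist_eq]
      exact hball z hzIcc
    have hlt := hδ hdist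
    have hgz : f (g ⟨z, hz01⟩) = κ := by
      rw [gval]
      exact hzval
    rw [hgz, hfg0, Real.dist_eq, sub_zero] at hlt
    exact lt_irrefl _ hlt
  have hmono := measure_mono (μ := volume) hKsub
  rw [hvol] at hmono
  exact K_volume_ne (le_zero_iff.1 hmono)

end CNRI

/-- There exist a vector space `V` of dimension `2^𝔠` of functions `ℝ → ℝ` whose
restriction to every compact interval is Riemann integrable, and a vector space `W`
of dimension `𝔠` of continuous functions on `[0,1]`, such that `f ∘ g` is not
Riemann integrable on `[0,1]` for every `f ∈ V \ {0}` and `g ∈ W \ {0}`. -/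
theorem composite_not_riemann_integrable_lineability :
    ∃ (V : Submodule ℝ (ℝ → ℝ)) (W : Submodule ℝ (Set.Icc (0:ℝ) 1 → ℝ)),
      Module.rank ℝ V = 2 ^ Cardinal.continuum ∧
      Module.rank ℝ W = Cardinal.continuum ∧
      (∀ f ∈ V, ∀ α β : ℝ, RiemannIntegrableOn f α β) ∧
      (∀ g ∈ W, Continuous g) ∧
      (∀ f ∈ V, f ≠ 0 → ∀ g ∈ W, g ≠ 0 →
        ¬ RiemannIntegrableI (fun x : Set.Icc (0:ℝ) 1 => f (g x))) :=
  ⟨CNRI.Vsub, CNRI.Wsub, CNRI.rank_V, CNRI.rank_W,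
    fun _ hf α β => CNRI.V_riemann hf α β,
    fun _ hg => CNRI.W_continuous hg,
    fun _ hf hf0 _ hg hg0 => CNRI.main_composite hf hf0 hg hg0⟩
end
end

section
/- The set of bounded functions from [0,1] to ℝ is strongly 2^𝔠-algebrable; that is, there exists a family F of bounded functions from [0,1] to ℝ with cardinality 2^𝔠 that is algebraically independent over ℝ: for every n ∈ ℕ, every nonzero real polynomial P in n variables without constant term, and all distinct f₁,…,fₙ ∈ F, the function x ↦ P(f₁(x),…,fₙ(x)) is not identically zero on [0,1] (and is bounded). -/
open Set Cardinal

noncomputable section BFSAsec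

namespace BFSA

/-- Squash `ℝ` into `[-1,1]` (in fact `(-1,1)`). -/
def sq (t : ℝ) : ℝ := t / (1 + |t|)

lemma abs_sq_le (t : ℝ) : |sq t| ≤ 1 := by
  have h1 : (0:ℝ) < 1 + |t| := by positivity
  rw [sq, abs_div, abs_of_pos h1, div_le_one h1]
  linarith [abs_nonneg t]

/-- Partial inverse of `sq` on `(-1,1)`. -/
def unsq (u : ℝ) : ℝ := u / (1 - |u|)

lemma sq_unsq {u : ℝ} (hu : |u| < 1) : sq (unsq u) = u := by
  have h0 : (0:ℝ) < 1 - |u| := by linarith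
  have h1 : |unsq u| = |u| / (1 - |u|) := by rw [unsq, abs_div, abs_of_pos h0]
  have h2 : 1 + |u| / (1 - |u|) = 1 / (1 - |u|) := by field_simp; ring
  rw [sq, h1, unsq, h2, one_div, div_inv_eq_mul]
  exact div_mul_cancel₀ u h0.ne'

open Classical in
/-- `A ∩ F` as a finset. -/
def cut (F : Finset ℝ) (A : Set ℝ) : Finset ℝ := F.filter (· ∈ A)

lemma mem_cut {F : Finset ℝ} {A : Set ℝ} {a : ℝ} : a ∈ cut F A ↔ a ∈ F ∧ a ∈ A := by
  simp [cut]

open Classical in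
/-- Encode `A ∩ F` as a natural number (for fixed `F`). -/
def enc (F : Finset ℝ) (A : Set ℝ) : ℕ := (F.powerset.toList).idxOf (cut F A)

open Classical in
lemma enc_inj {F : Finset ℝ} {A B : Set ℝ} (h : cut F A ≠ cut F B) :
    enc F A ≠ enc F B := by
  intro he
  apply h
  have hA : cut F A ∈ F.powerset.toList := by
    rw [Finset.mem_toList, Finset.mem_powerset]
    exact fun a ha => (mem_cut.1 ha).1
  have hB : cut F B ∈ F.powerset.toList := by
    rw [Finset.mem_toList, Finset.mem_powerset]
    exact fun a ha => (mem_cut.1 ha).1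
  exact (List.idxOf_inj hA).1 he

lemma card_le : #(Finset ℝ × (ℕ → ℝ)) ≤ #(Set.Icc (0:ℝ) 1) := by
  have h1 : #(Finset ℝ) = 𝔠 := by
    rw [Cardinal.mk_finset_of_infinite, Cardinal.mk_real]
  have h2 : #(ℕ → ℝ) = 𝔠 := by
    rw [Cardinal.mk_arrow, Cardinal.lift_id, Cardinal.lift_id, Cardinal.mk_real]
    simp [Cardinal.continuum_power_aleph0]
  rw [Cardinal.mk_Icc_real (by norm_num : (0:ℝ) < 1), Cardinal.mk_prod,
    Cardinal.lift_id, Cardinal.lift_id, h1, h2,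
    Cardinal.mul_eq_self Cardinal.aleph0_le_continuum]

/-- An injection of the coding space into `[0,1]`. -/
def ι : (Finset ℝ × (ℕ → ℝ)) ↪ Set.Icc (0:ℝ) 1 :=
  Classical.choice ((Cardinal.le_def _ _).1 card_le)

/-- Decoding map. -/
def π (x : Set.Icc (0:ℝ) 1) : Finset ℝ × (ℕ → ℝ) := Function.invFun ι x

lemma π_ι (y : Finset ℝ × (ℕ → ℝ)) : π (ι y) = y :=
  Function.leftInverse_invFun ι.injective y

/-- The family of bounded functions, indexed by subsets of `ℝ`. -/
def fam (A : Set ℝ) : Set.Icc (0:ℝ) 1 → ℝ := fun x => sq ((π x).2 (enc (π x).1 A))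

lemma abs_fam_le (A : Set ℝ) (x : Set.Icc (0:ℝ) 1) : |fam A x| ≤ 1 := abs_sq_le _

lemma exists_sep {n : ℕ} (A : Fin n → Set ℝ) (hA : Function.Injective A) :
    ∃ F : Finset ℝ, ∀ i j, i ≠ j → cut F (A i) ≠ cut F (A j) := by
  classical
  have key : ∀ p : Fin n × Fin n, ∃ a : ℝ, p.1 ≠ p.2 →
      ((a ∈ A p.1 ∧ a ∉ A p.2) ∨ (a ∈ A p.2 ∧ a ∉ A p.1)) := by
    intro p
    by_cases hp : p.1 = p.2
    · exact ⟨0, fun h => absurd hp h⟩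
    · have hne : A p.1 ≠ A p.2 := fun h => hp (hA h)
      have hex : ∃ a, ¬ (a ∈ A p.1 ↔ a ∈ A p.2) := by
        rw [← not_forall]
        exact fun h => hne (Set.ext h)
      obtain ⟨a, ha⟩ := hex
      exact ⟨a, fun _ => by tauto⟩
  choose c hc using key
  refine ⟨Finset.image c Finset.univ, ?_⟩
  intro i j hij heq
  have hcm : c (i, j) ∈ Finset.image c Finset.univ :=
    Finset.mem_image_of_mem _ (Finset.mem_univ _)
  have h := hc (i, j) hij
  rcases h with ⟨h1, h2⟩ | ⟨h1, h2⟩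
  · have hm : c (i, j) ∈ cut (Finset.image c Finset.univ) (A i) := mem_cut.2 ⟨hcm, h1⟩
    rw [heq] at hm
    exact h2 (mem_cut.1 hm).2
  · have hm : c (i, j) ∈ cut (Finset.image c Finset.univ) (A j) := mem_cut.2 ⟨hcm, h1⟩
    rw [← heq] at hm
    exact h2 (mem_cut.1 hm).2

lemma exists_point {n : ℕ} (A : Fin n → Set ℝ) (hA : Function.Injective A)
    (v : Fin n → ℝ) (hv : ∀ i, |v i| < 1) :
    ∃ x : Set.Icc (0:ℝ) 1, ∀ i, fam (A i) x = v i := by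
  classical
  obtain ⟨F, hF⟩ := exists_sep A hA
  have hk : Function.Injective (fun i => enc F (A i)) := by
    intro i j h
    by_contra hij
    exact enc_inj (hF i j hij) h
  set ψ : ℕ → ℝ := fun m =>
    if h : ∃ i, enc F (A i) = m then unsq (v h.choose) else 0 with hψ
  refine ⟨ι (F, ψ), fun i => ?_⟩
  have h1 : fam (A i) (ι (F, ψ)) = sq (ψ (enc F (A i))) := by rw [fam, π_ι]
  rw [h1, hψ]
  have hex : ∃ j, enc F (A j) = enc F (A i) := ⟨i, rfl⟩
  dsimp only
  rw [dif_pos hex]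
  have h2 : hex.choose = i := hk hex.choose_spec
  rw [h2, sq_unsq (hv i)]

lemma exists_eval_ne {n : ℕ} (P : MvPolynomial (Fin n) ℝ) (hP : P ≠ 0) :
    ∃ v : Fin n → ℝ, (∀ i, |v i| < 1) ∧ MvPolynomial.eval v P ≠ 0 := by
  have h1 : ∃ r : Fin n → ℝ, MvPolynomial.eval r P ≠ 0 := by
    by_contra hc
    push_neg at hc
    exact hP (MvPolynomial.funext fun x => by simp [hc x])
  obtain ⟨r, hr⟩ := h1
  have key : ∀ (p : MvPolynomial (Fin n) ℝ) (t : ℝ),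
      (MvPolynomial.aeval (fun i => Polynomial.C (r i) * Polynomial.X) p).eval t
        = MvPolynomial.eval (fun i => r i * t) p := by
    intro p t
    induction p using MvPolynomial.induction_on with
    | C a => simp
    | add p q hp hq => simp [hp, hq]
    | mul_X p i hp => simp [hp]
  set q : Polynomial ℝ := MvPolynomial.aeval (fun i => Polynomial.C (r i) * Polynomial.X) P
    with hqdef
  have hq0 : q ≠ 0 := by
    intro h
    apply hr
    have h2 := key P 1
    rw [← hqdef, h] at h2
    simpa using h2.symm
  have hB : (0:ℝ) < ∑ j, |r j| + 1 := by positivity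
  have hinf : (Set.Ioo (0:ℝ) (1 / (∑ j, |r j| + 1))).Infinite :=
    Set.Ioo_infinite (by positivity)
  obtain ⟨t, ht⟩ := (hinf.diff (Polynomial.finite_setOf_isRoot hq0)).nonempty
  obtain ⟨⟨ht0, ht1⟩, htr⟩ := ht
  refine ⟨fun i => r i * t, fun i => ?_, ?_⟩
  · have h1 : |r i| ≤ ∑ j, |r j| :=
      Finset.single_le_sum (fun j _ => abs_nonneg (r j)) (Finset.mem_univ i)
    have hS : (0:ℝ) ≤ ∑ j, |r j| := Finset.sum_nonneg fun j _ => abs_nonneg _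
    have ht1' : t * (∑ j, |r j| + 1) < 1 := (lt_div_iff₀ hB).1 ht1
    rw [abs_mul, abs_of_pos ht0]
    nlinarith [mul_le_mul_of_nonneg_right h1 ht0.le]
  · rw [← key P t, ← hqdef]
    exact fun h => htr h

lemma eval_abs_le {n : ℕ} (P : MvPolynomial (Fin n) ℝ) (v : Fin n → ℝ)
    (hv : ∀ i, |v i| ≤ 1) :
    |MvPolynomial.eval v P| ≤ ∑ m ∈ P.support, |MvPolynomial.coeff m P| := by
  rw [MvPolynomial.eval_eq]
  refine (Finset.abs_sum_le_sum_abs _ _).trans ?_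
  refine Finset.sum_le_sum fun m _ => ?_
  rw [abs_mul]
  have h1 : |∏ i ∈ m.support, v i ^ m i| ≤ 1 := by
    rw [Finset.abs_prod]
    refine Finset.prod_le_one (fun i _ => abs_nonneg _) fun i _ => ?_
    rw [abs_pow]
    exact pow_le_one₀ (abs_nonneg _) (hv i)
  exact mul_le_of_le_one_right (abs_nonneg _) h1

lemma fam_inj : Function.Injective fam := by
  intro A B hAB
  by_contra hne
  have hinj : Function.Injective (fun i : Fin 2 => if i = 0 then A else B) := by
    intro i j h
    fin_cases i <;> fin_cases j <;> simp_all
  have hv : ∀ i : Fin 2, |(fun i : Fin 2 => if i = 0 then (1:ℝ)/2 else 0) i| < 1 := by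
    intro i
    fin_cases i <;> norm_num [abs_lt]
  obtain ⟨x, hx⟩ := exists_point _ hinj _ hv
  have h0 := hx 0
  have h1 := hx 1
  norm_num at h0 h1
  rw [hAB, h1] at h0
  norm_num at h0

end BFSA

end BFSAsec

/-- The set of bounded functions from `[0,1]` to `ℝ` is strongly `2^𝔠`-algebrable:
there is a family `F` of bounded functions on `[0,1]` of cardinality `2^𝔠` which is
algebraically independent over `ℝ`, i.e. for every `n`, every nonzero real polynomial
`P` in `n` variables without constant term and all distinct `f₁, …, fₙ ∈ F`, the
function `x ↦ P(f₁(x), …, fₙ(x))` is not identically zero (and is bounded). -/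
theorem bounded_functions_strongly_algebrable :
    ∃ F : Set (Set.Icc (0:ℝ) 1 → ℝ),
      (#F) = 2 ^ Cardinal.continuum ∧
      (∀ f ∈ F, ∃ M : ℝ, ∀ x, |f x| ≤ M) ∧
      (∀ (n : ℕ) (f : Fin n → (Set.Icc (0:ℝ) 1 → ℝ)), Function.Injective f →
        (∀ i, f i ∈ F) →
        ∀ P : MvPolynomial (Fin n) ℝ, P ≠ 0 → MvPolynomial.constantCoeff P = 0 →
          (fun x : Set.Icc (0:ℝ) 1 => MvPolynomial.eval (fun i => f i x) P) ≠ 0 ∧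
          ∃ M : ℝ, ∀ x : Set.Icc (0:ℝ) 1,
            |MvPolynomial.eval (fun i => f i x) P| ≤ M) := by
  classical
  refine ⟨Set.range BFSA.fam, ?_, ?_, ?_⟩
  · rw [Cardinal.mk_range_eq _ BFSA.fam_inj, Cardinal.mk_set, Cardinal.mk_real]
  · rintro f ⟨A, rfl⟩
    exact ⟨1, fun x => BFSA.abs_fam_le A x⟩
  · intro n f hf hfF P hP _
    choose A hA using fun i => hfF i
    have hAinj : Function.Injective A := by
      intro i j h
      apply hf
      rw [← hA i, ← hA j, h]
    obtain ⟨v, hv, hv0⟩ := BFSA.exists_eval_ne P hP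
    obtain ⟨x, hx⟩ := BFSA.exists_point A hAinj v hv
    constructor
    · intro hzero
      apply hv0
      have h2 := congrFun hzero x
      simp only [Pi.zero_apply] at h2
      have h3 : (fun i => f i x) = v := by
        funext i
        rw [← hA i]
        exact hx i
      rw [h3] at h2
      exact h2
    · refine ⟨∑ m ∈ P.support, |MvPolynomial.coeff m P|, fun x => ?_⟩
      refine BFSA.eval_abs_le P _ fun i => ?_
      rw [← hA i]
      exact BFSA.abs_fam_le _ _
end

section
/- (Fichtenholz–Kantorovich–Hausdorff) For any infinite set X there exists an independent family A of subsets of X with cardinality 2^{card(X)}. -/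
open Set Cardinal

/-- A family `𝒜` of subsets of `X` is independent if for any finitely many distinct
members `A₁, …, Aₙ` of `𝒜` and any signs `ε₁, …, εₙ ∈ {0,1}`, the intersection
`A₁^{ε₁} ∩ ⋯ ∩ Aₙ^{εₙ}` is nonempty (where `A¹ = A` and `A⁰ = X \ A`). -/
def IsIndependentFamily {X : Type*} (𝒜 : Set (Set X)) : Prop :=
  ∀ (n : ℕ) (A : Fin n → Set X), Function.Injective A → (∀ i, A i ∈ 𝒜) →
    ∀ ε : Fin n → Bool, (⋂ i, if ε i then A i else (A i)ᶜ).Nonempty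

open scoped Classical

namespace FKH

variable {X : Type*}

noncomputable def core (S : Set X) : Set (Finset X × Finset (Finset X)) :=
  {p | p.1.filter (fun x => x ∈ S) ∈ p.2}

lemma core_injective : Function.Injective (core (X := X)) := by
  intro S T h
  by_contra hne
  obtain ⟨x, hx⟩ := not_forall.mp (fun hall => hne (Set.ext fun x => hall x))
  set p : Finset X × Finset (Finset X) :=
    ({x}, {({x} : Finset X).filter (fun y => y ∈ S)}) with hp
  have hpS : p ∈ core S := by simp [core, hp]
  have hpT : p ∈ core T := h ▸ hpS
  simp only [core, Set.mem_setOf_eq, hp, Finset.mem_singleton] at hpT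
  have := Finset.ext_iff.mp hpT x
  simp at this
  tauto

lemma core_indep [Nonempty X] {n : ℕ} (S : Fin n → Set X) (hS : Function.Injective S)
    (ε : Fin n → Bool) : ∃ p, ∀ i, (p ∈ core (S i)) ↔ ε i = true := by
  have hw : ∀ i j : Fin n, ∃ x : X, i ≠ j → ¬ (x ∈ S i ↔ x ∈ S j) := by
    intro i j
    by_cases hij : i = j
    · exact ⟨Classical.arbitrary X, fun h => absurd hij h⟩
    · have hST : S i ≠ S j := fun h => hij (hS h)
      obtain ⟨x, hx⟩ := not_forall.mp (fun hall => hST (Set.ext fun x => hall x))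
      exact ⟨x, fun _ => hx⟩
  choose w hw using hw
  set F : Finset X := Finset.image (fun q : Fin n × Fin n => w q.1 q.2) Finset.univ with hF
  have hfilt : ∀ i j : Fin n,
      F.filter (fun x => x ∈ S i) = F.filter (fun x => x ∈ S j) → i = j := by
    intro i j h
    by_contra hij
    have hmem : w i j ∈ F := Finset.mem_image.mpr ⟨(i, j), Finset.mem_univ _, rfl⟩
    have := Finset.ext_iff.mp h (w i j)
    simp only [Finset.mem_filter, hmem, true_and] at this
    exact hw i j hij this
  refine ⟨(F, Finset.image (fun i => F.filter (fun x => x ∈ S i))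
      (Finset.univ.filter (fun i => ε i = true))), ?_⟩
  intro i
  simp only [core, Set.mem_setOf_eq, Finset.mem_image, Finset.mem_filter, Finset.mem_univ,
    true_and]
  constructor
  · rintro ⟨j, hj, hji⟩
    rwa [hfilt j i hji] at hj
  · intro hi; exact ⟨i, hi, rfl⟩

end FKH

/-- Fichtenholz–Kantorovich–Hausdorff: every infinite set `X` admits an independent
family of subsets of cardinality `2^{card X}`. -/
theorem fichtenholz_kantorovich_hausdorff (X : Type*) [Infinite X] :
    ∃ 𝒜 : Set (Set X), (#𝒜) = 2 ^ (#X) ∧ IsIndependentFamily 𝒜 := by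
  have hcard : #(Finset X × Finset (Finset X)) = #X := by
    rw [Cardinal.mk_prod, Cardinal.mk_finset_of_infinite, Cardinal.mk_finset_of_infinite,
      Cardinal.lift_id, Cardinal.lift_id, Cardinal.mk_finset_of_infinite,
      Cardinal.mul_eq_self (Cardinal.aleph0_le_mk X)]
  obtain ⟨e⟩ := Cardinal.eq.mp hcard
  set f : Set X → Set X := fun S => e '' FKH.core S with hf
  have hfi : Function.Injective f := fun S T h =>
    FKH.core_injective (by rwa [Set.image_eq_image e.injective] at h)
  refine ⟨Set.range f, ?_, ?_⟩
  · rw [Cardinal.mk_range_eq _ hfi, Cardinal.mk_set]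
  · intro n A hA hAmem ε
    choose S hSeq using hAmem
    have hS : Function.Injective S := fun i j h => hA (by rw [← hSeq i, ← hSeq j, h])
    obtain ⟨p, hp⟩ := FKH.core_indep S hS ε
    refine ⟨e p, Set.mem_iInter.mpr fun i => ?_⟩
    have hmem : e p ∈ f (S i) ↔ p ∈ FKH.core (S i) := by
      simp [hf, Set.mem_image, e.injective.eq_iff]
    cases hε : ε i with
    | true =>
        simp only [hε, if_pos]
        rw [← hSeq i]
        exact hmem.mpr ((hp i).mpr hε)
    | false =>
        simp only [hε, if_neg, Bool.false_eq_true, not_false_iff]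
        rw [← hSeq i]
        intro hcon
        exact absurd ((hp i).mp (hmem.mp hcon)) (by simp [hε])
end

section
/- Let X be an infinite set and let A be an independent family of subsets of X of cardinality 2^{card(X)}. Then for every n ∈ ℕ, all distinct A₁,…,Aₙ ∈ A, and all ε₁,…,εₙ ∈ {0,1}, the intersection A₁^{ε₁} ∩ ⋯ ∩ Aₙ^{εₙ} is infinite. -/
open Set Cardinal

/-- If `X` is infinite and `𝒜` is an independent family of subsets of `X` of
cardinality `2^{card X}`, then all the finite Boolean intersections
`A₁^{ε₁} ∩ ⋯ ∩ Aₙ^{εₙ}` over distinct members of `𝒜` are infinite. -/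
theorem independent_family_inter_infinite (X : Type*) [Infinite X]
    (𝒜 : Set (Set X)) (hcard : (#𝒜) = 2 ^ (#X)) (hind : IsIndependentFamily 𝒜)
    (n : ℕ) (A : Fin n → Set X) (hinj : Function.Injective A) (hmem : ∀ i, A i ∈ 𝒜)
    (ε : Fin n → Bool) :
    (⋂ i, if ε i then A i else (A i)ᶜ).Infinite := by
  set S : Set X := ⋂ i, if ε i then A i else (A i)ᶜ with hS
  by_contra hcon
  rw [Set.not_infinite] at hcon
  -- 𝒜 is infinite
  have h𝒜 : 𝒜.Infinite := by
    rw [← Set.infinite_coe_iff, Cardinal.infinite_iff, hcard]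
    exact le_of_lt (lt_of_le_of_lt (Cardinal.aleph0_le_mk X) (Cardinal.cantor _))
  have hT : (𝒜 \ Set.range A).Infinite := h𝒜.diff (Set.finite_range A)
  have hmaps : Set.MapsTo (fun B => B ∩ S) (𝒜 \ Set.range A) {t | t ⊆ S} :=
    fun B _ => Set.inter_subset_right
  obtain ⟨B, hB, B', hB', hne, heq⟩ :=
    hT.exists_ne_map_eq_of_mapsTo hmaps hcon.finite_subsets
  -- build the extended family
  set A2 : Fin (n + 2) → Set X := Fin.snoc (Fin.snoc A B) B' with hA2
  set ε2 : Fin (n + 2) → Bool := Fin.snoc (Fin.snoc ε true) false with hε2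
  have hinj2 : Function.Injective A2 := by
    intro i j hij
    induction i using Fin.lastCases with
    | last =>
      induction j using Fin.lastCases with
      | last => rfl
      | cast j =>
        exfalso
        induction j using Fin.lastCases with
        | last =>
          simp only [hA2, Fin.snoc_last, Fin.snoc_castSucc] at hij
          exact hne hij.symm
        | cast j =>
          simp only [hA2, Fin.snoc_last, Fin.snoc_castSucc] at hij
          exact hB'.2 ⟨j, hij.symm⟩
    | cast i =>
      induction j using Fin.lastCases with
      | last =>
        exfalso
        induction i using Fin.lastCases with
        | last =>
          simp only [hA2, Fin.snoc_last, Fin.snoc_castSucc] at hij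
          exact hne hij
        | cast i =>
          simp only [hA2, Fin.snoc_last, Fin.snoc_castSucc] at hij
          exact hB'.2 ⟨i, hij⟩
      | cast j =>
        induction i using Fin.lastCases with
        | last =>
          induction j using Fin.lastCases with
          | last => rfl
          | cast j =>
            exfalso
            simp only [hA2, Fin.snoc_last, Fin.snoc_castSucc] at hij
            exact hB.2 ⟨j, hij.symm⟩
        | cast i =>
          induction j using Fin.lastCases with
          | last =>
            exfalso
            simp only [hA2, Fin.snoc_last, Fin.snoc_castSucc] at hij
            exact hB.2 ⟨i, hij⟩
          | cast j =>
            simp only [hA2, Fin.snoc_castSucc] at hij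
            rw [hinj hij]
  have hmem2 : ∀ i, A2 i ∈ 𝒜 := by
    intro i
    induction i using Fin.lastCases with
    | last => simpa [hA2, Fin.snoc_last] using hB'.1
    | cast i =>
      induction i using Fin.lastCases with
      | last => simpa [hA2, Fin.snoc_castSucc, Fin.snoc_last] using hB.1
      | cast i => simpa [hA2, Fin.snoc_castSucc] using hmem i
  obtain ⟨x, hx⟩ := hind (n + 2) A2 hinj2 hmem2 ε2
  simp only [Set.mem_iInter] at hx
  have hxS : x ∈ S := by
    rw [hS, Set.mem_iInter]
    intro i
    have := hx (Fin.castSucc (Fin.castSucc i))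
    simpa [hA2, hε2, Fin.snoc_castSucc] using this
  have hxB : x ∈ B := by
    have := hx (Fin.castSucc (Fin.last n))
    simpa [hA2, hε2, Fin.snoc_castSucc, Fin.snoc_last] using this
  have hxB' : x ∉ B' := by
    have := hx (Fin.last (n + 1))
    simpa [hA2, hε2, Fin.snoc_last] using this
  have : x ∈ B' ∩ S := heq ▸ ⟨hxB, hxS⟩
  exact hxB' this.1
end

section
/- Let H be a Hamel basis of ℝ over ℚ with 1 ∈ H, and let A be an independent family of subsets of H \ {1} of cardinality 2^𝔠. For A ∈ A, let f_A : ℝ → ℝ be the ℚ-linear map with f_A(h) = 1 for h ∈ A and f_A(h) = 0 for h ∈ H \ A, and let g_A(x) = f_A(x)/(1 + |f_A(x)|). Then the restrictions of the functions g_A to [0,1] are algebraically independent over ℝ: for every n ∈ ℕ, all distinct A₁,…,Aₙ ∈ A, and every nonzero real polynomial P in n variables without constant term, there exists r ∈ [0,1] with P(g_{A₁}(r),…,g_{Aₙ}(r)) ≠ 0. -/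
open Set Cardinal

/-- A family `𝒜` of subsets of the ground set `X` is independent if for any finitely
many distinct members `A₁, …, Aₙ` of `𝒜` and any signs `ε₁, …, εₙ ∈ {0,1}`, the
intersection `A₁^{ε₁} ∩ ⋯ ∩ Aₙ^{εₙ}` is nonempty (where `A¹ = A` and `A⁰ = X \ A`). -/
def IsIndependentFamilyOn {α : Type*} (X : Set α) (𝒜 : Set (Set α)) : Prop :=
  ∀ (n : ℕ) (A : Fin n → Set α), Function.Injective A → (∀ i, A i ∈ 𝒜) →
    ∀ ε : Fin n → Bool, (⋂ i, if ε i then A i else X \ A i).Nonempty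

lemma exists_eval_ne_zero_mem (S : Set ℝ) (hS : S.Infinite) :
    ∀ (n : ℕ) (P : MvPolynomial (Fin n) ℝ), P ≠ 0 →
      ∃ x : Fin n → ℝ, (∀ i, x i ∈ S) ∧ MvPolynomial.eval x P ≠ 0 := by
  intro n
  induction n with
  | zero =>
      intro P hP
      obtain ⟨a, rfl⟩ := MvPolynomial.C_surjective (Fin 0) P
      refine ⟨fun i => i.elim0, fun i => i.elim0, ?_⟩
      simpa using fun h => hP (by rw [h, map_zero])
  | succ n ih =>
      intro P hP
      set Q := MvPolynomial.finSuccEquiv ℝ n P with hQdef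
      have hQ : Q ≠ 0 := by
        intro h
        exact hP ((map_eq_zero_iff _ (AlgEquiv.injective _)).mp h)
      obtain ⟨m, hm⟩ : ∃ m, Q.coeff m ≠ 0 := by
        by_contra h
        push_neg at h
        exact hQ (Polynomial.ext fun m => by simp [h])
      obtain ⟨x, hxS, hx⟩ := ih (Q.coeff m) hm
      have hmap : Q.map (MvPolynomial.eval x) ≠ 0 := by
        intro h
        apply hx
        have := congrArg (fun p => Polynomial.coeff p m) h
        simpa [Polynomial.coeff_map] using this
      have hroots : Set.Finite { y | Polynomial.IsRoot (Q.map (MvPolynomial.eval x)) y } :=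
        Polynomial.finite_setOf_isRoot hmap
      obtain ⟨y, hyS, hy⟩ := (hS.diff hroots).nonempty
      refine ⟨Fin.cons y x, ?_, ?_⟩
      · intro i
        refine Fin.cases ?_ ?_ i
        · exact hyS
        · exact hxS
      · rw [MvPolynomial.eval_eq_eval_mv_eval']
        exact hy

lemma nat_frac_strictMono : StrictMono (fun m : ℕ => (m : ℝ) / (1 + m)) := by
  intro a b hab
  have ha : (0:ℝ) < 1 + a := by positivity
  have hb : (0:ℝ) < 1 + b := by positivity
  rw [div_lt_div_iff₀ ha hb]
  have : (a:ℝ) < b := by exact_mod_cast hab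
  nlinarith

/-- Let `H` be a Hamel basis of `ℝ` over `ℚ` with `1 ∈ H` and let `𝒜` be an
independent family of subsets of `H \ {1}` of cardinality `2^𝔠`. For `A ∈ 𝒜`, let
`f_A : ℝ → ℝ` be the `ℚ`-linear map with `f_A = 1` on `A` and `f_A = 0` on `H \ A`,
and let `g_A = f_A / (1 + |f_A|)`. Then the restrictions of the `g_A` to `[0,1]` are
algebraically independent over `ℝ`: for all distinct `A₁, …, Aₙ ∈ 𝒜` and every
nonzero real polynomial `P` in `n` variables without constant term there is
`r ∈ [0,1]` with `P(g_{A₁}(r), …, g_{Aₙ}(r)) ≠ 0`. -/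
theorem gA_algebraically_independent (H : Set ℝ) (h1H : (1:ℝ) ∈ H)
    (hLI : LinearIndependent ℚ (Subtype.val : H → ℝ))
    (hspan : Submodule.span ℚ H = ⊤)
    (𝒜 : Set (Set ℝ)) (hsub : ∀ A ∈ 𝒜, A ⊆ H \ {1})
    (hcard : (#𝒜) = 2 ^ Cardinal.continuum)
    (hind : IsIndependentFamilyOn (H \ {1}) 𝒜)
    (f : Set ℝ → ℝ → ℝ)
    (hflin : ∀ A ∈ 𝒜, IsLinearMap ℚ (f A))
    (hfone : ∀ A ∈ 𝒜, ∀ h ∈ A, f A h = 1)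
    (hfzero : ∀ A ∈ 𝒜, ∀ h ∈ H \ A, f A h = 0)
    (g : Set ℝ → ℝ → ℝ)
    (hg : ∀ A, ∀ x : ℝ, g A x = f A x / (1 + |f A x|)) :
    ∀ (n : ℕ) (A : Fin n → Set ℝ), Function.Injective A → (∀ i, A i ∈ 𝒜) →
      ∀ P : MvPolynomial (Fin n) ℝ, P ≠ 0 → MvPolynomial.constantCoeff P = 0 →
        ∃ r ∈ Set.Icc (0:ℝ) 1, MvPolynomial.eval (fun i => g (A i) r) P ≠ 0 := by
  intro n A hinj hA P hP _
  -- the infinite set of target values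
  set S : Set ℝ := Set.range (fun m : ℕ => (m : ℝ) / (1 + m)) with hSdef
  have hS : S.Infinite := Set.infinite_range_of_injective nat_frac_strictMono.injective
  obtain ⟨x0, hx0S, hx0⟩ := exists_eval_ne_zero_mem S hS n P hP
  -- choose natural numbers realizing the coordinates
  have hk : ∀ i, ∃ m : ℕ, (m : ℝ) / (1 + m) = x0 i := fun i => hx0S i
  choose k hk using hk
  -- choose elements of the cells
  have hcell : ∀ i : Fin n, ∃ y, y ∈ A i ∧ ∀ j, j ≠ i → y ∈ (H \ {1}) \ A j := by
    intro i
    obtain ⟨y, hy⟩ := hind n A hinj hA (fun j => decide (j = i))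
    rw [Set.mem_iInter] at hy
    refine ⟨y, ?_, ?_⟩
    · have := hy i; simpa using this
    · intro j hj; have := hy j; simpa [hj] using this
  choose h hh1 hh2 using hcell
  -- linear maps
  let F : Fin n → (ℝ →ₗ[ℚ] ℝ) := fun j => IsLinearMap.mk' (f (A j)) (hflin _ (hA j))
  have hF : ∀ j y, F j y = f (A j) y := fun _ _ => rfl
  have hFh : ∀ j i, F j (h i) = if i = j then 1 else 0 := by
    intro j i
    by_cases hij : i = j
    · subst hij
      simp [hF, hfone _ (hA i) _ (hh1 i)]
    · have hmem := hh2 i j (fun hji => hij hji.symm)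
      simp only [hij, if_neg hij, hF]
      exact hfzero _ (hA j) _ ⟨hmem.1.1, hmem.2⟩
  set x : ℝ := ∑ i : Fin n, ((k i : ℚ)) • h i with hxdef
  have hFx : ∀ j, f (A j) x = (k j : ℝ) := by
    intro j
    have : F j x = ∑ i : Fin n, ((k i : ℚ)) • F j (h i) := by
      rw [hxdef, map_sum]
      simp [map_smul]
    rw [← hF j x, this]
    rw [Finset.sum_eq_single j]
    · simp [hFh]
    · intro i _ hij
      simp [hFh, hij]
    · intro habs
      exact absurd (Finset.mem_univ j) habs
  -- the point
  set r : ℝ := Int.fract x with hrdef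
  have hFr : ∀ j, f (A j) r = (k j : ℝ) := by
    intro j
    have h1A : (1:ℝ) ∉ A j := fun hmem => ((hsub _ (hA j)) hmem).2 rfl
    have hf1 : f (A j) 1 = 0 := hfzero _ (hA j) 1 ⟨h1H, h1A⟩
    have hreq : r = x + ((-⌊x⌋ : ℚ)) • (1:ℝ) := by
      rw [hrdef, Int.fract]
      rw [Rat.smul_def]
      push_cast
      ring
    rw [hreq, ← hF j, map_add, map_smul, hF, hF, hf1, hFx j]
    simp
  have hgr : ∀ j, g (A j) r = x0 j := by
    intro j
    rw [hg, hFr j, ← hk j]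
    congr 1
    rw [abs_of_nonneg (by positivity)]
  refine ⟨r, ⟨Int.fract_nonneg x, (Int.fract_lt_one x).le⟩, ?_⟩
  have : (fun i => g (A i) r) = x0 := funext hgr
  rw [this]
  exact hx0
end

section
/- Let H be a Hamel basis of ℝ over ℚ with 1 ∈ H, let A be an independent family of subsets of H \ {1}, let A₁,…,Aₙ ∈ A be distinct, and define f_A and g_A = f_A/(1+|f_A|) as usual. Let h₁,…,hₙ ∈ H be such that hᵢ ∈ Aᵢ and hᵢ ∉ A_j for j ≠ i, let c₁,…,cₙ ∈ ℚ and set r′ = c₁h₁ + ⋯ + cₙhₙ. Then for every nonempty open interval (α,β) ⊂ [0,1] and every real polynomial P in n variables, there exists r ∈ (α,β) such that P(g_{A₁}(r),…,g_{Aₙ}(r)) = P(g_{A₁}(r′),…,g_{Aₙ}(r′)). -/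
open Set

/-- Let `H` be a Hamel basis of `ℝ` over `ℚ` with `1 ∈ H`, let `𝒜` be an independent
family of subsets of `H \ {1}`, let `A₁, …, Aₙ ∈ 𝒜` be distinct, and define
`f_A` (the `ℚ`-linear map which is `1` on `A` and `0` on `H \ A`) and
`g_A = f_A / (1 + |f_A|)`. Let `h₁, …, hₙ ∈ H` with `hᵢ ∈ Aᵢ` and `hᵢ ∉ A_j` for
`j ≠ i`, let `c₁, …, cₙ ∈ ℚ` and `r′ = c₁h₁ + ⋯ + cₙhₙ`. Then for every nonempty
open interval `(α,β) ⊆ [0,1]` and every real polynomial `P` in `n` variables,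
there is `r ∈ (α,β)` with `P(g_{A₁}(r), …, g_{Aₙ}(r)) = P(g_{A₁}(r′), …, g_{Aₙ}(r′))`. -/
theorem polynomial_value_attained_in_every_interval (H : Set ℝ) (h1H : (1:ℝ) ∈ H)
    (hLI : LinearIndependent ℚ (Subtype.val : H → ℝ))
    (hspan : Submodule.span ℚ H = ⊤)
    (𝒜 : Set (Set ℝ)) (hsub : ∀ A ∈ 𝒜, A ⊆ H \ {1})
    (hind : IsIndependentFamilyOn (H \ {1}) 𝒜)
    (f : Set ℝ → ℝ → ℝ)
    (hflin : ∀ A ∈ 𝒜, IsLinearMap ℚ (f A))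
    (hfone : ∀ A ∈ 𝒜, ∀ h ∈ A, f A h = 1)
    (hfzero : ∀ A ∈ 𝒜, ∀ h ∈ H \ A, f A h = 0)
    (g : Set ℝ → ℝ → ℝ)
    (hg : ∀ A, ∀ x : ℝ, g A x = f A x / (1 + |f A x|))
    (n : ℕ) (A : Fin n → Set ℝ) (hAinj : Function.Injective A) (hAmem : ∀ i, A i ∈ 𝒜)
    (h : Fin n → ℝ) (hhH : ∀ i, h i ∈ H)
    (hhA : ∀ i, h i ∈ A i) (hhA' : ∀ i j, j ≠ i → h i ∉ A j)
    (c : Fin n → ℚ) (r' : ℝ) (hr' : r' = ∑ i, (c i : ℝ) * h i)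
    (α β : ℝ) (hαβ : α < β) (hIcc : Set.Ioo α β ⊆ Set.Icc (0:ℝ) 1)
    (P : MvPolynomial (Fin n) ℝ) :
    ∃ r ∈ Set.Ioo α β,
      MvPolynomial.eval (fun i => g (A i) r) P
        = MvPolynomial.eval (fun i => g (A i) r') P := by
  obtain ⟨q, hq1, hq2⟩ := exists_rat_btwn (show α - r' < β - r' by linarith)
  refine ⟨r' + q, ⟨by linarith, by linarith⟩, ?_⟩
  have key : ∀ i, f (A i) (r' + q) = f (A i) r' := by
    intro i
    have hlin := hflin (A i) (hAmem i)
    have h1 : f (A i) (1 : ℝ) = 0 := by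
      apply hfzero (A i) (hAmem i)
      refine ⟨h1H, fun h1A => ?_⟩
      exact (hsub (A i) (hAmem i) h1A).2 rfl
    have : f (A i) ((q : ℝ)) = 0 := by
      have : f (A i) ((q : ℝ) • (1 : ℝ)) = (q : ℝ) • f (A i) 1 := by
        have := hlin.map_smul q (1 : ℝ)
        simpa [Rat.smul_def] using this
      simpa [h1, Rat.smul_def] using this
    rw [hlin.map_add, this, add_zero]
  have : (fun i => g (A i) (r' + ↑q)) = fun i => g (A i) r' := by
    funext i
    rw [hg, hg, key i]
  rw [this]
end

section
/- Let T ⊂ [0,1] be the fat Cantor set with complement ⋃_s (a_s,b_s) and let g : [0,1] → ℝ be the associated continuous function (g(x) = min{x−a_s, b_s−x}/s on (a_s,b_s), g = 0 on T). Let H ⊂ [1,2] be a set of reals that is linearly independent over ℚ and has cardinality 𝔠. Then the family of continuous functions { x ↦ g(x)^h : h ∈ H } is algebraically independent over ℝ: for every n ∈ ℕ, all distinct h₁,…,hₙ ∈ H, and every nonzero real polynomial P in n variables without constant term, the continuous function x ↦ P(g(x)^{h₁},…,g(x)^{hₙ}) is not identically zero on [0,1]. Consequently, these functions generate a free algebra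 of continuous functions on [0,1] with 𝔠 generators. -/
open MeasureTheory Set Cardinal

/-- Let `T ⊆ [0,1]` be a fat Cantor set (closed, nowhere dense, of positive Lebesgue
measure) whose complement `[0,1] \ T` is the disjoint union of the open intervals
`(a_s, b_s)`, and let `g` be the associated continuous function
(`g x = min (x - a_s) (b_s - x) / s` on `(a_s, b_s)`, with positive denominators
`s + 1`, `s ∈ ℕ`, and `g = 0` on `T`). Let `H ⊆ [1,2]` be linearly independent
over `ℚ` with cardinality `𝔠`. Then the functions `x ↦ g(x)^h`, `h ∈ H`, are
continuous on `[0,1]` and algebraically independent over `ℝ`: for all distinct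
`h₁, …, hₙ ∈ H` and every nonzero real polynomial `P` in `n` variables without
constant term, the function `x ↦ P(g(x)^{h₁}, …, g(x)^{hₙ})` is not identically
zero on `[0,1]`. -/
theorem powers_of_tent_function_algebraically_independent
    (T : Set ℝ) (hTsub : T ⊆ Set.Icc 0 1)
    (hTclosed : IsClosed T) (hTnd : interior T = ∅)
    (hTpos : 0 < volume T)
    (a b : ℕ → ℝ) (hab : ∀ s, a s < b s)
    (hdisj : Pairwise fun s t => Disjoint (Set.Ioo (a s) (b s)) (Set.Ioo (a t) (b t)))
    (hcompl : Set.Icc (0:ℝ) 1 \ T = ⋃ s, Set.Ioo (a s) (b s))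
    (g : ℝ → ℝ)
    (hg1 : ∀ s : ℕ, ∀ x ∈ Set.Ioo (a s) (b s),
      g x = min (x - a s) (b s - x) / ((s : ℝ) + 1))
    (hg0 : ∀ x : ℝ, (∀ s : ℕ, x ∉ Set.Ioo (a s) (b s)) → g x = 0)
    (H : Set ℝ) (hH : H ⊆ Set.Icc 1 2)
    (hHLI : LinearIndependent ℚ (Subtype.val : H → ℝ))
    (hHcard : (#H) = Cardinal.continuum) :
    (∀ h ∈ H, ContinuousOn (fun x : ℝ => g x ^ h) (Set.Icc (0:ℝ) 1)) ∧
      ∀ (n : ℕ) (h : Fin n → ℝ), Function.Injective h → (∀ i, h i ∈ H) →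
        ∀ P : MvPolynomial (Fin n) ℝ, P ≠ 0 → MvPolynomial.constantCoeff P = 0 →
          ∃ x ∈ Set.Icc (0:ℝ) 1,
            MvPolynomial.eval (fun i => g x ^ h i) P ≠ 0 := by
  classical
  -- g is nonnegative
  have hgnn : ∀ x, 0 ≤ g x := by
    intro x
    by_cases hx : ∃ s, x ∈ Set.Ioo (a s) (b s)
    · obtain ⟨s, hxs⟩ := hx
      rw [hg1 s x hxs]
      have h1 : (0:ℝ) ≤ min (x - a s) (b s - x) :=
        le_min (by linarith [hxs.1]) (by linarith [hxs.2])
      have h2 : (0:ℝ) < (s:ℝ) + 1 := by positivity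
      positivity
    · push_neg at hx
      rw [hg0 x hx]
  -- if x is in interval s and y is not, then g x ≤ |x - y|
  have L1 : ∀ (s : ℕ) (x y : ℝ), x ∈ Set.Ioo (a s) (b s) → y ∉ Set.Ioo (a s) (b s) →
      g x ≤ |x - y| := by
    intro s x y hx hy
    have hs1 : (1:ℝ) ≤ (s:ℝ) + 1 := by
      have : (0:ℝ) ≤ (s:ℝ) := Nat.cast_nonneg s
      linarith
    have hmin0 : (0:ℝ) ≤ min (x - a s) (b s - x) :=
      le_min (by linarith [hx.1]) (by linarith [hx.2])
    have hmin : min (x - a s) (b s - x) ≤ |x - y| := by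
      rw [Set.mem_Ioo, not_and_or, not_lt, not_lt] at hy
      rcases hy with hy | hy
      · calc min (x - a s) (b s - x) ≤ x - a s := min_le_left _ _
          _ ≤ x - y := by linarith
          _ ≤ |x - y| := le_abs_self _
      · calc min (x - a s) (b s - x) ≤ b s - x := min_le_right _ _
          _ ≤ y - x := by linarith
          _ ≤ |x - y| := by rw [abs_sub_comm]; exact le_abs_self _
    rw [hg1 s x hx]
    calc min (x - a s) (b s - x) / ((s:ℝ) + 1) ≤ min (x - a s) (b s - x) :=
          div_le_self hmin0 hs1
      _ ≤ |x - y| := hmin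
  -- g is 1-Lipschitz
  have lip : ∀ x y : ℝ, |g x - g y| ≤ |x - y| := by
    intro x y
    by_cases hx : ∃ s, x ∈ Set.Ioo (a s) (b s)
    · obtain ⟨s, hxs⟩ := hx
      by_cases hy : y ∈ Set.Ioo (a s) (b s)
      · -- same interval
        have hs1 : (1:ℝ) ≤ (s:ℝ) + 1 := by
          have : (0:ℝ) ≤ (s:ℝ) := Nat.cast_nonneg s
          linarith
        have hs0 : (0:ℝ) < (s:ℝ) + 1 := by positivity
        rw [hg1 s x hxs, hg1 s y hy, div_sub_div_same, abs_div, abs_of_pos hs0]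
        have hmm := abs_min_sub_min_le_max (x - a s) (b s - x) (y - a s) (b s - y)
        have e1 : x - a s - (y - a s) = x - y := by ring
        have e2 : b s - x - (b s - y) = y - x := by ring
        rw [e1, e2, abs_sub_comm y x, max_self] at hmm
        calc |min (x - a s) (b s - x) - min (y - a s) (b s - y)| / ((s:ℝ) + 1)
            ≤ |x - y| / ((s:ℝ) + 1) := by
              gcongr
          _ ≤ |x - y| := div_le_self (abs_nonneg _) hs1
      · have h1 : g x ≤ |x - y| := L1 s x y hxs hy
        have h2 : g y ≤ |x - y| := by
          by_cases hy2 : ∃ t, y ∈ Set.Ioo (a t) (b t)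
          · obtain ⟨t, hyt⟩ := hy2
            have hst : s ≠ t := by rintro rfl; exact hy hyt
            have hxt : x ∉ Set.Ioo (a t) (b t) :=
              Set.disjoint_left.mp (hdisj hst) hxs
            have := L1 t y x hyt hxt
            rwa [abs_sub_comm] at this
          · push_neg at hy2
            rw [hg0 y hy2]
            exact abs_nonneg _
        rw [abs_sub_le_iff]
        constructor <;> [skip; skip] <;>
          · have := hgnn x; have := hgnn y; linarith
    · push_neg at hx
      have hgx : g x = 0 := hg0 x hx
      by_cases hy : ∃ t, y ∈ Set.Ioo (a t) (b t)
      · obtain ⟨t, hyt⟩ := hy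
        have := L1 t y x hyt (hx t)
        rw [hgx, zero_sub, abs_neg, abs_of_nonneg (hgnn y), abs_sub_comm]
        exact this
      · push_neg at hy
        rw [hgx, hg0 y hy]
        simp [abs_nonneg]
  have hgcont : Continuous g := by
    have : LipschitzWith 1 g := by
      apply LipschitzWith.of_dist_le_mul
      intro x y
      simpa [Real.dist_eq, one_mul] using lip x y
    exact this.continuous
  constructor
  · intro h hh
    have hh1 : (1:ℝ) ≤ h := (hH hh).1
    exact (hgcont.rpow_const (fun x => Or.inr (by linarith))).continuousOn
  · intro n h hinj hmem P hP hPc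
    -- linear independence of h over ℚ
    have hLI : LinearIndependent ℚ h := by
      have heq : h = (Subtype.val : H → ℝ) ∘ (fun i => (⟨h i, hmem i⟩ : H)) := rfl
      rw [heq]
      exact hHLI.comp _ (fun i j hij => hinj (congrArg Subtype.val hij))
    set E : (Fin n →₀ ℕ) → ℝ := fun d => ∑ i, (d i : ℝ) * h i with hE
    have hEinj : ∀ d d' : Fin n →₀ ℕ, E d = E d' → d = d' := by
      intro d d' hdd'
      have key : ∀ i, ((d i : ℚ) - (d' i : ℚ)) = 0 := by
        apply Fintype.linearIndependent_iff.mp hLI (fun i => (d i : ℚ) - (d' i : ℚ))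
        have expand : ∑ i, (((d i : ℚ) - (d' i : ℚ)) • h i)
            = (∑ i, (d i : ℝ) * h i) - ∑ i, (d' i : ℝ) * h i := by
          rw [← Finset.sum_sub_distrib]
          apply Finset.sum_congr rfl
          intro i _
          rw [Rat.smul_def]
          push_cast
          ring
        rw [expand]
        have : E d = E d' := hdd'
        rw [hE] at this
        simp only at this
        linarith [this]
      ext i
      have := key i
      have : (d i : ℚ) = (d' i : ℚ) := by linarith [this]
      exact_mod_cast this
    by_contra hcon
    push_neg at hcon
    -- find an interval
    have hne : (Set.Icc (0:ℝ) 1 \ T).Nonempty := by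
      by_contra hempty
      rw [Set.not_nonempty_iff_eq_empty, Set.diff_eq_empty] at hempty
      have hsub : Set.Ioo (0:ℝ) 1 ⊆ interior T := by
        have : Set.Ioo (0:ℝ) 1 ⊆ T := fun z hz => hempty (Set.Ioo_subset_Icc_self hz)
        exact (IsOpen.subset_interior_iff isOpen_Ioo).mpr this
      rw [hTnd] at hsub
      exact hsub (⟨by norm_num, by norm_num⟩ : (1/2:ℝ) ∈ Set.Ioo 0 1)
    obtain ⟨x0, hx0⟩ := hne
    rw [hcompl] at hx0
    obtain ⟨s, hxs0⟩ := Set.mem_iUnion.mp hx0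
    have hIoosub : Set.Ioo (a s) (b s) ⊆ Set.Icc (0:ℝ) 1 := by
      intro z hz
      have : z ∈ Set.Icc (0:ℝ) 1 \ T := by
        rw [hcompl]; exact Set.mem_iUnion.mpr ⟨s, hz⟩
      exact this.1
    have hsp : (0:ℝ) < (s:ℝ) + 1 := by positivity
    set δ : ℝ := (b s - a s) / (2 * ((s:ℝ) + 1)) with hδ
    have hδpos : 0 < δ := by
      have := hab s
      apply div_pos (by linarith) (by positivity)
    -- the evaluation vanishes for all small positive t
    have hFzero : ∀ t ∈ Set.Ioo (0:ℝ) δ, MvPolynomial.eval (fun i => t ^ h i) P = 0 := by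
      intro t ht
      set x := a s + ((s:ℝ) + 1) * t with hx
      have hkey : ((s:ℝ)+1) * t < (b s - a s)/2 := by
        have h2 := ht.2
        rw [hδ] at h2
        have : ((s:ℝ)+1) * t < ((s:ℝ)+1) * ((b s - a s) / (2 * ((s:ℝ) + 1))) :=
          (mul_lt_mul_iff_right₀ hsp).mpr h2
        calc ((s:ℝ)+1) * t < ((s:ℝ)+1) * ((b s - a s) / (2 * ((s:ℝ) + 1))) := this
          _ = (b s - a s)/2 := by field_simp
      have hxmem : x ∈ Set.Ioo (a s) (b s) := by
        constructor
        · have : 0 < ((s:ℝ)+1) * t := mul_pos hsp ht.1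
          rw [hx]; linarith
        · rw [hx]; nlinarith [hab s]
      have hgx : g x = t := by
        rw [hg1 s x hxmem]
        have h1 : x - a s = ((s:ℝ)+1) * t := by rw [hx]; ring
        have h2 : x - a s ≤ b s - x := by rw [hx]; nlinarith
        rw [min_eq_left h2, h1, mul_comm, mul_div_assoc, div_self hsp.ne', mul_one]
      have := hcon x (hIoosub hxmem)
      rwa [hgx] at this
    -- rewrite eval as a generalized power sum
    have hevalF : ∀ t : ℝ, 0 < t →
        MvPolynomial.eval (fun i => t ^ h i) P
          = ∑ d ∈ P.support, MvPolynomial.coeff d P * t ^ E d := by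
      intro t ht
      rw [MvPolynomial.eval_eq']
      apply Finset.sum_congr rfl
      intro d _
      congr 1
      rw [hE]
      simp only
      rw [Real.rpow_sum_of_pos ht]
      apply Finset.prod_congr rfl
      intro i _
      rw [← Real.rpow_natCast (t ^ h i) (d i), ← Real.rpow_mul ht.le, mul_comm]
    -- minimal exponent
    have hsupp : P.support.Nonempty := MvPolynomial.support_nonempty.mpr hP
    obtain ⟨d0, hd0mem, hd0min⟩ := P.support.exists_min_image E hsupp
    set G : ℝ → ℝ := fun t => ∑ d ∈ P.support, MvPolynomial.coeff d P * t ^ (E d - E d0)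
      with hG
    have hGzero : ∀ t ∈ Set.Ioo (0:ℝ) δ, G t = 0 := by
      intro t ht
      have ht0 : 0 < t := ht.1
      have heq : G t = (∑ d ∈ P.support, MvPolynomial.coeff d P * t ^ E d) * t ^ (-E d0) := by
        rw [hG, Finset.sum_mul]
        apply Finset.sum_congr rfl
        intro d _
        rw [mul_assoc, ← Real.rpow_add ht0, ← sub_eq_add_neg]
      rw [heq, ← hevalF t ht0, hFzero t ht, zero_mul]
    have hGtend : Filter.Tendsto G (nhdsWithin 0 (Set.Ioi 0))
        (nhds (MvPolynomial.coeff d0 P)) := by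
      have htend : Filter.Tendsto G (nhdsWithin 0 (Set.Ioi 0))
          (nhds (∑ d ∈ P.support, if d = d0 then MvPolynomial.coeff d0 P else 0)) := by
        rw [hG]
        apply tendsto_finset_sum
        intro d hd
        by_cases hdd : d = d0
        · subst hdd
          simp only [if_pos]
          have : (fun t : ℝ => MvPolynomial.coeff d P * t ^ (E d - E d)) =
              fun _ : ℝ => MvPolynomial.coeff d P := by
            funext t; rw [sub_self, Real.rpow_zero, mul_one]
          rw [this]
          exact tendsto_const_nhds
        · simp only [if_neg hdd]
          have hc : 0 < E d - E d0 := by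
            have hle : E d0 ≤ E d := hd0min d hd
            have hne : E d ≠ E d0 := fun hEq => hdd (hEinj d d0 hEq)
            cases lt_or_eq_of_le hle with
            | inl h' => linarith
            | inr h' => exact absurd h'.symm hne
          have htp : Filter.Tendsto (fun t : ℝ => t ^ (E d - E d0)) (nhdsWithin 0 (Set.Ioi 0))
              (nhds 0) := by
            have hca := (Real.continuousAt_rpow_const 0 (E d - E d0) (Or.inr hc.le)).tendsto
            rw [Real.zero_rpow hc.ne'] at hca
            exact hca.mono_left nhdsWithin_le_nhds
          have := htp.const_mul (MvPolynomial.coeff d P)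
          simpa using this
      have hsum : (∑ d ∈ P.support, if d = d0 then MvPolynomial.coeff d0 P else 0)
          = MvPolynomial.coeff d0 P := by
        rw [Finset.sum_ite_eq' P.support d0 (fun _ => MvPolynomial.coeff d0 P)]
        simp [hd0mem]
      rwa [hsum] at htend
    have hGtend0 : Filter.Tendsto G (nhdsWithin 0 (Set.Ioi 0)) (nhds 0) := by
      apply Filter.Tendsto.congr' _ tendsto_const_nhds
      filter_upwards [Ioo_mem_nhdsGT_of_mem (Set.left_mem_Ico.mpr hδpos)] with t ht
      exact (hGzero t ht).symm
    have : MvPolynomial.coeff d0 P = 0 := tendsto_nhds_unique hGtend hGtend0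
    exact (MvPolynomial.mem_support_iff.mp hd0mem) this
end
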